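/- arXiv:1507.03843 — 9 statements merged into one kernel-verified Lean document; each statement's English description precedes it below -/
import Mathlib

section
/- Let a stationary memoryless channel with input alphabet 𝒳, output alphabet 𝒴, Markov kernel P_{Y|X}, cost function b and zero-cost symbol 0 be given. For every N ∈ ℕ, every ε ∈ (0,1), every τ ∈ (0,ε), every input symbol x₀ ∈ 𝒳 with b(x₀) > 0, and every integer M ≥ 1 satisfying (M−1)·β_{1−ε+τ}(P_{Y|X=x₀}^{⊗N}, P_{Y|X=0}^{⊗N}) ≤ τ, there exists an (E, M, ε)-code with E = N·b(x₀). Here P^{⊗N}_{Y|X=x} denotes the N-fold product measure of P_{Y|X=x} on 𝒴^N. -/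
open MeasureTheory ProbabilityTheory
open scoped ENNReal NNReal

/-- `μ` is the countable product of the probability measures `ν i`: it is a probability
measure giving every finite-dimensional cylinder set the product of the coordinate
probabilities. -/
def IsPiNat {Y : Type*} [MeasurableSpace Y] (ν : ℕ → Measure Y) (μ : Measure (ℕ → Y)) : Prop :=
  IsProbabilityMeasure μ ∧
    ∀ (s : Finset ℕ) (A : ℕ → Set Y), (∀ i, MeasurableSet (A i)) →
      μ {y | ∀ i ∈ s, y i ∈ A i} = ∏ i ∈ s, ν i (A i)

/-- An `(E, M, ε)` code for the stationary memoryless channel with kernel `κ` and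
cost function `b`: `M` codewords (infinite sequences of input symbols), each of total
cost at most `E`, and a measurable decoder whose error probability under the output
distribution induced by each codeword is at most `ε`. -/
structure Code {X Y : Type*} [MeasurableSpace X] [MeasurableSpace Y]
    (κ : Kernel X Y) (b : X → ℝ) (E : ℝ) (M : ℕ) (ε : ℝ) where
  enc : Fin M → ℕ → X
  dec : (ℕ → Y) → Fin M
  meas_dec : Measurable dec
  cost : ∀ j, (∑' i, ENNReal.ofReal (b (enc j i))) ≤ ENNReal.ofReal E
  err : ∀ (j : Fin M) (μ : Measure (ℕ → Y)),
      IsPiNat (fun i => κ (enc j i)) μ → μ {y | dec y ≠ j} ≤ ENNReal.ofReal ε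

/-- `β_α(P, Q)`: the smallest `Q`-average of a `[0,1]`-valued measurable test whose
`P`-average is at least `α`. -/
noncomputable def betaFn {Ω : Type*} [MeasurableSpace Ω] (α : ℝ) (P Q : Measure Ω) : ℝ :=
  ⨅ f : {f : Ω → ℝ // Measurable f ∧ (∀ ω, f ω ∈ Set.Icc (0 : ℝ) 1) ∧ α ≤ ∫ ω, f ω ∂P},
    ∫ ω, f.1 ω ∂Q

section Aux

variable {Ω : Type*} [MeasurableSpace Ω]

private lemma aux_integrable {μ : Measure Ω} [IsFiniteMeasure μ] {f : Ω → ℝ}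
    (hf : Measurable f) (h0 : ∀ ω, 0 ≤ f ω) (h1 : ∀ ω, f ω ≤ 1) : Integrable f μ :=
  (integrable_const (1 : ℝ)).mono' hf.aestronglyMeasurable
    (ae_of_all _ fun ω => by rw [Real.norm_eq_abs, abs_of_nonneg (h0 ω)]; exact h1 ω)

private lemma aux_lintegral_ne_top {μ : Measure Ω} [IsFiniteMeasure μ] {f : Ω → ℝ}
    (h1 : ∀ ω, f ω ≤ 1) : ∫⁻ ω, ENNReal.ofReal (f ω) ∂μ ≠ ⊤ := by
  refine ne_of_lt (lt_of_le_of_lt (le_trans (lintegral_mono fun ω => ?_)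
    (le_of_eq (lintegral_one (μ := μ)))) (measure_lt_top _ _))
  exact ENNReal.ofReal_le_one.2 (h1 ω)

/-- If `μ ≤ c • ν` (on measurable sets), then `∫ f dμ ≤ c * ∫ f dν` for `[0,1]`-valued `f`. -/
private lemma aux_int_le {μ ν : Measure Ω} [IsFiniteMeasure ν] {c : ℝ} (hc : 0 ≤ c)
    (hle : ∀ s : Set Ω, MeasurableSet s → μ s ≤ ENNReal.ofReal c * ν s)
    {f : Ω → ℝ} (hf : Measurable f) (h0 : ∀ ω, 0 ≤ f ω) (h1 : ∀ ω, f ω ≤ 1) :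
    ∫ ω, f ω ∂μ ≤ c * ∫ ω, f ω ∂ν := by
  have hL : ∫⁻ ω, ENNReal.ofReal (f ω) ∂μ ≤ ENNReal.ofReal c * ∫⁻ ω, ENNReal.ofReal (f ω) ∂ν := by
    calc ∫⁻ ω, ENNReal.ofReal (f ω) ∂μ
        ≤ ∫⁻ ω, ENNReal.ofReal (f ω) ∂(ENNReal.ofReal c • ν) :=
          lintegral_mono' (Measure.le_iff.2 fun s hs => by
            simpa [Measure.smul_apply] using hle s hs) le_rfl
      _ = ENNReal.ofReal c * ∫⁻ ω, ENNReal.ofReal (f ω) ∂ν := lintegral_smul_measure _ _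
  rw [integral_eq_lintegral_of_nonneg_ae (ae_of_all _ h0) hf.aestronglyMeasurable,
      integral_eq_lintegral_of_nonneg_ae (ae_of_all _ h0) hf.aestronglyMeasurable]
  calc (∫⁻ ω, ENNReal.ofReal (f ω) ∂μ).toReal
      ≤ (ENNReal.ofReal c * ∫⁻ ω, ENNReal.ofReal (f ω) ∂ν).toReal :=
        ENNReal.toReal_mono (ENNReal.mul_ne_top ENNReal.ofReal_ne_top (aux_lintegral_ne_top h1)) hL
    _ = c * (∫⁻ ω, ENNReal.ofReal (f ω) ∂ν).toReal := by
        rw [ENNReal.toReal_mul, ENNReal.toReal_ofReal hc]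

/-- If `c • ν ≤ μ` (on measurable sets), then `c * ∫ f dν ≤ ∫ f dμ` for `[0,1]`-valued `f`. -/
private lemma aux_smul_int_le {μ ν : Measure Ω} [IsFiniteMeasure μ] {c : ℝ} (hc : 0 ≤ c)
    (hle : ∀ s : Set Ω, MeasurableSet s → ENNReal.ofReal c * ν s ≤ μ s)
    {f : Ω → ℝ} (hf : Measurable f) (h0 : ∀ ω, 0 ≤ f ω) (h1 : ∀ ω, f ω ≤ 1) :
    c * ∫ ω, f ω ∂ν ≤ ∫ ω, f ω ∂μ := by
  have hL : ENNReal.ofReal c * ∫⁻ ω, ENNReal.ofReal (f ω) ∂ν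
      ≤ ∫⁻ ω, ENNReal.ofReal (f ω) ∂μ := by
    calc ENNReal.ofReal c * ∫⁻ ω, ENNReal.ofReal (f ω) ∂ν
        = ∫⁻ ω, ENNReal.ofReal (f ω) ∂(ENNReal.ofReal c • ν) :=
          by rw [lintegral_smul_measure, smul_eq_mul]
      _ ≤ ∫⁻ ω, ENNReal.ofReal (f ω) ∂μ :=
          lintegral_mono' (Measure.le_iff.2 fun s hs => by
            simpa [Measure.smul_apply] using hle s hs) le_rfl
  rw [integral_eq_lintegral_of_nonneg_ae (ae_of_all _ h0) hf.aestronglyMeasurable,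
      integral_eq_lintegral_of_nonneg_ae (ae_of_all _ h0) hf.aestronglyMeasurable]
  calc c * (∫⁻ ω, ENNReal.ofReal (f ω) ∂ν).toReal
      = (ENNReal.ofReal c * ∫⁻ ω, ENNReal.ofReal (f ω) ∂ν).toReal := by
        rw [ENNReal.toReal_mul, ENNReal.toReal_ofReal hc]
    _ ≤ (∫⁻ ω, ENNReal.ofReal (f ω) ∂μ).toReal :=
        ENNReal.toReal_mono (aux_lintegral_ne_top h1) hL

/-- Via the Hahn decomposition of `P - c•Q`, there is a measurable set beating every
`[0,1]`-valued test in the objective `∫f dP - c ∫f dQ`; hence its value is at least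
`αv - c * betaFn αv P Q`. -/
private lemma aux_exists_set (P Q : Measure Ω) [IsProbabilityMeasure P] [IsProbabilityMeasure Q]
    {c αv : ℝ} (hc : 0 ≤ c) (hαv : αv ≤ 1) :
    ∃ A : Set Ω, MeasurableSet A ∧
      αv - c * betaFn αv P Q ≤ (P A).toReal - c * (Q A).toReal := by
  haveI : IsFiniteMeasure (ENNReal.ofReal c • Q) := by
    constructor
    rw [Measure.smul_apply, smul_eq_mul]
    exact ENNReal.mul_lt_top ENNReal.ofReal_lt_top (measure_lt_top _ _)
  obtain ⟨A, hA, hA1, hA2⟩ := hahn_decomposition (μ := P) (ν := ENNReal.ofReal c • Q)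
  refine ⟨A, hA, ?_⟩
  set S : ℝ := (P A).toReal - c * (Q A).toReal with hS
  have key : ∀ f : {f : Ω → ℝ // Measurable f ∧ (∀ ω, f ω ∈ Set.Icc (0 : ℝ) 1) ∧
      αv ≤ ∫ ω, f ω ∂P}, αv - c * ∫ ω, f.1 ω ∂Q ≤ S := by
    rintro ⟨f, hf, h01, hfP⟩
    have h0 : ∀ ω, 0 ≤ f ω := fun ω => (h01 ω).1
    have h1 : ∀ ω, f ω ≤ 1 := fun ω => (h01 ω).2
    have h0' : ∀ ω, 0 ≤ 1 - f ω := fun ω => by linarith [h1 ω]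
    have h1' : ∀ ω, 1 - f ω ≤ 1 := fun ω => by linarith [h0 ω]
    have hf' : Measurable (fun ω => 1 - f ω) := measurable_const.sub hf
    -- On Aᶜ : P ≤ c • Q
    have hAc : ∫ ω in Aᶜ, f ω ∂P ≤ c * ∫ ω in Aᶜ, f ω ∂Q := by
      refine aux_int_le hc (fun s hs => ?_) hf h0 h1
      rw [Measure.restrict_apply hs, Measure.restrict_apply hs]
      have := hA2 (s ∩ Aᶜ) (hs.inter hA.compl) Set.inter_subset_right
      simpa [Measure.smul_apply, smul_eq_mul] using this
    -- On A : c • Q ≤ P, applied to 1 - f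
    have hAin : c * ∫ ω in A, (1 - f ω) ∂Q ≤ ∫ ω in A, (1 - f ω) ∂P := by
      refine aux_smul_int_le hc (fun s hs => ?_) hf' h0' h1'
      rw [Measure.restrict_apply hs, Measure.restrict_apply hs]
      have := hA1 (s ∩ A) (hs.inter hA) Set.inter_subset_right
      simpa [Measure.smul_apply, smul_eq_mul] using this
    have hintP : Integrable f P := aux_integrable hf h0 h1
    have hintQ : Integrable f Q := aux_integrable hf h0 h1
    have hsplitP : ∫ ω in A, f ω ∂P + ∫ ω in Aᶜ, f ω ∂P = ∫ ω, f ω ∂P :=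
      integral_add_compl hA hintP
    have hsplitQ : ∫ ω in A, f ω ∂Q + ∫ ω in Aᶜ, f ω ∂Q = ∫ ω, f ω ∂Q :=
      integral_add_compl hA hintQ
    have hconstP : ∫ ω in A, (1 - f ω) ∂P = (P A).toReal - ∫ ω in A, f ω ∂P := by
      rw [integral_sub (integrable_const _) hintP.restrict, integral_const,
        measureReal_restrict_apply_univ, measureReal_def, smul_eq_mul, mul_one]
    have hconstQ : ∫ ω in A, (1 - f ω) ∂Q = (Q A).toReal - ∫ ω in A, f ω ∂Q := by
      rw [integral_sub (integrable_const _) hintQ.restrict, integral_const,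
        measureReal_restrict_apply_univ, measureReal_def, smul_eq_mul, mul_one]
    rw [hconstP, hconstQ] at hAin
    have hQA : 0 ≤ ∫ ω in A, f ω ∂Q := integral_nonneg h0
    nlinarith [hfP, hAc, hAin, hsplitP, hsplitQ]
  -- conclude via the infimum
  have hne : Nonempty {f : Ω → ℝ // Measurable f ∧ (∀ ω, f ω ∈ Set.Icc (0 : ℝ) 1) ∧
      αv ≤ ∫ ω, f ω ∂P} := by
    refine ⟨⟨fun _ => 1, measurable_const, fun ω => ⟨zero_le_one, le_refl 1⟩, ?_⟩⟩
    rw [integral_const, measureReal_def, measure_univ]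
    simpa using hαv
  rcases eq_or_lt_of_le hc with hc0 | hcpos
  · obtain ⟨f⟩ := hne
    have hk := key f
    rw [← hc0] at hk ⊢
    simpa using hk
  · have hβ : (αv - S) / c ≤ betaFn αv P Q := by
      refine le_ciInf fun f => ?_
      rw [div_le_iff₀ hcpos]
      have := key f
      nlinarith [this]
    have := mul_le_mul_of_nonneg_left hβ hc
    rw [mul_div_cancel₀ _ (ne_of_gt hcpos)] at this
    linarith

end Aux

/-- The push-forward of an infinite product measure under the block map
`y ↦ (y (k*N), …, y (k*N + N - 1))` is the corresponding finite product measure. -/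
private lemma aux_map_pi {Y : Type*} [MeasurableSpace Y] (m : ℕ → Measure Y)
    [∀ i, IsProbabilityMeasure (m i)] {μ : Measure (ℕ → Y)} (h : IsPiNat m μ)
    (k N : ℕ) :
    μ.map (fun y (t : Fin N) => y (k * N + t)) = Measure.pi fun t : Fin N => m (k * N + t) := by
  classical
  have hmeas : Measurable fun (y : ℕ → Y) (t : Fin N) => y (k * N + t) :=
    measurable_pi_lambda _ fun t => measurable_pi_apply _
  symm
  apply Measure.pi_eq
  intro s hs
  rw [Measure.map_apply hmeas (MeasurableSet.univ_pi hs)]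
  set A : ℕ → Set Y := fun i =>
    if hi : k * N ≤ i ∧ i < k * N + N then s ⟨i - k * N, by omega⟩ else Set.univ with hAdef
  have hAm : ∀ i, MeasurableSet (A i) := by
    intro i
    by_cases hi : k * N ≤ i ∧ i < k * N + N
    · simpa [hAdef, hi] using hs _
    · simp [hAdef, hi]
  have hAt : ∀ t : Fin N, A (k * N + t) = s t := by
    intro t
    have hi : k * N ≤ k * N + (t : ℕ) ∧ k * N + (t : ℕ) < k * N + N :=
      ⟨Nat.le_add_right _ _, by omega⟩
    have h1 : A (k * N + (t : ℕ)) = s ⟨k * N + (t : ℕ) - k * N, by omega⟩ := dif_pos hi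
    have h2 : (⟨k * N + (t : ℕ) - k * N, by omega⟩ : Fin N) = t := by
      refine Fin.ext ?_
      show k * N + (t : ℕ) - k * N = (t : ℕ)
      omega
    rw [h1, h2]
  have hset : (fun y (t : Fin N) => y (k * N + t)) ⁻¹' Set.univ.pi s
      = {y : ℕ → Y | ∀ i ∈ Finset.Ico (k * N) (k * N + N), y i ∈ A i} := by
    ext y
    simp only [Set.mem_preimage, Set.mem_pi, Set.mem_univ, forall_true_left,
      Set.mem_setOf_eq, Finset.mem_Ico]
    constructor
    · intro hy i hi
      have hAi : A i = s ⟨i - k * N, by omega⟩ := dif_pos hi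
      rw [hAi]
      have := hy ⟨i - k * N, by omega⟩
      simpa [Nat.add_sub_cancel' hi.1] using this
    · intro hy t
      have hi : k * N ≤ k * N + (t : ℕ) ∧ k * N + (t : ℕ) < k * N + N :=
        ⟨Nat.le_add_right _ _, by omega⟩
      have := hy (k * N + (t : ℕ)) hi
      rwa [hAt t] at this
  rw [hset, h.2 _ A hAm]
  rw [Finset.prod_Ico_eq_prod_range]
  have hNN : k * N + N - k * N = N := by omega
  rw [hNN]
  rw [← Fin.prod_univ_eq_prod_range (fun i => m (k * N + i) (A (k * N + i))) N]
  refine Finset.prod_congr rfl fun t _ => by rw [hAt t]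

theorem achievability_kappa_beta
    {X Y : Type*} [MeasurableSpace X] [MeasurableSpace Y]
    (κ : Kernel X Y) [IsMarkovKernel κ] (b : X → ℝ) (hb : ∀ x, 0 ≤ b x)
    (x_zero : X) (hzero : b x_zero = 0)
    (N : ℕ) (ε τ : ℝ) (hε : ε ∈ Set.Ioo (0 : ℝ) 1) (hτ : τ ∈ Set.Ioo (0 : ℝ) ε)
    (x₀ : X) (hx₀ : 0 < b x₀)
    (M : ℕ) (hM : 1 ≤ M)
    (hbeta : ((M : ℝ) - 1) *
        betaFn (1 - ε + τ) (Measure.pi fun _ : Fin N => κ x₀)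
          (Measure.pi fun _ : Fin N => κ x_zero) ≤ τ) :
    Nonempty (Code κ b ((N : ℝ) * b x₀) M ε) := by
  classical
  obtain ⟨hε0, hε1⟩ := hε
  obtain ⟨hτ0, hτε⟩ := hτ
  set P : Measure (Fin N → Y) := Measure.pi fun _ : Fin N => κ x₀ with hPdef
  set Q : Measure (Fin N → Y) := Measure.pi fun _ : Fin N => κ x_zero with hQdef
  set c : ℝ := (M : ℝ) - 1 with hcdef
  have hc : 0 ≤ c := by
    have : (1 : ℝ) ≤ (M : ℝ) := by exact_mod_cast hM
    linarith
  obtain ⟨A, hA, hPA⟩ := aux_exists_set P Q hc (αv := 1 - ε + τ) (by linarith)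
  have hkey : 1 - ε ≤ (P A).toReal - c * (Q A).toReal := by
    have : 1 - ε + τ - c * betaFn (1 - ε + τ) P Q ≥ 1 - ε + τ - τ := by linarith [hbeta]
    linarith
  -- the encoder
  set enc : Fin M → ℕ → X := fun j i =>
    if (j : ℕ) * N ≤ i ∧ i < (j : ℕ) * N + N then x₀ else x_zero with hencdef
  -- the block maps and acceptance regions
  set D : ℕ → Set (ℕ → Y) := fun k => (fun y (t : Fin N) => y (k * N + t)) ⁻¹' A with hDdef
  have hblk : ∀ k : ℕ, Measurable fun (y : ℕ → Y) (t : Fin N) => y (k * N + t) :=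
    fun k => measurable_pi_lambda _ fun t => measurable_pi_apply _
  have hD : ∀ k, MeasurableSet (D k) := fun k => (hblk k) hA
  -- the decoder
  set dec : (ℕ → Y) → Fin M := fun y =>
    if h : ∃ n, n < M ∧ y ∈ D n then ⟨Nat.find h, (Nat.find_spec h).1⟩ else ⟨0, hM⟩ with hdecdef
  have hdec_eq : ∀ (y : ℕ → Y) (j : Fin M),
      y ∈ D j → (∀ k : ℕ, k < (j : ℕ) → y ∉ D k) → dec y = j := by
    intro y j hj hk
    have hex : ∃ n, n < M ∧ y ∈ D n := ⟨j, j.isLt, hj⟩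
    simp only [hdecdef, dif_pos hex]
    have h1 : Nat.find hex ≤ (j : ℕ) := Nat.find_le ⟨j.isLt, hj⟩
    have h2 : ¬ Nat.find hex < (j : ℕ) := fun hlt => hk _ hlt (Nat.find_spec hex).2
    refine Fin.ext ?_
    show Nat.find hex = (j : ℕ)
    omega
  have henc_blk : ∀ (j : Fin M) (k : ℕ), k < M → ∀ t : Fin N,
      enc j (k * N + t) = if k = (j : ℕ) then x₀ else x_zero := by
    intro j k _ t
    simp only [hencdef]
    rcases eq_or_ne k (j : ℕ) with hkj | hkj
    · rw [if_pos hkj, ← hkj,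
        if_pos ⟨Nat.le_add_right _ _, Nat.add_lt_add_left t.isLt _⟩]
    · rw [if_neg hkj]
      have hcond : ¬ ((j : ℕ) * N ≤ k * N + (t : ℕ) ∧ k * N + (t : ℕ) < (j : ℕ) * N + N) := by
        rcases Nat.lt_or_ge k (j : ℕ) with hlt | hge
        · have h1 : (k + 1) * N ≤ (j : ℕ) * N := Nat.mul_le_mul_right N hlt
          rw [Nat.succ_mul] at h1
          intro hco
          have ht := t.isLt
          omega
        · have hgt : (j : ℕ) < k := lt_of_le_of_ne hge (Ne.symm hkj)
          have h1 : ((j : ℕ) + 1) * N ≤ k * N := Nat.mul_le_mul_right N hgt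
          rw [Nat.succ_mul] at h1
          intro hco
          have ht := t.isLt
          omega
      rw [if_neg hcond]
  -- push-forward computations
  have hmap : ∀ (j : Fin M) (μ : Measure (ℕ → Y)), IsPiNat (fun i => κ (enc j i)) μ →
      ∀ k : ℕ, k < M →
        μ.map (fun y (t : Fin N) => y (k * N + t)) = if k = (j : ℕ) then P else Q := by
    intro j μ hμ k hkM
    rw [aux_map_pi (fun i => κ (enc j i)) hμ k N]
    by_cases hkj : k = (j : ℕ)
    · rw [if_pos hkj, hPdef]
      exact congrArg Measure.pi (funext fun t => by
        rw [henc_blk j k hkM t, if_pos hkj])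
    · rw [if_neg hkj, hQdef]
      exact congrArg Measure.pi (funext fun t => by
        rw [henc_blk j k hkM t, if_neg hkj])
  refine ⟨⟨enc, dec, ?_, ?_, ?_⟩⟩
  · -- measurability of the decoder
    refine measurable_to_countable' fun j => ?_
    have hset : dec ⁻¹' {j} =
        (D (j : ℕ) ∩ ⋂ (k : ℕ) (_ : k < (j : ℕ)), (D k)ᶜ) ∪
          (if (j : ℕ) = 0 then ⋂ (k : ℕ) (_ : k < M), (D k)ᶜ else ∅) := by
      ext y
      simp only [Set.mem_preimage, Set.mem_singleton_iff, Set.mem_union, Set.mem_inter_iff,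
        Set.mem_iInter, Set.mem_compl_iff]
      constructor
      · intro hy
        simp only [hdecdef] at hy
        by_cases hex : ∃ n, n < M ∧ y ∈ D n
        · simp only [dif_pos hex] at hy
          left
          have hfj : Nat.find hex = (j : ℕ) := by
            have := congrArg Fin.val hy
            simpa using this
          refine ⟨by rw [← hfj]; exact (Nat.find_spec hex).2, fun k hk => ?_⟩
          have := Nat.find_min hex (by omega : k < Nat.find hex)
          intro hyk
          exact this ⟨by omega, hyk⟩
        · simp only [dif_neg hex] at hy
          right
          have hj0 : (j : ℕ) = 0 := by
            have := congrArg Fin.val hy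
            simpa using this.symm
          rw [if_pos hj0]
          simp only [Set.mem_iInter, Set.mem_compl_iff]
          intro k hk hyk
          exact hex ⟨k, hk, hyk⟩
      · intro hy
        rcases hy with ⟨hyj, hyk⟩ | hy0
        · exact hdec_eq y j hyj hyk
        · by_cases hj0 : (j : ℕ) = 0
          · rw [if_pos hj0] at hy0
            simp only [Set.mem_iInter, Set.mem_compl_iff] at hy0
            have hex : ¬ ∃ n, n < M ∧ y ∈ D n := by
              rintro ⟨n, hn, hyn⟩
              exact hy0 n hn hyn
            simp only [hdecdef, dif_neg hex]
            refine Fin.ext ?_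
            show (0 : ℕ) = (j : ℕ)
            omega
          · rw [if_neg hj0] at hy0
            exact absurd hy0 (Set.notMem_empty y)
    rw [hset]
    refine MeasurableSet.union ?_ ?_
    · exact (hD _).inter (MeasurableSet.iInter fun k => MeasurableSet.iInter fun _ => (hD k).compl)
    · by_cases hj0 : (j : ℕ) = 0
      · rw [if_pos hj0]
        exact MeasurableSet.iInter fun k => MeasurableSet.iInter fun _ => (hD k).compl
      · rw [if_neg hj0]
        exact MeasurableSet.empty
  · -- cost
    intro j
    have hout : ∀ i ∉ Finset.Ico ((j : ℕ) * N) ((j : ℕ) * N + N),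
        ENNReal.ofReal (b (enc j i)) = 0 := by
      intro i hi
      rw [Finset.mem_Ico] at hi
      have : enc j i = x_zero := by
        simp only [hencdef]
        rw [if_neg (by omega)]
      rw [this, hzero, ENNReal.ofReal_zero]
    rw [tsum_eq_sum hout]
    have hin : ∀ i ∈ Finset.Ico ((j : ℕ) * N) ((j : ℕ) * N + N),
        ENNReal.ofReal (b (enc j i)) = ENNReal.ofReal (b x₀) := by
      intro i hi
      rw [Finset.mem_Ico] at hi
      have : enc j i = x₀ := by
        simp only [hencdef]
        rw [if_pos (by omega)]
      rw [this]
    rw [Finset.sum_congr rfl hin, Finset.sum_const, Nat.card_Ico]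
    have hNN : (j : ℕ) * N + N - (j : ℕ) * N = N := by omega
    rw [hNN, nsmul_eq_mul, ENNReal.ofReal_mul (by positivity), ENNReal.ofReal_natCast]
  · -- error probability
    intro j μ hμ
    haveI : IsProbabilityMeasure μ := hμ.1
    have hmapj := hmap j μ hμ
    have hmuD : ∀ k : ℕ, k < M → μ (D k) = (if k = (j : ℕ) then P else Q) A := by
      intro k hk
      rw [hDdef]
      rw [← Measure.map_apply (hblk k) hA, hmapj k hk]
    have hsub : {y | dec y ≠ j} ⊆ (D (j : ℕ))ᶜ ∪ ⋃ k ∈ Finset.range (j : ℕ), D k := by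
      intro y hy
      by_contra hcon
      rw [Set.mem_union, not_or] at hcon
      obtain ⟨h1, h2⟩ := hcon
      simp only [Set.mem_compl_iff, not_not] at h1
      have hyj : y ∈ D (j : ℕ) := h1
      have hyk : ∀ k : ℕ, k < (j : ℕ) → y ∉ D k := by
        intro k hk hyk
        exact h2 (Set.mem_biUnion (Finset.mem_range.2 hk) hyk)
      exact hy (hdec_eq y j hyj hyk)
    have hbound : μ {y | dec y ≠ j} ≤ μ ((D (j : ℕ))ᶜ) + ∑ k ∈ Finset.range (j : ℕ), μ (D k) :=
      le_trans (measure_mono hsub)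
        (le_trans (measure_union_le _ _)
          (add_le_add le_rfl (measure_biUnion_finset_le _ _)))
    have hDjc : μ ((D (j : ℕ))ᶜ) = P Aᶜ := by
      rw [hDdef]
      simp only
      rw [← Set.preimage_compl, ← Measure.map_apply (hblk (j : ℕ)) hA.compl,
        hmapj (j : ℕ) j.isLt, if_pos rfl]
    have hDk : ∀ k ∈ Finset.range (j : ℕ), μ (D k) = Q A := by
      intro k hk
      rw [Finset.mem_range] at hk
      rw [hmuD k (by omega), if_neg (by omega)]
    rw [hDjc, Finset.sum_congr rfl hDk, Finset.sum_const, Finset.card_range] at hbound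
    refine le_trans hbound ?_
    -- final real-number estimate
    have hfinP : P Aᶜ ≠ ⊤ := measure_ne_top _ _
    have hfinQ : ((j : ℕ) : ℝ≥0∞) * Q A ≠ ⊤ :=
      ENNReal.mul_ne_top (ENNReal.natCast_ne_top _) (measure_ne_top _ _)
    rw [nsmul_eq_mul]
    have hfin : P Aᶜ + ((j : ℕ) : ℝ≥0∞) * Q A ≠ ⊤ := ENNReal.add_ne_top.2 ⟨hfinP, hfinQ⟩
    rw [← ENNReal.ofReal_toReal hfin]
    refine ENNReal.ofReal_le_ofReal ?_
    rw [ENNReal.toReal_add hfinP hfinQ, ENNReal.toReal_mul]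
    have hPAc : (P Aᶜ).toReal = 1 - (P A).toReal := by
      rw [measure_compl hA (measure_ne_top _ _), measure_univ,
        ENNReal.toReal_sub_of_le prob_le_one ENNReal.one_ne_top, ENNReal.toReal_one]
    rw [hPAc]
    have hjM : ((j : ℕ) : ℝ) ≤ c := by
      rw [hcdef]
      have : ((j : ℕ) : ℝ) < (M : ℝ) := by exact_mod_cast j.isLt
      have hj1 : ((j : ℕ) : ℝ) + 1 ≤ (M : ℝ) := by exact_mod_cast j.isLt
      linarith
    have hq : (0 : ℝ) ≤ (Q A).toReal := ENNReal.toReal_nonneg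
    have : ((j : ℕ) : ℝ≥0∞).toReal = ((j : ℕ) : ℝ) := by simp
    rw [this]
    nlinarith [hkey, hjM, hq]
end

section
/- Let a stationary memoryless channel with input alphabet 𝒳, output alphabet 𝒴, Markov kernel P_{Y|X}, cost function b and zero-cost symbol 0 be given, and let x₀ ∈ 𝒳 satisfy b(x₀) > 0 and P_{Y|X=x₀} ≪ P_{Y|X=0}. For every N ∈ ℕ and every integer M ≥ 1, there exists an (E, M, ε')-code with E = N·b(x₀) whose maximal error probability ε' satisfies ε' ≤ ∫ min{ 1, (M−1)·P^{⊗N}_{Y|X=0}[{ŷ ∈ 𝒴^N : i_N(x₀; ŷ) ≥ i_N(x₀; y)}] } dP^{⊗N}_{Y|X=x₀}(y), where i_N(x₀; y) = ln (dP^{⊗N}_{Y|X=x₀} / dP^{⊗N}_{Y|X=0})(y) and P^{⊗N}_{Y|X=x} denotes the N-fold product measure of P_{Y|X=x} on 𝒴^N. -/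
open MeasureTheory ProbabilityTheory

/-- The information density `ln (dP/dQ)(y)`. -/
noncomputable def iDen {Ω : Type*} [MeasurableSpace Ω] (P Q : Measure Ω) (y : Ω) : ℝ :=
  Real.log ((P.rnDeriv Q) y).toReal

section AuxRcu

open scoped ENNReal


variable {Y : Type*} [MeasurableSpace Y]

private lemma map_comp_pi {ι τ : Type*} [Fintype ι] [Fintype τ]
    (ν : ι → Measure Y) [∀ q, IsProbabilityMeasure (ν q)]
    (f : τ → ι) (hf : Function.Injective f) :
    Measure.map (fun z (i : τ) => z (f i)) (Measure.pi ν) = Measure.pi (fun i => ν (f i)) := by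
  classical
  have hmeas : Measurable fun (z : ι → Y) (i : τ) => z (f i) :=
    measurable_pi_lambda _ fun i => measurable_pi_apply _
  refine (Measure.pi_eq fun A hA => ?_).symm
  rw [Measure.map_apply hmeas (MeasurableSet.univ_pi hA)]
  set A' : ι → Set Y := fun q => if h : ∃ i, f i = q then A h.choose else Set.univ with hA'def
  have hAf : ∀ i, A' (f i) = A i := by
    intro i
    have hq : ∃ i', f i' = f i := ⟨i, rfl⟩
    have h2 : hq.choose = i := hf hq.choose_spec
    simp only [hA'def, dif_pos hq, h2]
  have hset : (fun z (i : τ) => z (f i)) ⁻¹' Set.pi Set.univ A = Set.pi Set.univ A' := by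
    ext z
    simp only [Set.mem_preimage, Set.mem_pi, Set.mem_univ, true_implies]
    constructor
    · intro h q
      by_cases hq : ∃ i, f i = q
      · have hcs := hq.choose_spec
        have hz := h hq.choose
        rw [hcs] at hz
        simp only [hA'def, dif_pos hq]
        exact hz
      · simp only [hA'def, dif_neg hq, Set.mem_univ]
    · intro h i
      have := h (f i)
      rwa [hAf i] at this
  rw [hset, Measure.pi_pi]
  have h1 : ∏ q ∈ Finset.univ.image f, ν q (A' q) = ∏ q : ι, ν q (A' q) :=
    Finset.prod_subset (Finset.subset_univ _) (by
      intro q _ hq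
      have hnq : ¬ ∃ i, f i = q := by simpa [Finset.mem_image] using hq
      simp only [hA'def, dif_neg hnq]
      simp)
  rw [← h1, Finset.prod_image (fun x _ y _ h => hf h)]
  exact Finset.prod_congr rfl fun i _ => by rw [hAf i]

private lemma map_comp_isPiNat (ν : ℕ → Measure Y) [∀ i, IsProbabilityMeasure (ν i)]
    {μ : Measure (ℕ → Y)} (hμ : IsPiNat ν μ)
    {τ : Type*} [Fintype τ] (c : τ → ℕ) (hc : Function.Injective c) :
    Measure.map (fun y (q : τ) => y (c q)) μ = Measure.pi (fun q => ν (c q)) := by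
  classical
  have hmeas : Measurable fun (y : ℕ → Y) (q : τ) => y (c q) :=
    measurable_pi_lambda _ fun q => measurable_pi_apply _
  refine (Measure.pi_eq fun A hA => ?_).symm
  rw [Measure.map_apply hmeas (MeasurableSet.univ_pi hA)]
  set A' : ℕ → Set Y := fun n => if h : ∃ q, c q = n then A h.choose else Set.univ with hA'def
  have hAc : ∀ q, A' (c q) = A q := by
    intro q
    have hq : ∃ q', c q' = c q := ⟨q, rfl⟩
    have h2 : hq.choose = q := hc hq.choose_spec
    simp only [hA'def, dif_pos hq, h2]
  have hA'meas : ∀ n, MeasurableSet (A' n) := by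
    intro n
    by_cases h : ∃ q, c q = n
    · simp only [hA'def, dif_pos h]; exact hA _
    · simp only [hA'def, dif_neg h]; exact MeasurableSet.univ
  have hset : (fun y (q : τ) => y (c q)) ⁻¹' Set.pi Set.univ A
      = {y : ℕ → Y | ∀ n ∈ Finset.univ.image c, y n ∈ A' n} := by
    ext y
    simp only [Set.mem_preimage, Set.mem_pi, Set.mem_univ, true_implies, Set.mem_setOf_eq,
      Finset.mem_image]
    constructor
    · rintro h n ⟨q, -, rfl⟩
      rw [hAc q]; exact h q
    · intro h q
      have := h (c q) ⟨q, Finset.mem_univ _, rfl⟩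
      rwa [hAc q] at this
  rw [hset, hμ.2 _ _ hA'meas, Finset.prod_image (fun x _ y _ h => hc h)]
  exact Finset.prod_congr rfl fun q _ => by rw [hAc q]

private noncomputable def argm {M : ℕ} [NeZero M] (v : Fin M → ℝ) : Fin M :=
  (Finset.univ.filter fun j => ∀ k, v k ≤ v j).min' (by
    have : Nonempty (Fin M) := ⟨⟨0, Nat.pos_of_ne_zero (NeZero.ne M)⟩⟩
    obtain ⟨j, hj⟩ := Finite.exists_max v
    exact ⟨j, Finset.mem_filter.2 ⟨Finset.mem_univ _, hj⟩⟩)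

private lemma argm_eq_iff {M : ℕ} [NeZero M] (v : Fin M → ℝ) (j : Fin M) :
    argm v = j ↔ (∀ k, v k ≤ v j) ∧ ∀ k, (∀ l, v l ≤ v k) → j ≤ k := by
  unfold argm
  constructor
  · intro h
    constructor
    · have hmem := Finset.min'_mem (Finset.univ.filter fun j => ∀ k, v k ≤ v j)
        (by
          have : Nonempty (Fin M) := ⟨⟨0, Nat.pos_of_ne_zero (NeZero.ne M)⟩⟩
          obtain ⟨j, hj⟩ := Finite.exists_max v
          exact ⟨j, Finset.mem_filter.2 ⟨Finset.mem_univ _, hj⟩⟩)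
      rw [h] at hmem
      exact (Finset.mem_filter.1 hmem).2
    · intro k hk
      rw [← h]
      exact Finset.min'_le _ _ (Finset.mem_filter.2 ⟨Finset.mem_univ _, hk⟩)
  · rintro ⟨h1, h2⟩
    apply le_antisymm
    · exact Finset.min'_le _ _ (Finset.mem_filter.2 ⟨Finset.mem_univ _, h1⟩)
    · apply Finset.le_min'
      intro k hk
      exact h2 k (Finset.mem_filter.1 hk).2

private lemma argm_spec {M : ℕ} [NeZero M] (v : Fin M → ℝ) (j : Fin M)
    (h : ∀ k, k ≠ j → v k < v j) : argm v = j := by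
  rw [argm_eq_iff]
  constructor
  · intro k
    by_cases hk : k = j
    · subst hk; exact le_refl _
    · exact (h k hk).le
  · intro k hk
    by_cases hk' : k = j
    · exact hk' ▸ le_refl j
    · exact absurd (hk j) (not_le.mpr (h k hk'))

private lemma argm_measurable {M : ℕ} [NeZero M] : Measurable (argm (M := M)) := by
  apply measurable_to_countable'
  intro j
  have hpre : argm ⁻¹' {j} =
      ({v : Fin M → ℝ | ∀ k, v k ≤ v j} ∩ ⋂ k, {v | (∀ l, v l ≤ v k) → j ≤ k}) := by
    ext v
    simp only [Set.mem_preimage, Set.mem_singleton_iff, argm_eq_iff, Set.mem_inter_iff,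
      Set.mem_setOf_eq, Set.mem_iInter]
  rw [hpre]
  apply MeasurableSet.inter
  · have h1 : {v : Fin M → ℝ | ∀ k, v k ≤ v j} = ⋂ k, {v | v k ≤ v j} := by
      ext v; simp
    rw [h1]
    exact MeasurableSet.iInter fun k =>
      measurableSet_le (measurable_pi_apply k) (measurable_pi_apply j)
  · apply MeasurableSet.iInter
    intro k
    by_cases hjk : j ≤ k
    · have h2 : {v : Fin M → ℝ | (∀ l, v l ≤ v k) → j ≤ k} = Set.univ := by
        ext v; simp [hjk]
      rw [h2]; exact MeasurableSet.univ
    · have h2 : {v : Fin M → ℝ | (∀ l, v l ≤ v k) → j ≤ k} = (⋂ l, {v | v l ≤ v k})ᶜ := by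
        ext v; simp [hjk]
      rw [h2]
      exact (MeasurableSet.iInter fun l =>
        measurableSet_le (measurable_pi_apply l) (measurable_pi_apply k)).compl

private lemma block_eq {N : ℕ} {a b : ℕ} {i i' : Fin N}
    (h : a * N + (i : ℕ) = b * N + (i' : ℕ)) : a = b ∧ (i : ℕ) = (i' : ℕ) := by
  have hN : 0 < N := i.pos
  have hi := i.isLt
  have hi' := i'.isLt
  have ha : (a * N + (i : ℕ)) / N = a := by
    rw [mul_comm, Nat.mul_add_div hN, Nat.div_eq_of_lt hi, Nat.add_zero]
  have hb : (b * N + (i' : ℕ)) / N = b := by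
    rw [mul_comm, Nat.mul_add_div hN, Nat.div_eq_of_lt hi', Nat.add_zero]
  have hab : a = b := by rw [← ha, ← hb, h]
  subst hab
  exact ⟨rfl, Nat.add_left_cancel h⟩

private lemma core_bound {M N : ℕ} (P Q : Measure Y)
    [IsProbabilityMeasure P] [IsProbabilityMeasure Q]
    (j : Fin M) {g : (Fin N → Y) → ℝ} (hg : Measurable g) :
    Measure.pi (fun q : Fin M × Fin N => if q.1 = j then P else Q)
      {w | ∃ k, k ≠ j ∧ g (fun i => w (j, i)) ≤ g (fun i => w (k, i))}
      ≤ ∫⁻ y, min 1 ((M - 1 : ℕ) *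
          (Measure.pi fun _ : Fin N => Q) {yh | g y ≤ g yh})
          ∂(Measure.pi fun _ : Fin N => P) := by
  classical
  set ZQ := Measure.pi fun _ : Fin N => Q with hZQ
  set ZP := Measure.pi fun _ : Fin N => P with hZP
  set cfun : ℝ → ℝ≥0∞ := fun t => min 1 ((M - 1 : ℕ) * ZQ {yh | t ≤ g yh}) with hcfun
  have hmeas_t : Measurable fun t : ℝ => ZQ {yh | t ≤ g yh} := by
    have hs : MeasurableSet {p : ℝ × (Fin N → Y) | p.1 ≤ g p.2} :=
      measurableSet_le measurable_fst (hg.comp measurable_snd)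
    exact measurable_measure_prodMk_left hs
  have hcfun_meas : Measurable cfun := measurable_const.min (hmeas_t.const_mul _)
  set p : Fin M × Fin N → Prop := fun q => q.1 = j with hp
  have hν : ∀ q : Fin M × Fin N, IsProbabilityMeasure (if q.1 = j then P else Q) := by
    intro q; split <;> infer_instance
  have hpres := measurePreserving_piEquivPiSubtypeProd
    (fun q : Fin M × Fin N => if q.1 = j then P else Q) p
  have h1 : (Measure.pi fun q : Subtype p => if (q : Fin M × Fin N).1 = j then P else Q)
      = Measure.pi (fun _ : Subtype p => P) := by
    congr 1; funext q; exact if_pos q.2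
  have h2 : (Measure.pi fun q : {q : Fin M × Fin N // ¬ p q} =>
        if (q : Fin M × Fin N).1 = j then P else Q)
      = Measure.pi (fun _ : {q : Fin M × Fin N // ¬ p q} => Q) := by
    congr 1; funext q; exact if_neg q.2
  rw [h1, h2] at hpres
  set T : Set ((Subtype p → Y) × ({q : Fin M × Fin N // ¬ p q} → Y)) :=
    {uz | ∃ k, ∃ h : k ≠ j, g (fun i => uz.1 ⟨(j, i), rfl⟩) ≤ g (fun i => uz.2 ⟨(k, i), h⟩)}
    with hT
  have hblock1 : Measurable fun (u : Subtype p → Y) => (fun i => u ⟨(j, i), rfl⟩ : Fin N → Y) :=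
    measurable_pi_lambda _ fun i => measurable_pi_apply _
  have hblock2 : ∀ (k : Fin M) (h : k ≠ j),
      Measurable fun (z : {q : Fin M × Fin N // ¬ p q} → Y) =>
        (fun i => z ⟨(k, i), h⟩ : Fin N → Y) :=
    fun k h => measurable_pi_lambda _ fun i => measurable_pi_apply _
  have hTmeas : MeasurableSet T := by
    have hTeq : T = ⋃ k, ⋃ h : k ≠ j,
        {uz : (Subtype p → Y) × ({q : Fin M × Fin N // ¬ p q} → Y) |
          g (fun i => uz.1 ⟨(j, i), rfl⟩) ≤ g (fun i => uz.2 ⟨(k, i), h⟩)} := by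
      ext uz
      simp only [hT, Set.mem_setOf_eq, Set.mem_iUnion]
    rw [hTeq]
    exact MeasurableSet.iUnion fun k => MeasurableSet.iUnion fun h =>
      measurableSet_le ((hg.comp hblock1).comp measurable_fst)
        ((hg.comp (hblock2 k h)).comp measurable_snd)
  have hpre : (MeasurableEquiv.piEquivPiSubtypeProd (fun _ : Fin M × Fin N => Y) p) ⁻¹' T =
      {w : Fin M × Fin N → Y | ∃ k, k ≠ j ∧ g (fun i => w (j, i)) ≤ g (fun i => w (k, i))} := by
    ext w
    constructor
    · rintro ⟨k, h, hle⟩; exact ⟨k, h, hle⟩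
    · rintro ⟨k, h, hle⟩; exact ⟨k, h, hle⟩
  have hinner : ∀ u : Subtype p → Y,
      (Measure.pi fun _ : {q : Fin M × Fin N // ¬ p q} => Q) {z | (u, z) ∈ T}
        ≤ cfun (g fun i => u ⟨(j, i), rfl⟩) := by
    intro u
    set t := g (fun i => u ⟨(j, i), rfl⟩) with ht
    refine le_min prob_le_one ?_
    have hEq : {z : {q : Fin M × Fin N // ¬ p q} → Y | (u, z) ∈ T} =
        ⋃ k : {k : Fin M // k ≠ j},
          (fun (z : {q : Fin M × Fin N // ¬ p q} → Y) (i : Fin N) => z ⟨(k.1, i), k.2⟩) ⁻¹'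
            {yh | t ≤ g yh} := by
      ext z
      simp only [hT, Set.mem_setOf_eq, Set.mem_iUnion, Set.mem_preimage]
      constructor
      · rintro ⟨k, h, hle⟩; exact ⟨⟨k, h⟩, hle⟩
      · rintro ⟨⟨k, h⟩, hle⟩; exact ⟨k, h, hle⟩
    rw [hEq]
    have hB : MeasurableSet {yh : Fin N → Y | t ≤ g yh} := measurableSet_le measurable_const hg
    calc (Measure.pi fun _ : {q : Fin M × Fin N // ¬ p q} => Q)
          (⋃ k : {k : Fin M // k ≠ j},
            (fun (z : {q : Fin M × Fin N // ¬ p q} → Y) (i : Fin N) => z ⟨(k.1, i), k.2⟩) ⁻¹'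
              {yh | t ≤ g yh})
        ≤ ∑' k : {k : Fin M // k ≠ j},
            (Measure.pi fun _ : {q : Fin M × Fin N // ¬ p q} => Q)
              ((fun (z : {q : Fin M × Fin N // ¬ p q} → Y) (i : Fin N) => z ⟨(k.1, i), k.2⟩) ⁻¹'
                {yh | t ≤ g yh}) := measure_iUnion_le _
      _ = ∑ k : {k : Fin M // k ≠ j}, ZQ {yh | t ≤ g yh} := by
          rw [tsum_fintype]
          refine Finset.sum_congr rfl fun k _ => ?_
          have hinj : Function.Injective
              (fun i : Fin N => (⟨(k.1, i), k.2⟩ : {q : Fin M × Fin N // ¬ p q})) := by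
            intro a b hab
            have hab' : ((k.1, a) : Fin M × Fin N) = (k.1, b) := congrArg Subtype.val hab
            exact (Prod.ext_iff.1 hab').2
          have hmap := map_comp_pi (fun _ : {q : Fin M × Fin N // ¬ p q} => Q) _ hinj
          have hblk : Measurable fun (z : {q : Fin M × Fin N // ¬ p q} → Y) =>
              (fun i : Fin N => z ⟨(k.1, i), k.2⟩) :=
            measurable_pi_lambda _ fun i => measurable_pi_apply _
          rw [← Measure.map_apply hblk hB, hmap, hZQ]
      _ = (M - 1 : ℕ) * ZQ {yh | t ≤ g yh} := by
          rw [Finset.sum_const, Finset.card_univ, nsmul_eq_mul]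
          congr 2
          rw [Fintype.card_subtype_compl, Fintype.card_subtype_eq, Fintype.card_fin]
  calc Measure.pi (fun q : Fin M × Fin N => if q.1 = j then P else Q)
        {w | ∃ k, k ≠ j ∧ g (fun i => w (j, i)) ≤ g (fun i => w (k, i))}
      = ((Measure.pi fun _ : Subtype p => P).prod
          (Measure.pi fun _ : {q : Fin M × Fin N // ¬ p q} => Q)) T := by
        rw [← hpre]
        exact hpres.measure_preimage hTmeas.nullMeasurableSet
    _ = ∫⁻ u, (Measure.pi fun _ : {q : Fin M × Fin N // ¬ p q} => Q) {z | (u, z) ∈ T}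
          ∂(Measure.pi fun _ : Subtype p => P) := Measure.prod_apply hTmeas
    _ ≤ ∫⁻ u, cfun (g fun i => u ⟨(j, i), rfl⟩) ∂(Measure.pi fun _ : Subtype p => P) :=
        lintegral_mono hinner
    _ = ∫⁻ y, cfun (g y) ∂ZP := by
        have hinjφ : Function.Injective (fun i : Fin N => (⟨(j, i), rfl⟩ : Subtype p)) := by
          intro a b hab
          have hab' : ((j, a) : Fin M × Fin N) = (j, b) := congrArg Subtype.val hab
          exact (Prod.ext_iff.1 hab').2
        have hmapφ := map_comp_pi (fun _ : Subtype p => P) _ hinjφ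
        rw [hZP, ← hmapφ]
        exact (lintegral_map (f := fun y => cfun (g y)) (hcfun_meas.comp hg) hblock1).symm
    _ = ∫⁻ y, min 1 ((M - 1 : ℕ) * ZQ {yh | g y ≤ g yh}) ∂ZP := rfl

end AuxRcu

theorem achievability_rcu
    {X Y : Type*} [MeasurableSpace X] [MeasurableSpace Y]
    (κ : Kernel X Y) [IsMarkovKernel κ] (b : X → ℝ) (hb : ∀ x, 0 ≤ b x)
    (x_zero : X) (hzero : b x_zero = 0)
    (x₀ : X) (hx₀ : 0 < b x₀) (habs : κ x₀ ≪ κ x_zero)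
    (N : ℕ) (M : ℕ) (hM : 1 ≤ M) :
    Nonempty (Code κ b ((N : ℝ) * b x₀) M
      (∫ y, min 1 (((M : ℝ) - 1) *
          ((Measure.pi fun _ : Fin N => κ x_zero)
            {yh | iDen (Measure.pi fun _ : Fin N => κ x₀)
                    (Measure.pi fun _ : Fin N => κ x_zero) y
                  ≤ iDen (Measure.pi fun _ : Fin N => κ x₀)
                    (Measure.pi fun _ : Fin N => κ x_zero) yh}).toReal)
        ∂(Measure.pi fun _ : Fin N => κ x₀))) := by
  classical
  haveI : NeZero M := ⟨by omega⟩
  set ZP := Measure.pi fun _ : Fin N => κ x₀ with hZP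
  set ZQ := Measure.pi fun _ : Fin N => κ x_zero with hZQ
  set g : (Fin N → Y) → ℝ := iDen ZP ZQ with hgdef
  have hg : Measurable g := by
    rw [hgdef]
    show Measurable fun y => Real.log ((ZP.rnDeriv ZQ) y).toReal
    exact Real.measurable_log.comp (Measure.measurable_rnDeriv ZP ZQ).ennreal_toReal
  set sfun : Fin M → Finset ℕ :=
    fun j => Finset.image (fun i' : Fin N => (j : ℕ) * N + (i' : ℕ)) Finset.univ with hsfun
  set enc : Fin M → ℕ → X := fun j i => if i ∈ sfun j then x₀ else x_zero with henc
  set G : Fin M → (ℕ → Y) → ℝ :=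
    fun k y => g (fun i : Fin N => y ((k : ℕ) * N + (i : ℕ))) with hG
  set dec : (ℕ → Y) → Fin M := fun y => argm (fun k => G k y) with hdec
  refine ⟨⟨enc, dec, ?_, ?_, ?_⟩⟩
  · -- measurability of the decoder
    have hGmeas : ∀ k, Measurable (G k) := fun k =>
      hg.comp (measurable_pi_lambda _ fun i => measurable_pi_apply _)
    exact argm_measurable.comp (measurable_pi_lambda _ fun k => hGmeas k)
  · -- cost constraint
    intro j
    have hout : ∀ i ∉ sfun j, ENNReal.ofReal (b (enc j i)) = 0 := by
      intro i hi
      simp only [henc, if_neg hi, hzero, ENNReal.ofReal_zero]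
    rw [tsum_eq_sum hout]
    have hin : ∀ i ∈ sfun j, ENNReal.ofReal (b (enc j i)) = ENNReal.ofReal (b x₀) := by
      intro i hi; simp only [henc, if_pos hi]
    rw [Finset.sum_congr rfl hin, Finset.sum_const]
    have hcard : (sfun j).card = N := by
      rw [hsfun]
      rw [Finset.card_image_of_injective _
        (fun a b hab => Fin.ext (Nat.add_left_cancel hab))]
      simp
    rw [hcard, nsmul_eq_mul, ENNReal.ofReal_mul (by positivity : (0:ℝ) ≤ (N:ℝ)),
      ENNReal.ofReal_natCast]
  · -- error bound
    intro j μ hμ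
    set c : Fin M × Fin N → ℕ := fun q => ((q.1 : ℕ)) * N + ((q.2 : ℕ)) with hc
    have hcinj : Function.Injective c := by
      rintro ⟨a, i⟩ ⟨a', i'⟩ h
      obtain ⟨h1, h2⟩ := block_eq h
      exact Prod.ext_iff.2 ⟨Fin.ext h1, Fin.ext h2⟩
    have hencc : ∀ q : Fin M × Fin N, enc j (c q) = if q.1 = j then x₀ else x_zero := by
      rintro ⟨k, i⟩
      by_cases hkj : k = j
      · subst hkj
        have hmem : c (k, i) ∈ sfun k := Finset.mem_image.2 ⟨i, Finset.mem_univ _, rfl⟩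
        simp [henc, hmem]
      · have hmem : c (k, i) ∉ sfun j := by
          intro hmemm
          obtain ⟨i', -, hi'⟩ := Finset.mem_image.1 hmemm
          exact hkj (Fin.ext ((block_eq hi').1).symm)
        simp [henc, hmem, hkj]
    set S : Set ((Fin M × Fin N) → Y) :=
      {w | ∃ k, k ≠ j ∧ g (fun i => w (j, i)) ≤ g (fun i => w (k, i))} with hS
    have hSmeas : MeasurableSet S := by
      have hSeq : S = ⋃ k, ⋃ _ : k ≠ j,
          {w : (Fin M × Fin N) → Y | g (fun i => w (j, i)) ≤ g (fun i => w (k, i))} := by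
        ext w
        simp only [hS, Set.mem_setOf_eq, Set.mem_iUnion]
        constructor
        · rintro ⟨k, h, hle⟩; exact ⟨k, h, hle⟩
        · rintro ⟨k, h, hle⟩; exact ⟨k, h, hle⟩
      rw [hSeq]
      exact MeasurableSet.iUnion fun k => MeasurableSet.iUnion fun _ =>
        measurableSet_le (hg.comp (measurable_pi_lambda _ fun i => measurable_pi_apply _))
          (hg.comp (measurable_pi_lambda _ fun i => measurable_pi_apply _))
    have hrestr : Measurable fun (y : ℕ → Y) (q : Fin M × Fin N) => y (c q) :=
      measurable_pi_lambda _ fun q => measurable_pi_apply _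
    have hsubset : {y : ℕ → Y | dec y ≠ j} ⊆ (fun y (q : Fin M × Fin N) => y (c q)) ⁻¹' S := by
      intro y hy
      by_contra hns
      refine hy (argm_spec _ j fun k hk => ?_)
      by_contra hlt
      push_neg at hlt
      exact hns ⟨k, hk, hlt⟩
    haveI hν : ∀ i, IsProbabilityMeasure (κ (enc j i)) := fun i => inferInstance
    have hq_meas : Measurable fun y : Fin N → Y => ZQ {yh | g y ≤ g yh} := by
      have hs : MeasurableSet {pp : (Fin N → Y) × (Fin N → Y) | g pp.1 ≤ g pp.2} :=
        measurableSet_le (hg.comp measurable_fst) (hg.comp measurable_snd)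
      exact measurable_measure_prodMk_left hs
    have hM1 : (0:ℝ) ≤ (M:ℝ) - 1 := by
      have : (1:ℝ) ≤ (M:ℝ) := by exact_mod_cast hM
      linarith
    have hf_nn : ∀ y, 0 ≤ min 1 (((M:ℝ) - 1) * (ZQ {yh | g y ≤ g yh}).toReal) :=
      fun y => le_min zero_le_one (mul_nonneg hM1 ENNReal.toReal_nonneg)
    have hfmeas : Measurable fun y => min 1 (((M:ℝ) - 1) * (ZQ {yh | g y ≤ g yh}).toReal) :=
      measurable_const.min (hq_meas.ennreal_toReal.const_mul _)
    have hfint :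
        Integrable (fun y => min 1 (((M:ℝ) - 1) * (ZQ {yh | g y ≤ g yh}).toReal)) ZP := by
      refine (integrable_const (1:ℝ)).mono' hfmeas.aestronglyMeasurable
        (Filter.Eventually.of_forall fun y => ?_)
      rw [Real.norm_eq_abs, abs_of_nonneg (hf_nn y)]
      exact min_le_left _ _
    calc μ {y | dec y ≠ j}
        ≤ μ ((fun y (q : Fin M × Fin N) => y (c q)) ⁻¹' S) := measure_mono hsubset
      _ = Measure.pi (fun q : Fin M × Fin N => κ (enc j (c q))) S := by
          rw [← Measure.map_apply hrestr hSmeas,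
            map_comp_isPiNat (fun i => κ (enc j i)) hμ c hcinj]
      _ = Measure.pi (fun q : Fin M × Fin N => if q.1 = j then κ x₀ else κ x_zero) S := by
          have harg : (fun q : Fin M × Fin N => κ (enc j (c q)))
              = fun q : Fin M × Fin N => if q.1 = j then κ x₀ else κ x_zero := by
            funext q
            rw [hencc q]
            split <;> rfl
          rw [harg]
      _ ≤ ∫⁻ y, min 1 ((M - 1 : ℕ) * ZQ {yh | g y ≤ g yh}) ∂ZP := core_bound _ _ j hg
      _ = ENNReal.ofReal
            (∫ y, min 1 (((M:ℝ) - 1) * (ZQ {yh | g y ≤ g yh}).toReal) ∂ZP) := by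
          rw [MeasureTheory.ofReal_integral_eq_lintegral_ofReal hfint
            (Filter.Eventually.of_forall hf_nn)]
          refine lintegral_congr fun y => ?_
          have hne : ZQ {yh | g y ≤ g yh} ≠ ⊤ := measure_ne_top _ _
          have hmono : Monotone ENNReal.ofReal := fun _ _ h => ENNReal.ofReal_le_ofReal h
          rw [hmono.map_min, ENNReal.ofReal_one, ENNReal.ofReal_mul hM1,
            ENNReal.ofReal_toReal hne]
          have hcast : ((M:ℝ) - 1) = ((M - 1 : ℕ) : ℝ) := by
            rw [Nat.cast_sub hM, Nat.cast_one]
          rw [hcast, ENNReal.ofReal_natCast]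
end

section
/- Let a stationary memoryless channel with input alphabet 𝒳, output alphabet 𝒴, Markov kernel P_{Y|X}, cost function b and zero-cost symbol 0 be given. Every (E, M, ε)-code for this channel contains a codeword x = (x₁,x₂,…) with Σ_i b(x_i) ≤ E such that β_{1−ε}( ⊗_i P_{Y|X=x_i}, ⊗_i P_{Y|X=0} ) ≤ 1/M; equivalently, M ≤ sup over all x ∈ 𝒳^ℕ with Σ_i b(x_i) ≤ E of 1 / β_{1−ε}( ⊗_i P_{Y|X=x_i}, ⊗_i P_{Y|X=0} ). -/
open MeasureTheory ProbabilityTheory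

lemma isPiNat_unique {Y : Type*} [MeasurableSpace Y] {ν : ℕ → Measure Y}
    {μ₁ μ₂ : Measure (ℕ → Y)} (h1 : IsPiNat ν μ₁) (h2 : IsPiNat ν μ₂) : μ₁ = μ₂ := by
  set C : Set (Set (ℕ → Y)) :=
    {S | ∃ (s : Finset ℕ) (A : ℕ → Set Y), (∀ i, MeasurableSet (A i)) ∧
      S = {y | ∀ i ∈ s, y i ∈ A i}}
  have hgen : (MeasurableSpace.pi : MeasurableSpace (ℕ → Y)) = MeasurableSpace.generateFrom C := by
    refine le_antisymm ?_ ?_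
    · refine iSup_le fun i => ?_
      rw [← measurable_iff_comap_le]
      intro A hA
      refine MeasurableSpace.measurableSet_generateFrom ?_
      refine ⟨{i}, fun _ => A, fun _ => hA, ?_⟩
      ext y; simp
    · refine MeasurableSpace.generateFrom_le ?_
      rintro S ⟨s, A, hA, rfl⟩
      have : {y : ℕ → Y | ∀ i ∈ s, y i ∈ A i} = ⋂ i ∈ s, (fun y => y i) ⁻¹' (A i) := by
        ext y; simp
      rw [this]
      exact MeasurableSet.biInter s.countable_toSet fun i _ => (measurable_pi_apply i) (hA i)
  have hpi : IsPiSystem C := by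
    rintro S ⟨s, A, hA, rfl⟩ T ⟨t, B, hB, rfl⟩ -
    refine ⟨s ∪ t, fun i => (if i ∈ s then A i else Set.univ) ∩ (if i ∈ t then B i else Set.univ),
      fun i => ?_, ?_⟩
    · dsimp only
      exact MeasurableSet.inter (by split_ifs; exacts [hA i, .univ])
        (by split_ifs; exacts [hB i, .univ])
    · ext y
      simp only [Set.mem_inter_iff, Set.mem_setOf_eq, Finset.mem_union]
      constructor
      · rintro ⟨hs, ht⟩ i hi
        constructor
        · split_ifs with h; exacts [hs i h, Set.mem_univ _]
        · split_ifs with h; exacts [ht i h, Set.mem_univ _]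
      · intro h
        constructor
        · intro i hi; have := (h i (Or.inl hi)).1; simpa [hi] using this
        · intro i hi; have := (h i (Or.inr hi)).2; simpa [hi] using this
  haveI := h1.1
  haveI := h2.1
  refine MeasureTheory.ext_of_generate_finite C hgen hpi ?_ (by simp)
  rintro S ⟨s, A, hA, rfl⟩
  rw [h1.2 s A hA, h2.2 s A hA]

theorem metaconverse
    {X Y : Type*} [MeasurableSpace X] [MeasurableSpace Y]
    (κ : Kernel X Y) [IsMarkovKernel κ] (b : X → ℝ) (hb : ∀ x, 0 ≤ b x)
    (x_zero : X) (hzero : b x_zero = 0)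
    (E ε : ℝ) (M : ℕ) (hM : 1 ≤ M)
    (C : Code κ b E M ε) :
    ∃ j : Fin M, ∀ (μP μQ : Measure (ℕ → Y)),
      IsPiNat (fun i => κ (C.enc j i)) μP → IsPiNat (fun _ => κ x_zero) μQ →
      betaFn (1 - ε) μP μQ ≤ 1 / (M : ℝ) := by
  by_cases hQex : ∃ μQ₀ : Measure (ℕ → Y), IsPiNat (fun _ => κ x_zero) μQ₀
  · obtain ⟨μQ₀, hμQ₀⟩ := hQex
    haveI := hμQ₀.1
    have hMeasD : ∀ j : Fin M, MeasurableSet (C.dec ⁻¹' {j}) :=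
      fun j => C.meas_dec (measurableSet_singleton j)
    have hsum : ∑ j : Fin M, μQ₀ (C.dec ⁻¹' {j}) = 1 := by
      rw [sum_measure_preimage_singleton _ fun j _ => hMeasD j]
      simp
    have hMpos : (0:ℝ) < M := by exact_mod_cast Nat.lt_of_lt_of_le Nat.zero_lt_one hM
    have hr : ∃ j : Fin M, (μQ₀ (C.dec ⁻¹' {j})).toReal ≤ 1 / (M : ℝ) := by
      by_contra h
      push_neg at h
      have hsum' : ∑ j : Fin M, (μQ₀ (C.dec ⁻¹' {j})).toReal = 1 := by
        rw [← ENNReal.toReal_sum fun j _ => measure_ne_top _ _, hsum, ENNReal.toReal_one]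
      have hlt : ∑ _j : Fin M, (1 / (M:ℝ)) < ∑ j : Fin M, (μQ₀ (C.dec ⁻¹' {j})).toReal :=
        Finset.sum_lt_sum_of_nonempty ⟨⟨0, hM⟩, Finset.mem_univ _⟩ fun j _ => h j
      rw [Finset.sum_const, Finset.card_univ, Fintype.card_fin, nsmul_eq_mul,
        mul_one_div, div_self (ne_of_gt hMpos)] at hlt
      linarith
    obtain ⟨j, hj⟩ := hr
    refine ⟨j, fun μP μQ hP hQ => ?_⟩
    obtain rfl : μQ = μQ₀ := isPiNat_unique hQ hμQ₀
    haveI := hP.1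
    set D := C.dec ⁻¹' {j} with hDdef
    have hD := hMeasD j
    by_cases hε : 0 ≤ ε
    · have herr : μP Dᶜ ≤ ENNReal.ofReal ε := by
        have h := C.err j μP hP
        have : {y | C.dec y ≠ j} = Dᶜ := by ext y; simp [hDdef]
        rwa [this] at h
      have hPc : (μP Dᶜ).toReal ≤ ε := by
        calc (μP Dᶜ).toReal ≤ (ENNReal.ofReal ε).toReal :=
              ENNReal.toReal_mono (by simp) herr
          _ = ε := ENNReal.toReal_ofReal hε
      have h1 : μP D + μP Dᶜ = 1 := by
        rw [measure_add_measure_compl hD, measure_univ]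
      have hPD : 1 - ε ≤ (μP D).toReal := by
        have h2 := congrArg ENNReal.toReal h1
        rw [ENNReal.toReal_add (measure_ne_top _ _) (measure_ne_top _ _),
          ENNReal.toReal_one] at h2
        linarith
      let f : (ℕ → Y) → ℝ := D.indicator fun _ => 1
      have hfm : Measurable f := measurable_const.indicator hD
      have hfi : ∀ ω, f ω ∈ Set.Icc (0:ℝ) 1 := fun ω => by
        by_cases hω : ω ∈ D <;> simp [f, hω]
      have hintP : ∫ ω, f ω ∂μP = (μP D).toReal := by
        rw [integral_indicator_const _ hD]; simp; rfl
      have hintQ : ∫ ω, f ω ∂μQ = (μQ D).toReal := by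
        rw [integral_indicator_const _ hD]; simp; rfl
      have hmem : 1 - ε ≤ ∫ ω, f ω ∂μP := hintP ▸ hPD
      have hbdd : BddBelow (Set.range fun g :
          {f : (ℕ → Y) → ℝ // Measurable f ∧ (∀ ω, f ω ∈ Set.Icc (0:ℝ) 1) ∧
            1 - ε ≤ ∫ ω, f ω ∂μP} => ∫ ω, g.1 ω ∂μQ) := by
        refine ⟨0, ?_⟩
        rintro _ ⟨g, rfl⟩
        exact integral_nonneg fun ω => (g.2.2.1 ω).1
      calc betaFn (1-ε) μP μQ ≤ ∫ ω, f ω ∂μQ := ciInf_le hbdd ⟨f, hfm, hfi, hmem⟩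
        _ = (μQ D).toReal := hintQ
        _ ≤ 1 / (M:ℝ) := hj
    · push_neg at hε
      haveI : IsEmpty {f : (ℕ → Y) → ℝ // Measurable f ∧ (∀ ω, f ω ∈ Set.Icc (0:ℝ) 1) ∧
          1 - ε ≤ ∫ ω, f ω ∂μP} := by
        constructor
        rintro ⟨f, hfm, hfi, hf⟩
        have hint : Integrable f μP := by
          refine (integrable_const (1:ℝ)).mono' hfm.aestronglyMeasurable
            (ae_of_all _ fun ω => ?_)
          rw [Real.norm_eq_abs, abs_le]
          exact ⟨by linarith [(hfi ω).1], (hfi ω).2⟩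
        have hle : ∫ ω, f ω ∂μP ≤ ∫ _, (1:ℝ) ∂μP :=
          integral_mono hint (integrable_const 1) fun ω => (hfi ω).2
        simp only [integral_const, Measure.real, measure_univ, ENNReal.toReal_one, smul_eq_mul,
          one_mul] at hle
        linarith
      rw [betaFn, Real.iInf_of_isEmpty]
      exact div_nonneg zero_le_one (Nat.cast_nonneg M)
  · exact ⟨⟨0, hM⟩, fun μP μQ hP hQ => absurd ⟨μQ, hQ⟩ hQex⟩
end

section
/- Consider the r-antenna no-CSI SIMO Rayleigh-fading channel in its equivalent exponential form. Fix E > 0 and integers N ≥ 1 and M ≥ 1. There exists an (E, M, ε')-code for this channel whose maximal error probability ε' satisfies ε' ≤ E[ min{ 1, (M−1)·P[ Ḡ_N ≥ (1 + E/N)·G_N | G_N ] } ], where G_N and Ḡ_N are independent random variables each with the Gamma(rN,1) distribution; that is, ε' ≤ ∫ min{1, (M−1)·P[Ḡ_N ≥ (1+E/N)·g]} dμ(g) where μ is the Gamma(rN,1) law of G_N. -/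
open MeasureTheory ProbabilityTheory

/-- The output law of the `r`-antenna no-CSI SIMO Rayleigh-fading channel in its equivalent
exponential form: given input symbol `x`, the `r` output coordinates are independent, each
distributed as `(1 + x) · S` with `S` exponential of mean `1`. -/
noncomputable def simoLaw (r : ℕ) (x : ℝ) : Measure (Fin r → ℝ) :=
  Measure.pi fun _ => (expMeasure 1).map (fun s => (1 + x) * s)

/-- An `(E, M, ε)` code for the `r`-antenna no-CSI SIMO Rayleigh-fading channel in its
equivalent exponential form: `M` codewords (sequences of nonnegative input symbols), each of
total cost (= sum of entries) at most `E`, and a measurable decoder whose error probability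
under the output distribution induced by each codeword is at most `ε`. -/
structure SimoCode (r : ℕ) (E : ℝ) (M : ℕ) (ε : ℝ) where
  enc : Fin M → ℕ → ℝ
  enc_nonneg : ∀ j i, 0 ≤ enc j i
  dec : (ℕ → Fin r → ℝ) → Fin M
  meas_dec : Measurable dec
  cost : ∀ j, (∑' i, ENNReal.ofReal (enc j i)) ≤ ENNReal.ofReal E
  err : ∀ (j : Fin M) (μ : Measure (ℕ → Fin r → ℝ)),
      IsPiNat (fun i => simoLaw r (enc j i)) μ → μ {y | dec y ≠ j} ≤ ENNReal.ofReal ε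

section SimoProofAux

open Set
open scoped ENNReal

namespace SimoProofAux

/-! ### Gamma convolution -/

lemma measurable_gammaPDF (a r : ℝ) : Measurable (gammaPDF a r) :=
  ENNReal.measurable_ofReal.comp (measurable_gammaPDFReal a r)

lemma gammaPDF_one_one (y : ℝ) :
    gammaPDF 1 1 y = ENNReal.ofReal (if 0 ≤ y then Real.exp (-y) else 0) := by
  rw [gammaPDF_eq]
  congr 1
  split_ifs with h
  · rw [Real.Gamma_one, Real.one_rpow, sub_self, Real.rpow_zero, one_mul]
    ring_nf
  · rfl

lemma gammaPDF_nat (m : ℕ) (hm : 1 ≤ m) (x : ℝ) (hx : 0 ≤ x) :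
    gammaPDF (m : ℝ) 1 x
      = ENNReal.ofReal (x ^ (m - 1) / (m - 1).factorial * Real.exp (-x)) := by
  rw [gammaPDF_of_nonneg hx]
  congr 1
  have h1 : Real.Gamma (m : ℝ) = (m - 1).factorial := by
    rw [show ((m : ℝ)) = ((m - 1 : ℕ) : ℝ) + 1 by
      push_cast [Nat.cast_sub hm]; ring]
    exact Real.Gamma_nat_eq_factorial (m - 1)
  have h2 : x ^ ((m : ℝ) - 1) = x ^ (m - 1 : ℕ) := by
    rw [show ((m : ℝ) - 1) = ((m - 1 : ℕ) : ℝ) by push_cast [Nat.cast_sub hm]; ring,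
      Real.rpow_natCast]
  rw [h1, h2, Real.one_rpow, one_mul]
  ring_nf

lemma conv_kernel (m : ℕ) (hm : 1 ≤ m) (z : ℝ) :
    ∫⁻ x, gammaPDF (m : ℝ) 1 x * gammaPDF 1 1 (z - x) = gammaPDF ((m : ℝ) + 1) 1 z := by
  rcases lt_or_ge z 0 with hz | hz
  · have h0 : ∀ x : ℝ, gammaPDF (m : ℝ) 1 x * gammaPDF 1 1 (z - x) = 0 := by
      intro x
      rcases lt_or_ge x 0 with hx | hx
      · rw [gammaPDF_of_neg hx, zero_mul]
      · rw [gammaPDF_of_neg (by linarith : z - x < 0), mul_zero]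
    simp only [h0, lintegral_zero]
    rw [gammaPDF_of_neg (by exact_mod_cast hz)]
  · have hker : ∀ x : ℝ, gammaPDF (m : ℝ) 1 x * gammaPDF 1 1 (z - x)
        = (Icc 0 z).indicator
            (fun x => ENNReal.ofReal (x ^ (m - 1) * (Real.exp (-z) / (m - 1).factorial))) x := by
      intro x
      rcases lt_or_ge x 0 with hx | hx
      · rw [gammaPDF_of_neg hx, zero_mul, indicator_of_notMem (by simp [mem_Icc]; intro h; linarith)]
      · rcases le_or_gt x z with hxz | hxz
        · rw [indicator_of_mem (mem_Icc.mpr ⟨hx, hxz⟩), gammaPDF_nat m hm x hx,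
            gammaPDF_one_one, if_pos (by linarith : (0:ℝ) ≤ z - x),
            ← ENNReal.ofReal_mul (by positivity)]
          congr 1
          have hexp : Real.exp (-x) * Real.exp (-(z - x)) = Real.exp (-z) := by
            rw [← Real.exp_add]; congr 1; ring
          rw [← hexp]; ring
        · rw [gammaPDF_one_one, if_neg (by linarith), ENNReal.ofReal_zero, mul_zero,
            indicator_of_notMem (by simp [mem_Icc]; intro h; linarith)]
    simp only [hker]
    rw [lintegral_indicator measurableSet_Icc]
    have hcont : Continuous (fun x : ℝ => x ^ (m - 1) * (Real.exp (-z) / (m - 1).factorial)) := by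
      continuity
    have hint : IntegrableOn (fun x : ℝ => x ^ (m - 1) * (Real.exp (-z) / (m - 1).factorial))
        (Icc 0 z) volume := hcont.integrableOn_Icc
    rw [← ofReal_integral_eq_lintegral_ofReal hint]
    · rw [MeasureTheory.integral_mul_const, MeasureTheory.integral_Icc_eq_integral_Ioc,
        ← intervalIntegral.integral_of_le hz, integral_pow]
      rw [gammaPDF_of_nonneg hz]
      congr 1
      have h1 : Real.Gamma ((m : ℝ) + 1) = m.factorial := Real.Gamma_nat_eq_factorial m
      have h2 : z ^ ((m : ℝ) + 1 - 1) = z ^ m := by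
        rw [add_sub_cancel_right, Real.rpow_natCast]
      rw [h1, h2, Real.one_rpow, one_mul]
      have h3 : m.factorial = m * (m - 1).factorial := by
        conv_lhs => rw [show m = (m - 1) + 1 from (Nat.sub_add_cancel hm).symm]
        rw [Nat.factorial_succ, Nat.sub_add_cancel hm]
      rw [h3, Nat.sub_add_cancel hm]
      have hm0 : (0:ℝ) < m := by exact_mod_cast hm
      have hfac : (0:ℝ) < (m - 1).factorial := by exact_mod_cast (m - 1).factorial_pos
      push_cast
      field_simp
      rw [zero_pow (by omega : m ≠ 0), Nat.cast_sub hm]; push_cast; ring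
    · exact (ae_restrict_iff' measurableSet_Icc).mpr
        (ae_of_all _ fun x hx => mul_nonneg (pow_nonneg hx.1 _) (by positivity))

lemma gamma_conv (m : ℕ) (hm : 1 ≤ m) :
    ((gammaMeasure (m : ℝ) 1).prod (expMeasure 1)).map (fun p : ℝ × ℝ => p.1 + p.2)
      = gammaMeasure ((m : ℝ) + 1) 1 := by
  have h0m : (0:ℝ) < m := by exact_mod_cast hm
  haveI : IsProbabilityMeasure (gammaMeasure (m : ℝ) 1) := isProbabilityMeasure_gammaMeasure h0m one_pos
  haveI : IsProbabilityMeasure (expMeasure 1) := isProbabilityMeasure_expMeasure one_pos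
  have hadd : Measurable (fun p : ℝ × ℝ => p.1 + p.2) := measurable_fst.add measurable_snd
  have hf := measurable_gammaPDF (m : ℝ) 1
  have hg := measurable_gammaPDF 1 1
  refine Measure.ext fun A hA => ?_
  rw [Measure.map_apply hadd hA, Measure.prod_apply (hadd hA)]
  have hstep1 : ∀ x : ℝ, (expMeasure 1) (Prod.mk x ⁻¹' ((fun p : ℝ × ℝ => p.1 + p.2) ⁻¹' A))
      = ∫⁻ y, gammaPDF 1 1 y * A.indicator 1 (x + y) := by
    intro x
    have hBx : MeasurableSet {y : ℝ | x + y ∈ A} := (measurable_const_add x) hA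
    have : Prod.mk x ⁻¹' ((fun p : ℝ × ℝ => p.1 + p.2) ⁻¹' A) = {y : ℝ | x + y ∈ A} := rfl
    rw [this, expMeasure, gammaMeasure, withDensity_apply _ hBx, ← lintegral_indicator hBx]
    congr 1
    funext y
    by_cases hy : x + y ∈ A
    · rw [indicator_of_mem (by exact hy), indicator_of_mem hy]; simp
    · rw [indicator_of_notMem (by exact hy), indicator_of_notMem hy]; simp
  simp only [hstep1]
  rw [gammaMeasure, lintegral_withDensity_eq_lintegral_mul _ hf]
  swap
  · exact Measurable.lintegral_prod_right ((hg.comp measurable_snd).mul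
      ((measurable_one.indicator hA).comp (measurable_fst.add measurable_snd)))
  have hswap : ∫⁻ x, gammaPDF (m:ℝ) 1 x * ∫⁻ y, gammaPDF 1 1 y * A.indicator 1 (x + y)
      = ∫⁻ z, (∫⁻ x, gammaPDF (m:ℝ) 1 x * gammaPDF 1 1 (z - x)) * A.indicator 1 z := by
    calc ∫⁻ x, gammaPDF (m:ℝ) 1 x * ∫⁻ y, gammaPDF 1 1 y * A.indicator 1 (x + y)
        = ∫⁻ x, ∫⁻ y, gammaPDF (m:ℝ) 1 x * (gammaPDF 1 1 y * A.indicator 1 (x + y)) := by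
          congr 1; funext x
          have hmeas : Measurable (fun y : ℝ => gammaPDF 1 1 y * A.indicator 1 (x + y)) := by
            exact hg.mul ((measurable_one.indicator hA).comp (by exact measurable_const_add x))
          exact (lintegral_const_mul _ hmeas).symm
      _ = ∫⁻ x, ∫⁻ z, gammaPDF (m:ℝ) 1 x * (gammaPDF 1 1 (z - x) * A.indicator 1 z) := by
          congr 1; funext x
          have htr := lintegral_add_left_eq_self
            (μ := (volume : Measure ℝ))
            (fun z => gammaPDF (m:ℝ) 1 x * (gammaPDF 1 1 (z - x) * A.indicator 1 z)) x
          rw [← htr]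
          congr 1; funext y
          simp [add_sub_cancel_left]
      _ = ∫⁻ z, ∫⁻ x, gammaPDF (m:ℝ) 1 x * (gammaPDF 1 1 (z - x) * A.indicator 1 z) := by
          refine lintegral_lintegral_swap ?_
          exact ((hf.comp measurable_fst).mul ((hg.comp (measurable_snd.sub measurable_fst)).mul
            ((measurable_one.indicator hA).comp measurable_snd))).aemeasurable
      _ = ∫⁻ z, (∫⁻ x, gammaPDF (m:ℝ) 1 x * gammaPDF 1 1 (z - x)) * A.indicator 1 z := by
          congr 1; funext z
          have hmeas : Measurable (fun x : ℝ => gammaPDF (m:ℝ) 1 x * gammaPDF 1 1 (z - x)) := by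
            exact hf.mul (hg.comp (by exact measurable_const.sub measurable_id))
          rw [← lintegral_mul_const _ hmeas]
          congr 1; funext x; ring
  simp only [Pi.mul_apply]
  rw [hswap]
  simp only [fun z => conv_kernel m hm z]
  rw [gammaMeasure, withDensity_apply _ hA, ← lintegral_indicator hA]
  congr 1
  funext z
  by_cases hz : z ∈ A
  · rw [indicator_of_mem hz, indicator_of_mem hz]; simp
  · rw [indicator_of_notMem hz, indicator_of_notMem hz]; simp

/-! ### Sum of iid exponentials -/

lemma sum_exp (m : ℕ) (hm : 1 ≤ m) :
    (Measure.pi (fun _ : Fin m => expMeasure 1)).map (fun y => ∑ i, y i)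
      = gammaMeasure (m : ℝ) 1 := by
  haveI : IsProbabilityMeasure (expMeasure 1) := isProbabilityMeasure_expMeasure one_pos
  induction m, hm using Nat.le_induction with
  | base =>
    have h1 : (fun y : Fin 1 → ℝ => ∑ i, y i) = fun y => y 0 := by
      funext y; exact Fin.sum_univ_one y
    rw [h1]
    have h2 : (fun y : Fin 1 → ℝ => y 0) = MeasurableEquiv.piUnique (fun _ : Fin 1 => ℝ) := rfl
    rw [h2, (measurePreserving_piUnique (fun _ : Fin 1 => expMeasure 1)).map_eq]
    rw [expMeasure]; norm_num
  | succ m hm ih =>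
    have h0m : (0:ℝ) < m := by exact_mod_cast hm
    haveI : IsProbabilityMeasure (gammaMeasure (m : ℝ) 1) := isProbabilityMeasure_gammaMeasure h0m one_pos
    have hsum : Measurable (fun y : Fin m → ℝ => ∑ i, y i) :=
      Finset.measurable_sum _ fun i _ => measurable_pi_apply i
    have hadd : Measurable (fun p : ℝ × ℝ => p.1 + p.2) := measurable_fst.add measurable_snd
    have mp := measurePreserving_piFinSuccAbove (fun _ : Fin (m + 1) => expMeasure 1) 0
    have hcomp : (fun y : Fin (m + 1) → ℝ => ∑ i, y i)
        = (fun p : ℝ × (Fin m → ℝ) => p.1 + ∑ i, p.2 i)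
          ∘ (MeasurableEquiv.piFinSuccAbove (fun _ : Fin (m + 1) => ℝ) 0) := by
      funext y
      simp only [Function.comp_apply, MeasurableEquiv.piFinSuccAbove_apply]
      exact Fin.sum_univ_succAbove y 0
    have hg : Measurable (fun p : ℝ × (Fin m → ℝ) => p.1 + ∑ i, p.2 i) := by
      exact measurable_fst.add (hsum.comp measurable_snd)
    rw [hcomp, ← Measure.map_map hg
      (MeasurableEquiv.piFinSuccAbove (fun _ : Fin (m+1) => ℝ) 0).measurable, mp.map_eq]
    have hcomp2 : (fun p : ℝ × (Fin m → ℝ) => p.1 + ∑ i, p.2 i)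
        = (fun p : ℝ × ℝ => p.1 + p.2) ∘ (Prod.map (id : ℝ → ℝ) (fun y : Fin m → ℝ => ∑ i, y i)) := rfl
    rw [hcomp2, ← Measure.map_map hadd (measurable_id.prodMap hsum),
      ← Measure.map_prod_map _ _ measurable_id hsum, Measure.map_id, ih]
    have hswap : (expMeasure 1).prod (gammaMeasure (m : ℝ) 1)
        = ((gammaMeasure (m : ℝ) 1).prod (expMeasure 1)).map Prod.swap := by
      rw [Measure.prod_swap]
    rw [hswap, Measure.map_map hadd measurable_swap]
    have : (fun p : ℝ × ℝ => p.1 + p.2) ∘ Prod.swap = fun p : ℝ × ℝ => p.1 + p.2 := by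
      funext p; simp [add_comm]
    rw [this, gamma_conv m hm]
    push_cast
    rfl

/-! ### Product measure manipulations -/

lemma pi_map_pi {ι : Type*} [Fintype ι] {X Z : Type*} [MeasurableSpace X] [MeasurableSpace Z]
    (μs : ι → Measure X) [∀ i, IsProbabilityMeasure (μs i)]
    (f : ι → X → Z) (hf : ∀ i, Measurable (f i)) :
    (Measure.pi μs).map (fun y i => f i (y i)) = Measure.pi (fun i => (μs i).map (f i)) := by
  haveI : ∀ i, IsProbabilityMeasure ((μs i).map (f i)) :=
    fun i => Measure.isProbabilityMeasure_map (hf i).aemeasurable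
  have hΦ : Measurable (fun y : ι → X => fun i => f i (y i)) :=
    measurable_pi_lambda _ fun i => (hf i).comp (measurable_pi_apply i)
  refine (Measure.pi_eq fun s hs => ?_).symm
  rw [Measure.map_apply hΦ (MeasurableSet.univ_pi hs)]
  have hpre : (fun y : ι → X => fun i => f i (y i)) ⁻¹' (pi univ s)
      = pi univ (fun i => f i ⁻¹' s i) := by
    ext y; simp [Set.mem_pi]
  rw [hpre, Measure.pi_pi]
  exact Finset.prod_congr rfl fun i _ => (Measure.map_apply (hf i) (hs i)).symm

lemma pi_map_curry {ι κ : Type*} [Fintype ι] [Fintype κ] {X : Type*} [MeasurableSpace X]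
    (m : ι → κ → Measure X) [∀ i k, IsProbabilityMeasure (m i k)] :
    (Measure.pi (fun p : ι × κ => m p.1 p.2)).map (fun y i k => y (i, k))
      = Measure.pi (fun i => Measure.pi fun k => m i k) := by
  haveI : ∀ i, IsProbabilityMeasure (Measure.pi fun k => m i k) := fun i => inferInstance
  have hΦ : Measurable (fun y : ι × κ → X => fun i k => y (i, k)) :=
    measurable_pi_lambda _ fun i => measurable_pi_lambda _ fun k => measurable_pi_apply (i, k)
  refine (Measure.pi_eq_generateFrom (fun i => generateFrom_pi) (fun i => isPiSystem_pi)
    (fun i => ?_) fun s hs => ?_).symm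
  · exact ⟨fun _ => univ, fun _ => ⟨fun _ => univ, fun _ _ => MeasurableSet.univ, by simp⟩,
      fun _ => by simp [measure_lt_top], iUnion_const _⟩
  · choose t htm hts using hs
    have htmeas : ∀ i k, MeasurableSet (t i k) := fun i k => htm i k (mem_univ k)
    have hpre : (fun y : ι × κ → X => fun i k => y (i, k)) ⁻¹' (pi univ s)
        = pi univ (fun p : ι × κ => t p.1 p.2) := by
      ext y
      simp only [mem_preimage, Set.mem_pi, mem_univ, forall_true_left, Prod.forall]
      constructor
      · intro h i k; have := h i; rw [← hts i] at this; exact this k (mem_univ k)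
      · intro h i; rw [← hts i]; intro k _; exact h i k
    rw [Measure.map_apply hΦ (MeasurableSet.univ_pi fun i => by
      rw [← hts i]; exact MeasurableSet.univ_pi (htmeas i)), hpre, Measure.pi_pi,
      Fintype.prod_prod_type]
    refine Finset.prod_congr rfl fun i _ => ?_
    rw [← hts i, Measure.pi_pi]

lemma prod_range_mul {β : Type*} [CommMonoid β] (f : ℕ → β) (Mn Nn : ℕ) :
    ∏ m ∈ Finset.range (Mn * Nn), f m = ∏ k : Fin Mn, ∏ i : Fin Nn, f (k * Nn + i) := by
  induction Mn with
  | zero => simp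
  | succ Mn ih =>
    rw [Nat.succ_mul, Finset.prod_range_add, ih, Fin.prod_univ_castSucc]
    congr 1
    rw [Finset.prod_range fun i => f (Mn * Nn + i)]
    exact Finset.prod_congr rfl fun i _ => by rw [Fin.val_last]

lemma nat_block_eq {Nn k k' i i' : ℕ} (hi : i < Nn) (hi' : i' < Nn)
    (h : k * Nn + i = k' * Nn + i') : k = k' ∧ i = i' := by
  have hk : k = k' := by
    rcases lt_trichotomy k k' with hlt | heq | hgt
    · exfalso
      have h1 : k * Nn + i < (k + 1) * Nn := by rw [add_one_mul]; omega
      have h2 : (k + 1) * Nn ≤ k' * Nn := Nat.mul_le_mul_right _ hlt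
      omega
    · exact heq
    · exfalso
      have h1 : k' * Nn + i' < (k' + 1) * Nn := by rw [add_one_mul]; omega
      have h2 : (k' + 1) * Nn ≤ k * Nn := Nat.mul_le_mul_right _ hgt
      omega
  subst hk
  exact ⟨rfl, by omega⟩

lemma map_blocks {Y : Type*} [MeasurableSpace Y] (ν : ℕ → Measure Y)
    [∀ i, IsProbabilityMeasure (ν i)] {μ : Measure (ℕ → Y)}
    (hμ : IsProbabilityMeasure μ)
    (hcyl : ∀ (s : Finset ℕ) (A : ℕ → Set Y), (∀ i, MeasurableSet (A i)) →
      μ {y | ∀ i ∈ s, y i ∈ A i} = ∏ i ∈ s, ν i (A i))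
    (Mn Nn : ℕ) :
    μ.map (fun y (k : Fin Mn) (i : Fin Nn) => y ((k : ℕ) * Nn + i))
      = Measure.pi (fun k : Fin Mn => Measure.pi fun i : Fin Nn => ν ((k : ℕ) * Nn + i)) := by
  have hρ : Measurable (fun y : ℕ → Y => fun (k : Fin Mn) (i : Fin Nn) => y ((k : ℕ) * Nn + i)) :=
    measurable_pi_lambda _ fun k => measurable_pi_lambda _ fun i => measurable_pi_apply _
  haveI := hμ
  refine (Measure.pi_eq_generateFrom (fun i => generateFrom_pi) (fun i => isPiSystem_pi)
    (fun i => ?_) fun s hs => ?_).symm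
  · exact ⟨fun _ => univ, fun _ => ⟨fun _ => univ, fun _ _ => MeasurableSet.univ, by simp⟩,
      fun _ => by simp [measure_lt_top], iUnion_const _⟩
  · choose t htm hts using hs
    have htmeas : ∀ k i, MeasurableSet (t k i) := fun k i => htm k i (mem_univ i)
    set A : ℕ → Set Y := fun m =>
      ⋂ (k : Fin Mn) (i : Fin Nn) (_ : (k : ℕ) * Nn + i = m), t k i with hA
    have hAmeas : ∀ m, MeasurableSet (A m) := fun m =>
      MeasurableSet.iInter fun k => MeasurableSet.iInter fun i =>
        MeasurableSet.iInter fun _ => htmeas k i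
    have hAval : ∀ (k : Fin Mn) (i : Fin Nn), A ((k : ℕ) * Nn + i) = t k i := by
      intro k i
      apply Subset.antisymm
      · intro x hx
        exact mem_iInter.mp (mem_iInter.mp (mem_iInter.mp hx k) i) rfl
      · intro x hx
        simp only [hA, mem_iInter]
        intro k' i' hrep
        obtain ⟨hk, hi⟩ := nat_block_eq i'.isLt i.isLt hrep
        have : k' = k := Fin.ext hk
        subst this
        have : i' = i := Fin.ext hi
        subst this
        exact hx
    have hpre : (fun y : ℕ → Y => fun (k : Fin Mn) (i : Fin Nn) => y ((k : ℕ) * Nn + i)) ⁻¹'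
        (pi univ s) = {y | ∀ m ∈ Finset.range (Mn * Nn), y m ∈ A m} := by
      ext y
      simp only [mem_preimage, Set.mem_pi, mem_univ, forall_true_left, mem_setOf_eq]
      constructor
      · intro hy m _
        simp only [hA, mem_iInter]
        intro k i hrep
        subst hrep
        have := hy k
        rw [← hts k] at this
        exact this i (mem_univ i)
      · intro hy k
        rw [← hts k]
        intro i _
        have hlt : (k : ℕ) * Nn + i < Mn * Nn := by
          have h1 : (k : ℕ) * Nn + i < ((k : ℕ) + 1) * Nn := by rw [add_one_mul]; omega
          have h2 : ((k : ℕ) + 1) * Nn ≤ Mn * Nn := Nat.mul_le_mul_right _ k.isLt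
          omega
        have := hy _ (Finset.mem_range.mpr hlt)
        rw [hAval k i] at this
        exact this
    rw [Measure.map_apply hρ (MeasurableSet.univ_pi fun k => by
      rw [← hts k]; exact MeasurableSet.univ_pi (htmeas k)), hpre, hcyl _ A hAmeas,
      prod_range_mul (fun m => ν m (A m)) Mn Nn]
    refine Finset.prod_congr rfl fun k _ => ?_
    rw [← hts k, Measure.pi_pi]
    exact Finset.prod_congr rfl fun i _ => by rw [hAval k i]

lemma pi_eval {ι : Type*} [Fintype ι] [DecidableEq ι] {X : Type*} [MeasurableSpace X]
    (μs : ι → Measure X) [∀ i, IsProbabilityMeasure (μs i)] (k : ι) {B : Set X}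
    (hB : MeasurableSet B) :
    Measure.pi μs ((fun v => v k) ⁻¹' B) = μs k B := by
  rw [Set.eval_preimage, Measure.pi_pi]
  rw [Fintype.prod_eq_single k fun i hi => by rw [Function.update_of_ne hi, measure_univ]]
  rw [Function.update_self]

/-! ### Law of the block sum -/

lemma simoLaw_eq_map (r : ℕ) (x : ℝ) :
    simoLaw r x = (Measure.pi fun _ : Fin r => expMeasure 1).map
      (fun v (a : Fin r) => (1 + x) * v a) := by
  haveI : IsProbabilityMeasure (expMeasure 1) := isProbabilityMeasure_expMeasure one_pos
  rw [simoLaw]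
  exact (pi_map_pi (fun _ : Fin r => expMeasure 1) (fun _ s => (1 + x) * s)
    (fun _ => measurable_id.const_mul _)).symm

lemma simoLaw_prob (r : ℕ) (x : ℝ) : IsProbabilityMeasure (simoLaw r x) := by
  haveI : IsProbabilityMeasure (expMeasure 1) := isProbabilityMeasure_expMeasure one_pos
  rw [simoLaw_eq_map]
  exact Measure.isProbabilityMeasure_map
    (measurable_pi_lambda _ fun a => (measurable_pi_apply a).const_mul _).aemeasurable

lemma block_law (r N : ℕ) (hr : 1 ≤ r) (hN : 1 ≤ N) (x : ℝ) :
    (Measure.pi fun _ : Fin N => simoLaw r x).map (fun w => ∑ i : Fin N, ∑ a : Fin r, w i a)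
      = (gammaMeasure ((r * N : ℕ) : ℝ) 1).map (fun t => (1 + x) * t) := by
  haveI : IsProbabilityMeasure (expMeasure 1) := isProbabilityMeasure_expMeasure one_pos
  haveI : ∀ (i : Fin N), IsProbabilityMeasure (simoLaw r x) := fun _ => simoLaw_prob r x
  have hsum : Measurable (fun w : Fin N → Fin r → ℝ => ∑ i : Fin N, ∑ a : Fin r, w i a) :=
    Finset.measurable_sum _ fun i _ => Finset.measurable_sum _ fun a _ =>
      (measurable_pi_apply a).comp (measurable_pi_apply i)
  have hscale : ∀ i : Fin N, Measurable (fun v : Fin r → ℝ => fun a => (1 + x) * v a) :=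
    fun i => measurable_pi_lambda _ fun a => (measurable_pi_apply a).const_mul _
  have hA := pi_map_pi (fun _ : Fin N => Measure.pi fun _ : Fin r => expMeasure 1)
    (fun _ v => fun a => (1 + x) * v a) hscale
  have hA' : Measure.pi (fun _ : Fin N => simoLaw r x)
      = (Measure.pi fun _ : Fin N => Measure.pi fun _ : Fin r => expMeasure 1).map
          (fun y i => fun a => (1 + x) * y i a) := by
    rw [hA]
    exact congrArg Measure.pi (funext fun i => (simoLaw_eq_map r x))
  have hPhi : Measurable (fun y : Fin N → Fin r → ℝ => fun i a => (1 + x) * y i a) := by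
    exact measurable_pi_lambda _ fun i => (hscale i).comp (measurable_pi_apply i)
  rw [hA', Measure.map_map hsum hPhi]
  have hcomp : ((fun w : Fin N → Fin r → ℝ => ∑ i : Fin N, ∑ a : Fin r, w i a)
      ∘ (fun y : Fin N → Fin r → ℝ => fun i a => (1 + x) * y i a))
      = (fun t : ℝ => (1 + x) * t) ∘ (fun w => ∑ i : Fin N, ∑ a : Fin r, w i a) := by
    funext y
    simp only [Function.comp_apply, Finset.mul_sum]
  have hsc : Measurable (fun t : ℝ => (1 + x) * t) := by exact measurable_id.const_mul _
  rw [hcomp, ← Measure.map_map hsc hsum]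
  congr 1
  have hC := pi_map_curry (ι := Fin N) (κ := Fin r) (fun _ _ => expMeasure 1)
  have hcurry : Measurable (fun y : Fin N × Fin r → ℝ => fun i k => y (i, k)) :=
    measurable_pi_lambda _ fun i => measurable_pi_lambda _ fun k => measurable_pi_apply _
  rw [← hC, Measure.map_map hsum hcurry]
  have hcomp2 : ((fun w : Fin N → Fin r → ℝ => ∑ i : Fin N, ∑ a : Fin r, w i a)
      ∘ (fun y : Fin N × Fin r → ℝ => fun i k => y (i, k)))
      = fun y : Fin N × Fin r → ℝ => ∑ p : Fin N × Fin r, y p := by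
    funext y
    exact (Fintype.sum_prod_type fun p => y p).symm
  rw [hcomp2]
  have mp := measurePreserving_piCongrLeft (fun _ : Fin N × Fin r => expMeasure 1)
    (finProdFinEquiv (m := N) (n := r)).symm
  have hsum2 : Measurable (fun y : Fin N × Fin r → ℝ => ∑ p, y p) :=
    Finset.measurable_sum _ fun p _ => measurable_pi_apply p
  rw [← mp.map_eq, Measure.map_map hsum2 (MeasurableEquiv.piCongrLeft _ _).measurable]
  have hcomp3 : ((fun y : Fin N × Fin r → ℝ => ∑ p, y p)
      ∘ (MeasurableEquiv.piCongrLeft (fun _ : Fin N × Fin r => ℝ)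
          (finProdFinEquiv (m := N) (n := r)).symm))
      = fun y : Fin (N * r) → ℝ => ∑ q, y q := by
    funext y
    simp only [Function.comp_apply]
    rw [MeasurableEquiv.coe_piCongrLeft]
    rw [← Equiv.sum_comp (finProdFinEquiv (m := N) (n := r)).symm]
    refine Finset.sum_congr rfl fun q _ => ?_
    exact Equiv.piCongrLeft_apply_apply (fun _ => ℝ) _ y q
  rw [hcomp3, sum_exp (N * r) (by nlinarith)]
  rw [Nat.mul_comm N r]

/-! ### Tail bound for the max decoder -/

lemma law_event_bound (Mn : ℕ) (j : Fin Mn) (γ : Measure ℝ) [IsProbabilityMeasure γ]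
    (c : ℝ) (Lm : Fin Mn → Measure ℝ) [∀ k, IsProbabilityMeasure (Lm k)]
    (hLj : Lm j = γ.map (fun t => c * t))
    (hLk : ∀ k, k ≠ j → Lm k = γ) :
    (Measure.pi Lm) {t : Fin Mn → ℝ | ∃ k, k ≠ j ∧ t j ≤ t k}
      ≤ ∫⁻ g, min 1 ((Mn - 1 : ℕ) * γ (Ici (c * g))) ∂γ := by
  classical
  set F : ℝ → ℝ≥0∞ := fun a => min 1 ((Mn - 1 : ℕ) * γ (Ici a)) with hF
  have hFanti : Antitone F := fun a b hab =>
    min_le_min le_rfl (mul_le_mul_right (measure_mono (Ici_subset_Ici.mpr hab)) _)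
  have hFmeas : Measurable F := hFanti.measurable
  have hc : Measurable (fun t : ℝ => c * t) := by exact measurable_id.const_mul _
  set S : Set ((∀ _ : {k : Fin Mn // k = j}, ℝ) × (∀ _ : {k : Fin Mn // ¬k = j}, ℝ)) :=
    {p | ∃ k : {k : Fin Mn // ¬k = j}, p.1 ⟨j, rfl⟩ ≤ p.2 k} with hSdef
  have hS : MeasurableSet S := by
    rw [hSdef, setOf_exists]
    refine MeasurableSet.iUnion fun k => ?_
    have h1 : Measurable (fun p : (∀ _ : {k : Fin Mn // k = j}, ℝ)
        × (∀ _ : {k : Fin Mn // ¬k = j}, ℝ) => p.1 ⟨j, rfl⟩) := by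
      exact (measurable_pi_apply _).comp measurable_fst
    have h2 : Measurable (fun p : (∀ _ : {k : Fin Mn // k = j}, ℝ)
        × (∀ _ : {k : Fin Mn // ¬k = j}, ℝ) => p.2 k) := by
      exact (measurable_pi_apply k).comp measurable_snd
    exact measurableSet_le h1 h2
  have mp := measurePreserving_piEquivPiSubtypeProd Lm (fun k : Fin Mn => k = j)
  have hpre : (MeasurableEquiv.piEquivPiSubtypeProd (fun _ : Fin Mn => ℝ) (fun k => k = j)) ⁻¹' S
      = {t : Fin Mn → ℝ | ∃ k, k ≠ j ∧ t j ≤ t k} := by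
    ext t
    simp only [mem_preimage, mem_setOf_eq, hSdef, MeasurableEquiv.piEquivPiSubtypeProd_apply]
    constructor
    · rintro ⟨⟨k, hk⟩, h⟩; exact ⟨k, hk, h⟩
    · rintro ⟨k, hk, h⟩; exact ⟨⟨k, hk⟩, h⟩
  rw [← hpre, mp.measure_preimage hS.nullMeasurableSet]
  haveI : ∀ k : {k : Fin Mn // ¬k = j}, IsProbabilityMeasure (Lm ↑k) := fun k => inferInstance
  haveI : IsProbabilityMeasure
      (Measure.pi fun k : {k : Fin Mn // ¬k = j} => Lm ↑k) := inferInstance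
  have hinner : ∀ u : ∀ _ : {k : Fin Mn // k = j}, ℝ,
      (Measure.pi fun k : {k : Fin Mn // ¬k = j} => Lm ↑k) (Prod.mk u ⁻¹' S)
        ≤ F (u ⟨j, rfl⟩) := by
    intro u
    refine le_min prob_le_one ?_
    have hsplit : Prod.mk u ⁻¹' S
        = ⋃ k : {k : Fin Mn // ¬k = j}, (fun v => v k) ⁻¹' Ici (u ⟨j, rfl⟩) := by
      ext v
      simp only [hSdef, mem_preimage, mem_setOf_eq, mem_iUnion, mem_Ici]
    rw [hsplit]
    refine le_trans (measure_iUnion_le _) (le_of_eq ?_)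
    rw [tsum_fintype]
    have heach : ∀ k : {k : Fin Mn // ¬k = j},
        (Measure.pi fun k : {k : Fin Mn // ¬k = j} => Lm ↑k)
          ((fun v => v k) ⁻¹' Ici (u ⟨j, rfl⟩)) = γ (Ici (u ⟨j, rfl⟩)) := by
      intro k
      rw [pi_eval (fun k : {k : Fin Mn // ¬k = j} => Lm ↑k) k measurableSet_Ici, hLk ↑k k.2]
    calc ∑ k : {k : Fin Mn // ¬k = j}, (Measure.pi fun k : {k : Fin Mn // ¬k = j} => Lm ↑k)
          ((fun v => v k) ⁻¹' Ici (u ⟨j, rfl⟩))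
        = ∑ _k : {k : Fin Mn // ¬k = j}, γ (Ici (u ⟨j, rfl⟩)) :=
          Finset.sum_congr rfl fun k _ => heach k
      _ = (Fintype.card {k : Fin Mn // ¬k = j}) * γ (Ici (u ⟨j, rfl⟩)) := by
          rw [Finset.sum_const, nsmul_eq_mul, Finset.card_univ]
      _ = (Mn - 1 : ℕ) * γ (Ici (u ⟨j, rfl⟩)) := by
          congr 1
          rw [Fintype.card_subtype_compl, Fintype.card_subtype_eq, Fintype.card_fin]
  refine le_trans (le_of_eq (Measure.prod_apply hS)) (le_trans (lintegral_mono hinner)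
    (le_of_eq ?_))
  have hmapev : (Measure.pi fun i : {k : Fin Mn // k = j} => Lm ↑i).map
      (fun u => u (⟨j, rfl⟩ : {k : Fin Mn // k = j})) = Lm j := by
    refine Measure.ext fun B hB => ?_
    rw [Measure.map_apply (measurable_pi_apply (⟨j, rfl⟩ : {k : Fin Mn // k = j})) hB]
    exact pi_eval (fun i : {k : Fin Mn // k = j} => Lm ↑i) ⟨j, rfl⟩ hB
  have e2 : ∫⁻ g, F g ∂(Lm j) = ∫⁻ g, F (c * g) ∂γ := by
    rw [hLj, lintegral_map hFmeas hc]
  refine Eq.trans ?_ e2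
  rw [← hmapev, lintegral_map hFmeas (measurable_pi_apply (⟨j, rfl⟩ : {k : Fin Mn // k = j}))]
  exact congrArg (fun I : Fintype {k : Fin Mn // k = j} =>
    ∫⁻ a : {k : Fin Mn // k = j} → ℝ, F (a ⟨j, rfl⟩)
      ∂(@Measure.pi _ _ I (fun _ => Real.measurableSpace) fun i => Lm ↑i))
    (Subsingleton.elim _ _)

/-! ### Conversion of the RCU integral -/

lemma lintegral_rcu_eq (Mn : ℕ) (hMn : 1 ≤ Mn) (γ : Measure ℝ) [IsProbabilityMeasure γ]
    (c : ℝ) (hc : 0 ≤ c) :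
    ∫⁻ g, min 1 ((Mn - 1 : ℕ) * γ (Ici (c * g))) ∂γ
      = ENNReal.ofReal (∫ g, min 1 (((Mn : ℝ) - 1) * (γ (Ici (c * g))).toReal) ∂γ) := by
  set f : ℝ → ℝ := fun g => min 1 (((Mn : ℝ) - 1) * (γ (Ici (c * g))).toReal) with hf
  have hM1 : (0:ℝ) ≤ (Mn : ℝ) - 1 := by
    have : (1:ℝ) ≤ Mn := by exact_mod_cast hMn
    linarith
  have hq_anti : Antitone fun g : ℝ => (γ (Ici (c * g))).toReal := fun a b hab =>
    ENNReal.toReal_mono (measure_ne_top _ _)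
      (measure_mono (Ici_subset_Ici.mpr (mul_le_mul_of_nonneg_left hab hc)))
  have hf_anti : Antitone f := fun a b hab =>
    min_le_min le_rfl (mul_le_mul_of_nonneg_left (hq_anti hab) hM1)
  have hf_meas : Measurable f := hf_anti.measurable
  have hf_nonneg : ∀ g, 0 ≤ f g := fun g =>
    le_min zero_le_one (mul_nonneg hM1 ENNReal.toReal_nonneg)
  have hint : Integrable f γ := by
    refine Integrable.mono' (integrable_const (1:ℝ)) hf_meas.aestronglyMeasurable
      (ae_of_all _ fun g => ?_)
    rw [Real.norm_eq_abs, abs_of_nonneg (hf_nonneg g)]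
    exact min_le_left _ _
  have hpt : ∀ g, ENNReal.ofReal (f g) = min 1 ((Mn - 1 : ℕ) * γ (Ici (c * g))) := by
    intro g
    have hmin : ∀ a b : ℝ, 0 ≤ a →
        ENNReal.ofReal (min a b) = min (ENNReal.ofReal a) (ENNReal.ofReal b) := by
      intro a b _
      rcases le_total a b with h | h
      · rw [min_eq_left h, min_eq_left (ENNReal.ofReal_le_ofReal h)]
      · rw [min_eq_right h, min_eq_right (ENNReal.ofReal_le_ofReal h)]
    rw [hf]
    rw [hmin _ _ zero_le_one, ENNReal.ofReal_one, ENNReal.ofReal_mul hM1,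
      ENNReal.ofReal_toReal (measure_ne_top _ _)]
    congr 2
    rw [show ((Mn : ℝ) - 1) = ((Mn - 1 : ℕ) : ℝ) by push_cast [Nat.cast_sub hMn]; ring,
      ENNReal.ofReal_natCast]
  calc ∫⁻ g, min 1 ((Mn - 1 : ℕ) * γ (Ici (c * g))) ∂γ
      = ∫⁻ g, ENNReal.ofReal (f g) ∂γ := lintegral_congr fun g => (hpt g).symm
    _ = ENNReal.ofReal (∫ g, f g ∂γ) :=
        (ofReal_integral_eq_lintegral_ofReal hint (ae_of_all _ hf_nonneg)).symm

end SimoProofAux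

end SimoProofAux

open SimoProofAux Set in
theorem simo_achievability_rcu
    (r : ℕ) (hr : 0 < r) (E : ℝ) (hE : 0 < E)
    (N : ℕ) (hN : 1 ≤ N) (M : ℕ) (hM : 1 ≤ M) :
    Nonempty (SimoCode r E M
      (∫ g, min 1 (((M : ℝ) - 1) *
          (gammaMeasure ((r * N : ℕ) : ℝ) 1 (Set.Ici ((1 + E / N) * g))).toReal)
        ∂(gammaMeasure ((r * N : ℕ) : ℝ) 1))) := by
  classical
  have hrN : (0:ℝ) < ((r * N : ℕ) : ℝ) := by
    have : 1 ≤ r * N := Nat.one_le_iff_ne_zero.mpr (by positivity)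
    exact_mod_cast Nat.lt_of_lt_of_le Nat.zero_lt_one this
  haveI hγprob : IsProbabilityMeasure (gammaMeasure ((r * N : ℕ) : ℝ) 1) :=
    isProbabilityMeasure_gammaMeasure hrN one_pos
  have hNR : (0:ℝ) < (N : ℝ) := by exact_mod_cast hN
  haveI : Nonempty (Fin M) := ⟨⟨0, hM⟩⟩
  -- the encoder: codeword j puts E/N on each symbol of the j-th length-N block
  set enc : Fin M → ℕ → ℝ :=
    fun j i => if (j : ℕ) * N ≤ i ∧ i < (j : ℕ) * N + N then E / N else 0 with henc
  have henc_nonneg : ∀ j i, 0 ≤ enc j i := by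
    intro j i
    simp only [henc]
    split_ifs
    · positivity
    · exact le_rfl
  have henc_block : ∀ (j k : Fin M) (i : Fin N),
      enc j ((k : ℕ) * N + i) = if k = j then E / N else 0 := by
    intro j k i
    simp only [henc]
    by_cases hkj : k = j
    · subst hkj
      rw [if_pos rfl, if_pos ⟨Nat.le_add_right _ _, by omega⟩]
    · rw [if_neg hkj, if_neg]
      rintro ⟨h1, h2⟩
      apply hkj
      refine Fin.ext ?_
      rcases lt_trichotomy (k : ℕ) (j : ℕ) with hlt | heq | hgt
      · exfalso
        have : ((k : ℕ) + 1) * N ≤ (j : ℕ) * N := Nat.mul_le_mul_right _ hlt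
        rw [add_one_mul] at this
        omega
      · exact heq
      · exfalso
        have : ((j : ℕ) + 1) * N ≤ (k : ℕ) * N := Nat.mul_le_mul_right _ hgt
        rw [add_one_mul] at this
        omega
  -- the statistics and the decoder
  set T : Fin M → (ℕ → Fin r → ℝ) → ℝ :=
    fun k y => ∑ i : Fin N, ∑ a : Fin r, y ((k : ℕ) * N + i) a with hTdef
  have hTmeas : ∀ k, Measurable (T k) := fun k =>
    Finset.measurable_sum _ fun i _ => Finset.measurable_sum _ fun a _ =>
      (measurable_pi_apply a).comp (measurable_pi_apply _)
  have hSne : ∀ y, (Finset.univ.filter fun k : Fin M => ∀ l, T l y ≤ T k y).Nonempty := by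
    intro y
    obtain ⟨k, hk⟩ := Finite.exists_max fun k : Fin M => T k y
    exact ⟨k, Finset.mem_filter.mpr ⟨Finset.mem_univ _, hk⟩⟩
  set dec : (ℕ → Fin r → ℝ) → Fin M :=
    fun y => (Finset.univ.filter fun k : Fin M => ∀ l, T l y ≤ T k y).min' (hSne y) with hdecdef
  have hdec_max : ∀ y, ∀ l, T l y ≤ T (dec y) y := by
    intro y
    have := Finset.min'_mem _ (hSne y)
    rw [Finset.mem_filter] at this
    exact this.2
  have hdec_pre : ∀ k : Fin M, dec ⁻¹' {k} =
      (⋂ l, {y | T l y ≤ T k y}) ∩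
        ⋂ (k' : Fin M), ⋂ (_ : k' < k), (⋂ l, {y | T l y ≤ T k' y})ᶜ := by
    intro k
    ext y
    simp only [mem_preimage, mem_singleton_iff, mem_inter_iff, mem_iInter, mem_setOf_eq,
      mem_compl_iff]
    constructor
    · intro h
      refine ⟨fun l => h ▸ hdec_max y l, fun k' hk' hall => ?_⟩
      have hmem : k' ∈ Finset.univ.filter fun k : Fin M => ∀ l, T l y ≤ T k y :=
        Finset.mem_filter.mpr ⟨Finset.mem_univ _, fun l => by
          simpa using hall l⟩
      have hle : dec y ≤ k' := Finset.min'_le _ _ hmem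
      exact absurd hk' (not_lt.mpr (h ▸ hle))
    · rintro ⟨h1, h2⟩
      have hkmem : k ∈ Finset.univ.filter fun k : Fin M => ∀ l, T l y ≤ T k y :=
        Finset.mem_filter.mpr ⟨Finset.mem_univ _, h1⟩
      refine le_antisymm (Finset.min'_le _ _ hkmem) ?_
      refine Finset.le_min' _ _ _ fun l hl => ?_
      by_contra hlt
      push_neg at hlt
      exact h2 l hlt fun l' => by simpa using (Finset.mem_filter.mp hl).2 l'
  have hdecmeas : Measurable dec := by
    refine measurable_to_countable' fun k => ?_
    rw [hdec_pre k]
    refine MeasurableSet.inter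
      (MeasurableSet.iInter fun l => measurableSet_le (hTmeas l) (hTmeas k))
      (MeasurableSet.iInter fun k' => MeasurableSet.iInter fun _ =>
        (MeasurableSet.iInter fun l => measurableSet_le (hTmeas l) (hTmeas k')).compl)
  refine ⟨{ enc := enc, enc_nonneg := henc_nonneg, dec := dec, meas_dec := hdecmeas,
            cost := ?_, err := ?_ }⟩
  · -- cost
    intro j
    have hout : ∀ i ∉ Finset.Ico ((j : ℕ) * N) ((j : ℕ) * N + N),
        ENNReal.ofReal (enc j i) = 0 := by
      intro i hi
      rw [Finset.mem_Ico] at hi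
      simp only [henc]
      rw [if_neg hi, ENNReal.ofReal_zero]
    rw [tsum_eq_sum hout]
    have hin : ∀ i ∈ Finset.Ico ((j : ℕ) * N) ((j : ℕ) * N + N),
        ENNReal.ofReal (enc j i) = ENNReal.ofReal (E / N) := by
      intro i hi
      rw [Finset.mem_Ico] at hi
      simp only [henc]
      rw [if_pos hi]
    rw [Finset.sum_congr rfl hin, Finset.sum_const, Nat.card_Ico, nsmul_eq_mul]
    rw [show (j : ℕ) * N + N - (j : ℕ) * N = N by omega]
    rw [← ENNReal.ofReal_natCast N, ← ENNReal.ofReal_mul (by positivity)]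
    rw [show (N : ℝ) * (E / N) = E by field_simp]
  · -- error bound
    intro j μ hμ
    haveI := hμ.1
    haveI : ∀ i, IsProbabilityMeasure (simoLaw r (enc j i)) := fun i => simoLaw_prob _ _
    set γ := gammaMeasure ((r * N : ℕ) : ℝ) 1 with hγdef
    set c' : ℝ := 1 + E / N with hc'def
    set σb : (Fin N → Fin r → ℝ) → ℝ := fun w => ∑ i : Fin N, ∑ a : Fin r, w i a with hσdef
    have hσmeas : Measurable σb :=
      Finset.measurable_sum _ fun i _ => Finset.measurable_sum _ fun a _ =>
        (measurable_pi_apply a).comp (measurable_pi_apply i)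
    have hρ : Measurable (fun y : ℕ → Fin r → ℝ =>
        fun (k : Fin M) (i : Fin N) => y ((k : ℕ) * N + i)) :=
      measurable_pi_lambda _ fun k => measurable_pi_lambda _ fun i => measurable_pi_apply _
    have hΘ : Measurable (fun y : ℕ → Fin r → ℝ => fun k : Fin M => T k y) :=
      measurable_pi_lambda _ fun k => hTmeas k
    have hblocks : μ.map (fun y (k : Fin M) (i : Fin N) => y ((k : ℕ) * N + i))
        = Measure.pi (fun k : Fin M =>
            Measure.pi fun i : Fin N => simoLaw r (enc j ((k : ℕ) * N + i))) :=
      map_blocks (fun i => simoLaw r (enc j i)) hμ.1 hμ.2 M N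
    set Q : Fin M → Measure (Fin N → Fin r → ℝ) := fun k =>
      Measure.pi fun i : Fin N => simoLaw r (enc j ((k : ℕ) * N + i)) with hQdef
    set Lm : Fin M → Measure ℝ := fun k =>
      γ.map (fun t => (1 + (if k = j then E / N else 0)) * t) with hLmdef
    haveI : ∀ k, IsProbabilityMeasure (Lm k) := fun k =>
      Measure.isProbabilityMeasure_map (measurable_id.const_mul _).aemeasurable
    have hQσ : ∀ k : Fin M, (Q k).map σb = Lm k := by
      intro k
      show (Measure.pi fun i : Fin N => simoLaw r (enc j ((k : ℕ) * N + i))).map σb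
          = γ.map (fun t => (1 + (if k = j then E / N else 0)) * t)
      have hcongr : (fun i : Fin N => simoLaw r (enc j ((k : ℕ) * N + i)))
          = fun _ : Fin N => simoLaw r (if k = j then E / N else 0) :=
        funext fun i => by rw [henc_block j k i]
      rw [hcongr, hγdef]
      exact block_law r N hr hN _
    have hτ : Measurable (fun w : Fin M → Fin N → Fin r → ℝ => fun k => σb (w k)) := by
      exact measurable_pi_lambda _ fun k => hσmeas.comp (measurable_pi_apply k)
    have hlaw : μ.map (fun y => fun k : Fin M => T k y) = Measure.pi Lm := by
      have h1 : (fun y : ℕ → Fin r → ℝ => fun k : Fin M => T k y)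
          = (fun w : Fin M → Fin N → Fin r → ℝ => fun k => σb (w k))
            ∘ (fun y (k : Fin M) (i : Fin N) => y ((k : ℕ) * N + i)) := rfl
      rw [h1, ← Measure.map_map hτ hρ, hblocks]
      have h2 : (Measure.pi Q).map (fun w : Fin M → Fin N → Fin r → ℝ => fun k => σb (w k))
          = Measure.pi (fun k => (Q k).map σb) :=
        pi_map_pi Q (fun _ => σb) (fun _ => hσmeas)
      rw [h2]
      exact congrArg Measure.pi (funext hQσ)
    set V : Set (Fin M → ℝ) := {t | ∃ k, k ≠ j ∧ t j ≤ t k} with hVdef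
    have hV : MeasurableSet V := by
      rw [hVdef, setOf_exists]
      refine MeasurableSet.iUnion fun k => ?_
      rw [setOf_and]
      exact MeasurableSet.inter (MeasurableSet.const _)
        (measurableSet_le (measurable_pi_apply j) (measurable_pi_apply k))
    have hsub : {y | dec y ≠ j} ⊆ (fun y => fun k : Fin M => T k y) ⁻¹' V := by
      intro y hy
      exact ⟨dec y, hy, hdec_max y j⟩
    have hLj : Lm j = γ.map (fun t => c' * t) := by
      have h0 : (fun t : ℝ => (1 + if j = j then E / N else 0) * t) = fun t : ℝ => c' * t := by
        funext t; rw [if_pos rfl, hc'def]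
      show γ.map (fun t : ℝ => (1 + if j = j then E / N else 0) * t) = γ.map (fun t => c' * t)
      rw [h0]
    have hLk : ∀ k, k ≠ j → Lm k = γ := by
      intro k hk
      have h0 : (fun t : ℝ => (1 + if k = j then E / N else 0) * t) = fun t : ℝ => t := by
        funext t; rw [if_neg hk]; ring
      show γ.map (fun t : ℝ => (1 + if k = j then E / N else 0) * t) = γ
      rw [h0]
      exact Measure.map_id
    calc μ {y | dec y ≠ j}
        ≤ μ ((fun y => fun k : Fin M => T k y) ⁻¹' V) := measure_mono hsub
      _ = (μ.map (fun y => fun k : Fin M => T k y)) V := (Measure.map_apply hΘ hV).symm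
      _ = (Measure.pi Lm) V := by rw [hlaw]
      _ ≤ ∫⁻ g, min 1 ((M - 1 : ℕ) * γ (Ici (c' * g))) ∂γ :=
          law_event_bound M j γ c' Lm hLj hLk
      _ = ENNReal.ofReal (∫ g, min 1 (((M : ℝ) - 1) * (γ (Ici (c' * g))).toReal) ∂γ) :=
          lintegral_rcu_eq M hM γ c' (by rw [hc'def]; positivity)
end

section
/- For every integer k ≥ 1 and every t ∈ (0,1]: (1/(k−1)!) · ∫₀^{t·k} u^{k−1} e^{−u} du ≥ (1/k!) · ∫₀^{t·(k+1)} u^{k} e^{−u} du. Equivalently, if S₁, S₂, … are i.i.d. exponential of mean 1, then P[ Σ_{i=1}^{k} S_i ≤ t·k ] ≥ P[ Σ_{i=1}^{k+1} S_i ≤ t·(k+1) ]. -/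
open intervalIntegral


lemma exp_pade {x : ℝ} (h0 : 0 ≤ x) (h1 : x ≤ 1) : Real.exp x ≤ (2 + x) / (2 - x) := by
  have h := Real.exp_bound' h0 h1 (n := 3) (by norm_num)
  have he : (∑ m ∈ Finset.range 3, x ^ m / m.factorial) + x ^ 3 * (3 + 1) / ((3:ℕ).factorial * 3)
      = 1 + x + x ^ 2 / 2 + 2 * x ^ 3 / 9 := by
    simp [Finset.sum_range_succ, Nat.factorial]
    ring
  norm_num at h he
  rw [he] at h
  have h2 : (0:ℝ) < 2 - x := by linarith
  rw [le_div_iff₀ h2]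
  nlinarith [pow_nonneg h0 3, pow_nonneg h0 4]

lemma se_mono {s s' : ℝ} (h0 : 0 ≤ s) (hss : s ≤ s') (h1 : s' ≤ 1) :
    s * Real.exp (-s) ≤ s' * Real.exp (-s') := by
  have he : (s - s') + 1 ≤ Real.exp (s - s') := Real.add_one_le_exp _
  have h3 : s ≤ s' * Real.exp (s - s') := by nlinarith
  calc s * Real.exp (-s) ≤ (s' * Real.exp (s - s')) * Real.exp (-s) :=
        mul_le_mul_of_nonneg_right h3 (Real.exp_pos _).le
    _ = s' * Real.exp (-s') := by rw [mul_assoc, ← Real.exp_add]; ring_nf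


lemma integrable_poly_exp (n : ℕ) (c a b : ℝ) :
    IntervalIntegrable (fun u : ℝ => u ^ n * Real.exp (c * u)) MeasureTheory.volume a b := by
  apply Continuous.intervalIntegrable
  fun_prop

lemma ibp (n : ℕ) (x : ℝ) :
    ∫ u in (0:ℝ)..x, u ^ (n + 1) * Real.exp (-u)
      = (n + 1) * (∫ u in (0:ℝ)..x, u ^ n * Real.exp (-u)) - x ^ (n + 1) * Real.exp (-x) := by
  have hder : ∀ u ∈ Set.uIcc (0:ℝ) x,
      HasDerivAt (fun u : ℝ => -(u ^ (n + 1) * Real.exp (-u)))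
        (u ^ (n + 1) * Real.exp (-u) - (n + 1) * (u ^ n * Real.exp (-u))) u := by
    intro u _
    have h1 : HasDerivAt (fun u : ℝ => u ^ (n + 1)) ((n + 1 : ℝ) * u ^ n) u := by
      simpa using hasDerivAt_pow (n + 1) u
    have h2 : HasDerivAt (fun u : ℝ => Real.exp (-u)) (-Real.exp (-u)) u := by
      exact ((Real.hasDerivAt_exp (-u)).comp u (hasDerivAt_neg u)).congr_deriv (by simp)
    have := (h1.mul h2).neg
    exact this.congr_deriv (by ring)
  have hint : IntervalIntegrable
      (fun u : ℝ => u ^ (n + 1) * Real.exp (-u) - (n + 1) * (u ^ n * Real.exp (-u)))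
      MeasureTheory.volume 0 x := by
    apply Continuous.intervalIntegrable; fun_prop
  have h := intervalIntegral.integral_eq_sub_of_hasDerivAt hder hint
  have hsplit : ∫ u in (0:ℝ)..x, (u ^ (n + 1) * Real.exp (-u) - (n + 1) * (u ^ n * Real.exp (-u)))
      = (∫ u in (0:ℝ)..x, u ^ (n + 1) * Real.exp (-u))
        - (n + 1) * ∫ u in (0:ℝ)..x, u ^ n * Real.exp (-u) := by
    rw [intervalIntegral.integral_sub, intervalIntegral.integral_const_mul]
    · simpa using integrable_poly_exp (n+1) (-1) 0 x
    · apply Continuous.intervalIntegrable; fun_prop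
  rw [hsplit] at h
  simp at h
  linarith

-- pointwise tangent bound from log-concavity
lemma pointwise_bound (n : ℕ) {u : ℝ} (hu : 0 ≤ u) :
    u ^ n * Real.exp (-u)
      ≤ ((n:ℝ) + 2) ^ n * Real.exp (-((n:ℝ) + 2))
        * Real.exp (2 * (((n:ℝ) + 2) - u) / ((n:ℝ) + 2)) := by
  have hc : (0:ℝ) < (n:ℝ) + 2 := by positivity
  have h1 : u / ((n:ℝ) + 2) ≤ Real.exp ((u - ((n:ℝ) + 2)) / ((n:ℝ) + 2)) := by
    have := Real.add_one_le_exp ((u - ((n:ℝ) + 2)) / ((n:ℝ) + 2))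
    have heq : (u - ((n:ℝ) + 2)) / ((n:ℝ) + 2) + 1 = u / ((n:ℝ) + 2) := by
      field_simp
      ring
    linarith [heq ▸ this]
  have h2 : (u / ((n:ℝ) + 2)) ^ n ≤ Real.exp ((u - ((n:ℝ) + 2)) / ((n:ℝ) + 2)) ^ n :=
    pow_le_pow_left₀ (by positivity) h1 n
  have h3 : Real.exp ((u - ((n:ℝ) + 2)) / ((n:ℝ) + 2)) ^ n
      = Real.exp ((n:ℝ) * ((u - ((n:ℝ) + 2)) / ((n:ℝ) + 2))) := by
    rw [← Real.exp_nat_mul]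
  have h4 : u ^ n ≤ ((n:ℝ) + 2) ^ n * Real.exp ((n:ℝ) * ((u - ((n:ℝ) + 2)) / ((n:ℝ) + 2))) := by
    rw [h3] at h2
    have := mul_le_mul_of_nonneg_left h2 (le_of_lt (pow_pos hc n))
    calc u ^ n = ((n:ℝ) + 2) ^ n * (u / ((n:ℝ) + 2)) ^ n := by
          rw [div_pow]; field_simp
      _ ≤ _ := this
  calc u ^ n * Real.exp (-u)
      ≤ ((n:ℝ) + 2) ^ n * Real.exp ((n:ℝ) * ((u - ((n:ℝ) + 2)) / ((n:ℝ) + 2))) * Real.exp (-u) := by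
        apply mul_le_mul_of_nonneg_right h4 (Real.exp_pos _).le
    _ = ((n:ℝ) + 2) ^ n * Real.exp (-((n:ℝ) + 2)) * Real.exp (2 * (((n:ℝ) + 2) - u) / ((n:ℝ) + 2)) := by
        rw [mul_assoc, mul_assoc, ← Real.exp_add, ← Real.exp_add]
        congr 1
        field_simp
        ring


lemma exp_integral_eval (n : ℕ) :
    ∫ u in ((n:ℝ) + 1)..((n:ℝ) + 2), Real.exp (2 * (((n:ℝ) + 2) - u) / ((n:ℝ) + 2))
      = (((n:ℝ) + 2) / 2) * (Real.exp (2 / ((n:ℝ) + 2)) - 1) := by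
  have hc : ((n:ℝ) + 2) ≠ 0 := by positivity
  have hder : ∀ u ∈ Set.uIcc ((n:ℝ) + 1) ((n:ℝ) + 2),
      HasDerivAt (fun u : ℝ => -(((n:ℝ) + 2) / 2) * Real.exp (2 * (((n:ℝ) + 2) - u) / ((n:ℝ) + 2)))
        (Real.exp (2 * (((n:ℝ) + 2) - u) / ((n:ℝ) + 2))) u := by
    intro u _
    have hg : HasDerivAt (fun u : ℝ => 2 * (((n:ℝ) + 2) - u) / ((n:ℝ) + 2))
        (-2 / ((n:ℝ) + 2)) u := by
      have h0 : HasDerivAt (fun u : ℝ => ((n:ℝ) + 2) - u) (-1) u := by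
        simpa using (hasDerivAt_id u).const_sub ((n:ℝ) + 2)
      have := (h0.const_mul 2).div_const ((n:ℝ) + 2)
      exact this.congr_deriv (by ring)
    have := (hg.exp).const_mul (-(((n:ℝ) + 2) / 2))
    exact this.congr_deriv (by field_simp)
  rw [intervalIntegral.integral_eq_sub_of_hasDerivAt hder
    (by apply Continuous.intervalIntegrable; fun_prop)]
  have e1 : 2 * (((n:ℝ) + 2) - ((n:ℝ) + 2)) / ((n:ℝ) + 2) = 0 := by field_simp; ring
  have e2 : 2 * (((n:ℝ) + 2) - ((n:ℝ) + 1)) / ((n:ℝ) + 2) = 2 / ((n:ℝ) + 2) := by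
    rw [show ((n:ℝ) + 2) - ((n:ℝ) + 1) = 1 by ring]; ring
  rw [e1, e2, Real.exp_zero]
  ring

lemma endpoint (n : ℕ) :
    (1 / (n.factorial : ℝ)) * ∫ u in (0:ℝ)..((n:ℝ) + 1), u ^ n * Real.exp (-u) ≥
      (1 / ((n + 1).factorial : ℝ)) * ∫ u in (0:ℝ)..((n:ℝ) + 2), u ^ (n + 1) * Real.exp (-u) := by
  have hn1 : (0:ℝ) < (n:ℝ) + 1 := by positivity
  have hn2 : (0:ℝ) < (n:ℝ) + 2 := by positivity
  set X := ∫ u in (0:ℝ)..((n:ℝ) + 1), u ^ n * Real.exp (-u) with hX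
  set I := ∫ u in ((n:ℝ) + 1)..((n:ℝ) + 2), u ^ n * Real.exp (-u) with hIdef
  set E := ((n:ℝ) + 2) ^ (n + 1) * Real.exp (-((n:ℝ) + 2)) with hE
  -- split the big integral
  have hsplit : ∫ u in (0:ℝ)..((n:ℝ) + 2), u ^ n * Real.exp (-u) = X + I := by
    rw [hX, hIdef]
    exact (intervalIntegral.integral_add_adjacent_intervals
      (by simpa using integrable_poly_exp n (-1) 0 ((n:ℝ) + 1))
      (by simpa using integrable_poly_exp n (-1) ((n:ℝ) + 1) ((n:ℝ) + 2))).symm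
  -- key bound on I
  have hx : Real.exp (2 / ((n:ℝ) + 2)) - 1 ≤ 2 / ((n:ℝ) + 1) := by
    have hp := exp_pade (x := 2 / ((n:ℝ) + 2)) (by positivity)
      (by rw [div_le_one hn2]; linarith)
    have heq : (2 + 2 / ((n:ℝ) + 2)) / (2 - 2 / ((n:ℝ) + 2)) = 1 + 2 / ((n:ℝ) + 1) := by
      rw [div_eq_iff (by rw [sub_ne_zero]; intro h; field_simp at h; linarith)]
      field_simp
      ring
    rw [heq] at hp
    linarith
  have hI : ((n:ℝ) + 1) * I ≤ E := by
    have step1 : I ≤ ∫ u in ((n:ℝ) + 1)..((n:ℝ) + 2),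
        ((n:ℝ) + 2) ^ n * Real.exp (-((n:ℝ) + 2))
          * Real.exp (2 * (((n:ℝ) + 2) - u) / ((n:ℝ) + 2)) := by
      apply intervalIntegral.integral_mono_on (by linarith)
      · simpa using integrable_poly_exp n (-1) ((n:ℝ) + 1) ((n:ℝ) + 2)
      · apply Continuous.intervalIntegrable; fun_prop
      · intro u hu
        exact pointwise_bound n (by linarith [hu.1])
    have step2 : ∫ u in ((n:ℝ) + 1)..((n:ℝ) + 2),
        ((n:ℝ) + 2) ^ n * Real.exp (-((n:ℝ) + 2))
          * Real.exp (2 * (((n:ℝ) + 2) - u) / ((n:ℝ) + 2))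
        = ((n:ℝ) + 2) ^ n * Real.exp (-((n:ℝ) + 2))
          * ((((n:ℝ) + 2) / 2) * (Real.exp (2 / ((n:ℝ) + 2)) - 1)) := by
      rw [intervalIntegral.integral_const_mul, exp_integral_eval]
    have hnn : (0:ℝ) ≤ ((n:ℝ) + 2) ^ n * Real.exp (-((n:ℝ) + 2)) := by positivity
    have step3 : ((n:ℝ) + 2) ^ n * Real.exp (-((n:ℝ) + 2))
          * ((((n:ℝ) + 2) / 2) * (Real.exp (2 / ((n:ℝ) + 2)) - 1))
        ≤ E / ((n:ℝ) + 1) := by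
      rw [hE]
      have h1 : (((n:ℝ) + 2) / 2) * (Real.exp (2 / ((n:ℝ) + 2)) - 1)
          ≤ (((n:ℝ) + 2) / 2) * (2 / ((n:ℝ) + 1)) :=
        mul_le_mul_of_nonneg_left hx (by positivity)
      calc ((n:ℝ) + 2) ^ n * Real.exp (-((n:ℝ) + 2))
            * ((((n:ℝ) + 2) / 2) * (Real.exp (2 / ((n:ℝ) + 2)) - 1))
          ≤ ((n:ℝ) + 2) ^ n * Real.exp (-((n:ℝ) + 2)) * ((((n:ℝ) + 2) / 2) * (2 / ((n:ℝ) + 1))) :=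
            mul_le_mul_of_nonneg_left h1 hnn
        _ = ((n:ℝ) + 2) ^ (n + 1) * Real.exp (-((n:ℝ) + 2)) / ((n:ℝ) + 1) := by
            rw [pow_succ]; field_simp
    have := le_trans step1 (le_of_eq step2)
    have h2 : I ≤ E / ((n:ℝ) + 1) := le_trans this step3
    rw [mul_comm]
    exact (le_div_iff₀ hn1).mp h2
  -- assemble
  have hcast : (((n:ℕ) + 1).factorial : ℝ) = ((n:ℝ) + 1) * (n.factorial : ℝ) := by
    rw [Nat.factorial_succ]; push_cast; ring
  have hF : (0:ℝ) < (n.factorial : ℝ) := by exact_mod_cast Nat.factorial_pos n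
  rw [ge_iff_le, ibp, hsplit, hcast]
  rw [div_mul_eq_mul_div, div_mul_eq_mul_div, div_le_div_iff₀ (by positivity) hF]
  push_cast
  nlinarith [hI, hF]


lemma bridge (m : ℕ) (t : ℝ) :
    (1 / (m.factorial : ℝ)) * ∫ u in (0:ℝ)..(t * ((m:ℝ) + 1)), u ^ m * Real.exp (-u)
      = (((m:ℝ) + 1) ^ (m + 1) / (m.factorial : ℝ)) *
          ∫ s in (0:ℝ)..t, s ^ m * Real.exp (-(((m:ℝ) + 1) * s)) := by
  have h2 := intervalIntegral.smul_integral_comp_mul_left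
    (f := fun u => u ^ m * Real.exp (-u)) (a := (0:ℝ)) (b := t) (((m:ℝ) + 1))
  simp only [mul_zero, smul_eq_mul] at h2
  rw [show t * ((m:ℝ) + 1) = ((m:ℝ) + 1) * t by ring, ← h2]
  have h3 : ∀ s : ℝ, (((m:ℝ) + 1) * s) ^ m * Real.exp (-(((m:ℝ) + 1) * s))
      = ((m:ℝ) + 1) ^ m * (s ^ m * Real.exp (-(((m:ℝ) + 1) * s))) := by
    intro s; rw [mul_pow]; ring
  simp only [h3]
  rw [intervalIntegral.integral_const_mul, pow_succ]
  ring

lemma main_rescaled (n : ℕ) {t : ℝ} (ht0 : 0 < t) (ht1 : t ≤ 1) :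
    (((n:ℝ) + 1) ^ (n + 1) / (n.factorial : ℝ)) *
        (∫ s in (0:ℝ)..t, s ^ n * Real.exp (-(((n:ℝ) + 1) * s)))
      ≥ (((n:ℝ) + 2) ^ (n + 2) / ((n + 1).factorial : ℝ)) *
        ∫ s in (0:ℝ)..t, s ^ (n + 1) * Real.exp (-(((n:ℝ) + 2) * s)) := by
  set c1 : ℝ := ((n:ℝ) + 1) ^ (n + 1) / (n.factorial : ℝ) with hc1
  set c2 : ℝ := ((n:ℝ) + 2) ^ (n + 2) / ((n + 1).factorial : ℝ) with hc2
  set d : ℝ → ℝ := fun s =>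
    c1 * (s ^ n * Real.exp (-(((n:ℝ) + 1) * s)))
      - c2 * (s ^ (n + 1) * Real.exp (-(((n:ℝ) + 2) * s))) with hd
  have hintd : ∀ a b : ℝ, IntervalIntegrable d MeasureTheory.volume a b := by
    intro a b; apply Continuous.intervalIntegrable; rw [hd]; fun_prop
  have hint1 : ∀ a b : ℝ, IntervalIntegrable
      (fun s : ℝ => c1 * (s ^ n * Real.exp (-(((n:ℝ) + 1) * s)))) MeasureTheory.volume a b := by
    intro a b; apply Continuous.intervalIntegrable; fun_prop
  have hint2 : ∀ a b : ℝ, IntervalIntegrable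
      (fun s : ℝ => c2 * (s ^ (n + 1) * Real.exp (-(((n:ℝ) + 2) * s)))) MeasureTheory.volume a b := by
    intro a b; apply Continuous.intervalIntegrable; fun_prop
  have hsplit : ∀ a b : ℝ, (∫ s in a..b, d s)
      = c1 * (∫ s in a..b, s ^ n * Real.exp (-(((n:ℝ) + 1) * s)))
        - c2 * ∫ s in a..b, s ^ (n + 1) * Real.exp (-(((n:ℝ) + 2) * s)) := by
    intro a b
    rw [hd]
    rw [intervalIntegral.integral_sub (hint1 a b) (hint2 a b),
      intervalIntegral.integral_const_mul, intervalIntegral.integral_const_mul]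
  have hc2pos : 0 < c2 := by
    rw [hc2]
    have h1 : (0:ℝ) < (((n:ℕ) + 1).factorial : ℝ) := by exact_mod_cast Nat.factorial_pos _
    positivity
  have hfactor : ∀ s : ℝ, d s
      = (s ^ n * Real.exp (-(((n:ℝ) + 1) * s))) * (c1 - c2 * (s * Real.exp (-s))) := by
    intro s
    have he : Real.exp (-(((n:ℝ) + 2) * s)) = Real.exp (-s) * Real.exp (-(((n:ℝ) + 1) * s)) := by
      rw [← Real.exp_add]; ring_nf
    rw [hd]
    simp only []
    rw [he, pow_succ]
    ring
  rw [ge_iff_le, ← sub_nonneg, ← hsplit 0 t]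
  by_cases hcase : c2 * (t * Real.exp (-t)) ≤ c1
  · apply intervalIntegral.integral_nonneg ht0.le
    intro s hs
    rw [hfactor]
    apply mul_nonneg
    · have := hs.1; positivity
    · have h1 := se_mono hs.1 hs.2 ht1
      nlinarith
  · push_neg at hcase
    have heq : (∫ s in (0:ℝ)..t, d s) = (∫ s in (0:ℝ)..1, d s) - ∫ s in t..1, d s := by
      rw [← intervalIntegral.integral_add_adjacent_intervals (hintd 0 t) (hintd t 1)]
      ring
    have hneg : (∫ s in t..1, d s) ≤ 0 := by
      have h0 : 0 ≤ ∫ s in t..1, -(d s) := by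
        apply intervalIntegral.integral_nonneg ht1
        intro s hs
        rw [hfactor]
        have hs0 : 0 ≤ s := le_trans ht0.le hs.1
        have h1 := se_mono ht0.le hs.1 hs.2
        have h2 : c1 - c2 * (s * Real.exp (-s)) ≤ 0 := by nlinarith
        have h3 : 0 ≤ s ^ n * Real.exp (-(((n:ℝ) + 1) * s)) := by positivity
        nlinarith
      rw [intervalIntegral.integral_neg] at h0
      linarith
    have hone : 0 ≤ ∫ s in (0:ℝ)..1, d s := by
      rw [hsplit 0 1]
      have h1 := bridge n 1
      have h2 := bridge (n + 1) 1
      rw [one_mul] at h1 h2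
      push_cast at h2
      rw [show (n:ℝ) + 1 + 1 = (n:ℝ) + 2 by ring] at h2
      rw [show n + 1 + 1 = n + 2 from rfl] at h2
      have he := endpoint n
      rw [h1, h2] at he
      rw [hc1, hc2]
      push_cast
      linarith
    linarith [heq ▸ (by linarith [hneg] : (0:ℝ) ≤ (∫ s in (0:ℝ)..1, d s) - ∫ s in t..1, d s)]

theorem gamma_cdf_comparison
    (k : ℕ) (hk : 1 ≤ k) (t : ℝ) (ht : t ∈ Set.Ioc (0 : ℝ) 1) :
    (1 / ((k - 1).factorial : ℝ)) *
        ∫ u in (0 : ℝ)..(t * k), u ^ (k - 1) * Real.exp (-u) ≥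
      (1 / (k.factorial : ℝ)) *
        ∫ u in (0 : ℝ)..(t * (k + 1)), u ^ k * Real.exp (-u) := by
  obtain ⟨ht0, ht1⟩ := ht
  obtain ⟨n, rfl⟩ : ∃ n, k = n + 1 := ⟨k - 1, (Nat.succ_pred_eq_of_pos hk).symm⟩
  simp only [Nat.add_sub_cancel]
  have h1 := bridge n t
  have h2 := bridge (n + 1) t
  push_cast at h1 h2 ⊢
  rw [h1, h2]
  rw [show (n:ℝ) + 1 + 1 = (n:ℝ) + 2 by ring, show n + 1 + 1 = n + 2 from rfl]
  exact main_rescaled n ht0 ht1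
end

section
/- Let a > 0, b > 0, c ≥ 0 and d ∈ ℝ, and define f : [0,b] → ℝ by f(t) = ln(1+t) + ln(1+b−t) + a·√( c + t² + (b−t)² ) + d. Then for every t ∈ (0, b/2): f(t) > min{ f(0), f(b/2) }. -/
private lemma sqrt_concave_aux (p q l m : ℝ) (hp : 0 ≤ p) (hq : 0 ≤ q)
    (hl : 0 ≤ l) (hm : 0 ≤ m) (hlm : l + m = 1) :
    l * Real.sqrt p + m * Real.sqrt q ≤ Real.sqrt (l * p + m * q) := by
  have hsp := Real.sq_sqrt hp
  have hsq := Real.sq_sqrt hq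
  have h1 : 0 ≤ l * Real.sqrt p + m * Real.sqrt q := by positivity
  have h2 : 0 ≤ l * p + m * q := by positivity
  rw [← Real.sqrt_sq h1]
  apply Real.sqrt_le_sqrt
  have hid : l * p + m * q - (l * Real.sqrt p + m * Real.sqrt q) ^ 2 =
      l * m * (Real.sqrt p - Real.sqrt q) ^ 2 := by
    linear_combination -l * hsp - m * hsq -
      (l * Real.sqrt p ^ 2 + m * Real.sqrt q ^ 2) * hlm
  linarith [hid, mul_nonneg (mul_nonneg hl hm) (sq_nonneg (Real.sqrt p - Real.sqrt q))]

theorem boundary_minimum_of_symmetric_function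
    (a b c d : ℝ) (ha : 0 < a) (hb : 0 < b) (hc : 0 ≤ c)
    (f : ℝ → ℝ)
    (hf : ∀ t, f t = Real.log (1 + t) + Real.log (1 + b - t) +
        a * Real.sqrt (c + t ^ 2 + (b - t) ^ 2) + d) :
    ∀ t ∈ Set.Ioo (0 : ℝ) (b / 2), f t > min (f 0) (f (b / 2)) := by
  rintro t ⟨ht0, htb⟩
  have htlb : t < b := by linarith
  set u : ℝ := t * (b - t) with hu
  have hu0 : 0 < u := mul_pos ht0 (by linarith)
  have huM : u < b ^ 2 / 4 := by nlinarith
  set q : ℝ := u / (b ^ 2 / 4) with hqdef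
  set p : ℝ := 1 - q with hpdef
  have hq0 : 0 < q := div_pos hu0 (by positivity)
  have hq1 : q < 1 := (div_lt_one (by positivity)).2 huM
  have hp0 : 0 < p := by simp [hpdef]; linarith
  have hpq : p + q = 1 := by simp [hpdef]
  have hq4 : q * (b ^ 2 / 4) = u := div_mul_cancel₀ u (by positivity)
  -- log step
  have hx : (1 + b) ∈ Set.Ioi (0 : ℝ) := by simp; linarith
  have hy : (1 + b + b ^ 2 / 4) ∈ Set.Ioi (0 : ℝ) := by simp; nlinarith
  have hlog := strictConcaveOn_log_Ioi.2 hx hy (by nlinarith) hp0 hq0 hpq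
  simp only [smul_eq_mul] at hlog
  have hcomb : p * (1 + b) + q * (1 + b + b ^ 2 / 4) = 1 + b + u := by
    linear_combination (1 + b) * hpq + hq4
  rw [hcomb] at hlog
  -- sqrt step
  have hsq : p * Real.sqrt (c + b ^ 2) + q * Real.sqrt (c + b ^ 2 / 2) ≤
      Real.sqrt (c + b ^ 2 - 2 * u) := by
    have := sqrt_concave_aux (c + b ^ 2) (c + b ^ 2 / 2) p q (by positivity)
      (by positivity) hp0.le hq0.le hpq
    have hc2 : p * (c + b ^ 2) + q * (c + b ^ 2 / 2) = c + b ^ 2 - 2 * u := by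
      linear_combination (c + b ^ 2) * hpq - 2 * hq4
    rwa [hc2] at this
  -- identify f values
  have hft : f t = Real.log (1 + b + u) + a * Real.sqrt (c + b ^ 2 - 2 * u) + d := by
    rw [hf t]
    have h1 : (0:ℝ) < 1 + t := by linarith
    have h2 : (0:ℝ) < 1 + b - t := by linarith
    have : Real.log (1 + t) + Real.log (1 + b - t) = Real.log ((1 + t) * (1 + b - t)) :=
      (Real.log_mul (by linarith) (by linarith)).symm
    rw [this]
    have e1 : (1 + t) * (1 + b - t) = 1 + b + u := by rw [hu]; ring
    have e2 : c + t ^ 2 + (b - t) ^ 2 = c + b ^ 2 - 2 * u := by rw [hu]; ring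
    rw [e1, e2]
  have hf0 : f 0 = Real.log (1 + b) + a * Real.sqrt (c + b ^ 2) + d := by
    rw [hf 0]
    norm_num
  have hfb : f (b / 2) = Real.log (1 + b + b ^ 2 / 4) + a * Real.sqrt (c + b ^ 2 / 2) + d := by
    rw [hf (b / 2)]
    have h1 : (0:ℝ) < 1 + b / 2 := by linarith
    have : Real.log (1 + b / 2) + Real.log (1 + b - b / 2) =
        Real.log ((1 + b / 2) * (1 + b - b / 2)) :=
      (Real.log_mul (by linarith) (by linarith)).symm
    rw [this]
    have e1 : (1 + b / 2) * (1 + b - b / 2) = 1 + b + b ^ 2 / 4 := by ring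
    have e2 : c + (b / 2) ^ 2 + (b - b / 2) ^ 2 = c + b ^ 2 / 2 := by ring
    rw [e1, e2]
  -- combine
  have key : p * f 0 + q * f (b / 2) < f t := by
    rw [hft, hf0, hfb]
    nlinarith [hsq, hlog, ha]
  have hmin1 := min_le_left (f 0) (f (b / 2))
  have hmin2 := min_le_right (f 0) (f (b / 2))
  nlinarith [key, hmin1, hmin2, hp0, hq0]
end

section
/- For every a > 0 and every c > 0: the infimum over all x = (x₁, x₂, …) ∈ [0,∞)^ℕ with Σ_{i=1}^{∞} x_i = c of the quantity Σ_{i=1}^{∞} ln(1+x_i) + a·( Σ_{i=1}^{∞} x_i² )^{1/2} equals the infimum over integers N ≥ 1 of N·ln(1 + c/N) + a·c/√N. Moreover, any minimizer x has all of its nonzero entries equal. -/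
open Real

private lemma sqrt_diff_ge {P d : ℝ} (hd : 0 ≤ d) (h2 : 2*d ≤ P) (hP : 0 < P) :
    d / Real.sqrt P ≤ Real.sqrt P - Real.sqrt (P - 2*d) := by
  have hsp : 0 < Real.sqrt P := Real.sqrt_pos.2 hP
  have h1 : P*(P-2*d) ≤ (P-d)^2 := by nlinarith
  have h3 : Real.sqrt (P*(P-2*d)) ≤ P - d := by
    calc Real.sqrt (P*(P-2*d)) ≤ Real.sqrt ((P-d)^2) := Real.sqrt_le_sqrt h1
    _ = |P - d| := Real.sqrt_sq_eq_abs _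
    _ = P - d := abs_of_nonneg (by linarith)
  have hm : Real.sqrt P * Real.sqrt (P - 2*d) = Real.sqrt (P*(P-2*d)) :=
    (Real.sqrt_mul hP.le _).symm
  have hms : Real.sqrt P * Real.sqrt P = P := Real.mul_self_sqrt hP.le
  rw [div_le_iff₀ hsp]
  nlinarith [Real.sqrt_nonneg (P - 2*d)]

private lemma sqrt_diff_le {P w : ℝ} (hP : 0 < P) (hw : 0 ≤ w) :
    Real.sqrt (P + 2*w) - Real.sqrt P ≤ w / Real.sqrt P := by
  have hsp : 0 < Real.sqrt P := Real.sqrt_pos.2 hP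
  have hms : Real.sqrt P * Real.sqrt P = P := Real.mul_self_sqrt hP.le
  have h1 : P + 2*w ≤ (Real.sqrt P + w / Real.sqrt P)^2 := by
    have : (Real.sqrt P + w / Real.sqrt P)^2
        = P + 2*w + (w / Real.sqrt P)^2 := by
      field_simp; linear_combination (Real.sqrt P)^2 * hms
    nlinarith [sq_nonneg (w / Real.sqrt P)]
  have h2 : Real.sqrt (P + 2*w) ≤ Real.sqrt P + w / Real.sqrt P := by
    calc Real.sqrt (P + 2*w) ≤ Real.sqrt ((Real.sqrt P + w / Real.sqrt P)^2) :=
          Real.sqrt_le_sqrt h1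
    _ = Real.sqrt P + w / Real.sqrt P := Real.sqrt_sq (by positivity)
  linarith

private lemma key {a u v Q : ℝ} (ha : 0 < a) (hu : 0 < u) (hv : 0 < v) (huv : u ≠ v)
    (hQ : 0 ≤ Q) :
    2 * Real.log (1 + (u+v)/2) + a * Real.sqrt (Q + 2 * ((u+v)/2)^2)
      < Real.log (1+u) + Real.log (1+v) + a * Real.sqrt (Q + u^2 + v^2)
    ∨ Real.log (1 + (u+v)) + a * Real.sqrt (Q + (u+v)^2)
      < Real.log (1+u) + Real.log (1+v) + a * Real.sqrt (Q + u^2 + v^2) := by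
  set P := Q + u^2 + v^2 with hPdef
  set E := (1+u)*(1+v) with hEdef
  have hP : 0 < P := by positivity
  have hE : 0 < E := by positivity
  have hsp : 0 < Real.sqrt P := Real.sqrt_pos.2 hP
  have hlogE : Real.log (1+u) + Real.log (1+v) = Real.log E :=
    (Real.log_mul (by positivity) (by positivity)).symm
  by_cases hcase : 1/E ≤ a / Real.sqrt P
  · left
    set d := (u-v)^2/4 with hd
    have hdpos : 0 < d := by
      have : u - v ≠ 0 := sub_ne_zero.2 huv
      positivity
    have h2d : 2*d ≤ P := by nlinarith
    have hQd : Q + 2*((u+v)/2)^2 = P - 2*d := by rw [hPdef]; ring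
    have hEd : (1 + (u+v)/2)^2 = E + d := by rw [hEdef]; ring
    -- log part
    have hlog2 : 2 * Real.log (1 + (u+v)/2) = Real.log (E + d) := by
      rw [← hEd, Real.log_pow]; norm_num
    have hlogdiff : Real.log (E + d) - Real.log E < d / E := by
      have h1 : Real.log (E + d) - Real.log E = Real.log ((E+d)/E) := by
        rw [Real.log_div (by positivity) (by positivity)]
      have h2 : Real.log ((E+d)/E) < (E+d)/E - 1 :=
        Real.log_lt_sub_one_of_pos (by positivity)
          (by
            intro h
            have : E + d = E := by field_simp at h; linarith
            linarith)
      have h3 : (E+d)/E - 1 = d / E := by field_simp; ring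
      linarith
    have hsq : d / Real.sqrt P ≤ Real.sqrt P - Real.sqrt (P - 2*d) :=
      sqrt_diff_ge hdpos.le h2d hP
    have hchain : d / E ≤ a * (d / Real.sqrt P) := by
      have := mul_le_mul_of_nonneg_right hcase hdpos.le
      calc d / E = 1/E * d := by ring
      _ ≤ a / Real.sqrt P * d := this
      _ = a * (d / Real.sqrt P) := by ring
    have hfin : a * (d / Real.sqrt P) ≤ a * (Real.sqrt P - Real.sqrt (P - 2*d)) :=
      mul_le_mul_of_nonneg_left hsq ha.le
    rw [hQd, hlog2, hlogE]
    have hPs : Real.sqrt P = Real.sqrt (Q + u^2 + v^2) := by rw [hPdef]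
    linarith
  · right
    push_neg at hcase
    set w := u*v with hw
    have hwpos : 0 < w := by positivity
    have hQw : Q + (u+v)^2 = P + 2*w := by rw [hPdef]; ring
    have hEw : E = (1+(u+v)) + w := by rw [hEdef]; ring
    have hs1 : (0:ℝ) < 1 + (u+v) := by linarith
    -- log gain
    have hloggain : w / E ≤ Real.log E - Real.log (1+(u+v)) := by
      have h1 : Real.log E - Real.log (1+(u+v)) = Real.log (E / (1+(u+v))) := by
        rw [Real.log_div (by positivity) (by positivity)]
      have h2 : 1 - (E / (1+(u+v)))⁻¹ ≤ Real.log (E / (1+(u+v))) :=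
        Real.one_sub_inv_le_log_of_pos (by positivity)
      have h3 : (E / (1+(u+v)))⁻¹ = (1+(u+v))/E := by
        rw [inv_div]
      have h4 : 1 - (1+(u+v))/E = w / E := by
        rw [hEw]; field_simp; ring
      rw [h1, ← h4, ← h3]; exact h2
    have hsq : Real.sqrt (P + 2*w) - Real.sqrt P ≤ w / Real.sqrt P :=
      sqrt_diff_le hP hwpos.le
    have hchain : a * (w / Real.sqrt P) < w / E := by
      have := mul_lt_mul_of_pos_right hcase hwpos
      calc a * (w / Real.sqrt P) = a / Real.sqrt P * w := by ring
      _ < 1/E * w := this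
      _ = w / E := by ring
    have hfin : a * (Real.sqrt (P + 2*w) - Real.sqrt P) ≤ a * (w / Real.sqrt P) :=
      mul_le_mul_of_nonneg_left hsq ha.le
    rw [hQw, hlogE]
    linarith

private lemma comp_update2 {ι : Type*} [DecidableEq ι] (g : ℝ → ℝ) (f : ι → ℝ)
    (i j : ι) (A B : ℝ) :
    (fun m => g (Function.update (Function.update f i A) j B m))
      = Function.update (Function.update (fun m => g (f m)) i (g A)) j (g B) := by
  funext m
  rcases eq_or_ne m j with rfl | hmj
  · simp
  · rcases eq_or_ne m i with rfl | hmi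
    · simp [Function.update_of_ne hmj]
    · simp [Function.update_of_ne hmj, Function.update_of_ne hmi]

private lemma tsum_update2 {f : ℕ → ℝ} (hf : Summable f) {i j : ℕ} (hij : i ≠ j)
    (A B : ℝ) :
    ∑' m, Function.update (Function.update f i A) j B m
      = (∑' m, f m) - f i - f j + A + B := by
  have h1 := hf.hasSum.update i A
  have h2 := h1.update j B
  rw [Function.update_of_ne hij.symm] at h2
  rw [h2.tsum_eq]; ring

private lemma sum_update2 {n : ℕ} (f : Fin n → ℝ) {i j : Fin n} (hij : i ≠ j)
    (A B : ℝ) :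
    ∑ m, Function.update (Function.update f i A) j B m
      = (∑ m, f m) - f i - f j + A + B := by
  classical
  have h1 : ∀ (g : Fin n → ℝ) (k : Fin n) (C : ℝ),
      ∑ m, Function.update g k C m = (∑ m, g m) - g k + C := by
    intro g k C
    rw [Finset.sum_update_of_mem (Finset.mem_univ k)]
    rw [← Finset.sum_erase_add Finset.univ g (Finset.mem_univ k),
      Finset.sdiff_singleton_eq_erase]
    ring
  rw [h1, h1, Function.update_of_ne hij.symm]
  ring

private lemma summable_log {x : ℕ → ℝ} (hx : ∀ i, 0 ≤ x i) (hs : Summable x) :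
    Summable (fun i => Real.log (1 + x i)) := by
  refine hs.of_nonneg_of_le (fun i => Real.log_nonneg (by linarith [hx i])) (fun i => ?_)
  have := Real.log_le_sub_one_of_pos (show (0:ℝ) < 1 + x i by linarith [hx i])
  linarith

private lemma summable_sq {x : ℕ → ℝ} (hx : ∀ i, 0 ≤ x i) (hs : Summable x) :
    Summable (fun i => (x i)^2) := by
  refine (hs.mul_left (∑' i, x i)).of_nonneg_of_le (fun i => sq_nonneg _) (fun i => ?_)
  have h1 : x i ≤ ∑' j, x j := hs.le_tsum i (fun j _ => hx j)
  nlinarith [hx i]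

private lemma key' {a u v Q : ℝ} (ha : 0 < a) (hu : 0 < u) (hv : 0 < v) (huv : u ≠ v)
    (hQ : 0 ≤ Q) :
    ∃ A B : ℝ, 0 ≤ A ∧ 0 ≤ B ∧ A + B = u + v ∧
      Real.log (1+A) + Real.log (1+B) + a * Real.sqrt (Q + (A^2 + B^2))
        < Real.log (1+u) + Real.log (1+v) + a * Real.sqrt (Q + (u^2 + v^2)) := by
  have hQ3 : Q + (u^2 + v^2) = Q + u^2 + v^2 := by ring
  rcases key ha hu hv huv hQ with h | h
  · refine ⟨(u+v)/2, (u+v)/2, by positivity, by positivity, by ring, ?_⟩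
    have e1 : Q + (((u+v)/2)^2 + ((u+v)/2)^2) = Q + 2*((u+v)/2)^2 := by ring
    rw [e1, hQ3]
    linarith
  · refine ⟨u+v, 0, by positivity, le_refl _, by ring, ?_⟩
    have e1 : Q + ((u+v)^2 + (0:ℝ)^2) = Q + (u+v)^2 := by ring
    rw [e1, hQ3]
    simpa using h

private lemma finite_min {a c : ℝ} (ha : 0 < a) (hc : 0 < c) {n : ℕ} (z : Fin n → ℝ)
    (hz : ∀ k, 0 ≤ z k) (hsum : ∑ k, z k = c) :
    ∃ N : ℕ, 1 ≤ N ∧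
      (N:ℝ) * Real.log (1 + c/(N:ℝ)) + a*c/Real.sqrt (N:ℝ)
        ≤ (∑ k, Real.log (1 + z k)) + a * Real.sqrt (∑ k, (z k)^2) := by
  classical
  set F : (Fin n → ℝ) → ℝ :=
    fun w => (∑ k, Real.log (1 + w k)) + a * Real.sqrt (∑ k, (w k)^2) with hF
  set K : Set (Fin n → ℝ) := {w | (∀ k, 0 ≤ w k) ∧ ∑ k, w k = c} with hKdef
  have hzK : z ∈ K := ⟨hz, hsum⟩
  have hKeq : K = (fun w : Fin n → ℝ => c • w) '' stdSimplex ℝ (Fin n) := by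
    ext w
    constructor
    · rintro ⟨h0, h1⟩
      refine ⟨c⁻¹ • w, ⟨fun k => by
          have := h0 k
          have : 0 ≤ c⁻¹ * w k := mul_nonneg (by positivity) this
          simpa using this, ?_⟩, ?_⟩
      · simp only [Pi.smul_apply, smul_eq_mul, ← Finset.mul_sum, h1]
        field_simp
      · simp [smul_smul, mul_inv_cancel₀ hc.ne']
    · rintro ⟨s, ⟨h0, h1⟩, rfl⟩
      refine ⟨fun k => by
        have := h0 k
        have : 0 ≤ c * s k := mul_nonneg hc.le this
        simpa using this, ?_⟩
      simp only [Pi.smul_apply, smul_eq_mul, ← Finset.mul_sum, h1, mul_one]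
  have hK : IsCompact K := by
    rw [hKeq]
    exact (isCompact_stdSimplex ℝ (Fin n)).image (continuous_const_smul c)
  have hFcont : ContinuousOn F K := by
    apply ContinuousOn.add
    · apply continuousOn_finset_sum
      intro k _ w hw
      apply ContinuousAt.continuousWithinAt
      have h0 : (1 : ℝ) + w k ≠ 0 := by
        have := hw.1 k; positivity
      exact ContinuousAt.log
        ((continuous_const.add (continuous_apply k)).continuousAt) h0
    · exact (continuous_const.mul (Real.continuous_sqrt.comp
        (continuous_finset_sum _ fun k _ => (continuous_apply k).pow 2))).continuousOn
  obtain ⟨m, hmK, hm⟩ := hK.exists_isMinOn ⟨z, hzK⟩ hFcont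
  have hmin : ∀ y ∈ K, F m ≤ F y := fun y hy => hm hy
  -- all nonzero entries of m are equal
  have hclaim : ∀ k l, m k ≠ 0 → m l ≠ 0 → m k = m l := by
    intro k l hk hl
    by_contra hne
    have hkl : k ≠ l := by rintro rfl; exact hne rfl
    have hu : 0 < m k := lt_of_le_of_ne (hmK.1 k) (Ne.symm hk)
    have hv : 0 < m l := lt_of_le_of_ne (hmK.1 l) (Ne.symm hl)
    have hQsub : (m k)^2 + (m l)^2 ≤ ∑ p, (m p)^2 := by
      have : ∑ p ∈ ({k, l} : Finset (Fin n)), (m p)^2 ≤ ∑ p, (m p)^2 :=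
        Finset.sum_le_sum_of_subset_of_nonneg (Finset.subset_univ _)
          (fun p _ _ => sq_nonneg _)
      rwa [Finset.sum_pair hkl] at this
    set Q : ℝ := (∑ p, (m p)^2) - (m k)^2 - (m l)^2 with hQdef
    have hQ : 0 ≤ Q := by simp only [hQdef]; linarith
    obtain ⟨A, B, hA, hB, hABsum, hlt⟩ := key' ha hu hv hne hQ
    set y := Function.update (Function.update m k A) l B with hy
    have hyK : y ∈ K := by
      constructor
      · intro p
        simp only [hy, Function.update_apply]
        split_ifs
        exacts [hB, hA, hmK.1 p]
      · rw [hy, sum_update2 m hkl]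
        have := hmK.2
        linarith
    have h1 : ∑ p, Real.log (1 + y p)
        = (∑ p, Real.log (1 + m p)) - Real.log (1 + m k) - Real.log (1 + m l)
          + Real.log (1+A) + Real.log (1+B) := by
      have e := comp_update2 (fun t => Real.log (1+t)) m k l A B
      calc ∑ p, Real.log (1 + y p)
          = ∑ p, Function.update (Function.update
              (fun p => Real.log (1 + m p)) k (Real.log (1+A))) l (Real.log (1+B)) p := by
            rw [hy, ← e]
        _ = _ := by rw [sum_update2 _ hkl]
    have h2 : ∑ p, (y p)^2 = Q + (A^2 + B^2) := by
      have e := comp_update2 (fun t => t^2) m k l A B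
      calc ∑ p, (y p)^2
          = ∑ p, Function.update (Function.update
              (fun p => (m p)^2) k (A^2)) l (B^2) p := by rw [hy, ← e]
        _ = (∑ p, (m p)^2) - (m k)^2 - (m l)^2 + A^2 + B^2 := by rw [sum_update2 _ hkl]
        _ = Q + (A^2 + B^2) := by rw [hQdef]; ring
    have hFy : F y < F m := by
      have hQm : ∑ p, (m p)^2 = Q + ((m k)^2 + (m l)^2) := by rw [hQdef]; ring
      simp only [hF]
      rw [h1, h2, hQm]
      linarith
    exact absurd (hmin y hyK) (not_le.2 hFy)
  -- compute the value at m
  set S : Finset (Fin n) := Finset.univ.filter (fun k => m k ≠ 0) with hS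
  have hsum_m : ∑ k, m k = c := hmK.2
  have hSne : S.Nonempty := by
    by_contra h
    rw [Finset.not_nonempty_iff_eq_empty] at h
    have : ∀ k, m k = 0 := by
      intro k
      by_contra hk
      have : k ∈ S := by simp [hS, hk]
      simp [h] at this
    rw [Finset.sum_congr rfl (fun k _ => this k)] at hsum_m
    simp at hsum_m
    exact hc.ne' (by linarith)
  obtain ⟨k₀, hk₀⟩ := hSne
  have hk₀ne : m k₀ ≠ 0 := by simpa [hS] using hk₀
  set t := m k₀ with ht
  set N := S.card with hN
  have hN1 : 1 ≤ N := Finset.card_pos.2 ⟨k₀, hk₀⟩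
  have hNpos : (0:ℝ) < N := by exact_mod_cast hN1
  have heq : ∀ k ∈ S, m k = t := by
    intro k hk
    have hkne : m k ≠ 0 := by simpa [hS] using hk
    exact hclaim k k₀ hkne hk₀ne
  have hsum_S : ∑ k ∈ S, m k = c := by
    rw [← hsum_m]
    exact Finset.sum_filter_ne_zero _
  have hNt : (N:ℝ) * t = c := by
    rw [← hsum_S, Finset.sum_congr rfl heq, Finset.sum_const, nsmul_eq_mul]
  have htpos : 0 < t := lt_of_le_of_ne (hmK.1 k₀) (Ne.symm hk₀ne)
  have htc : t = c / N := by field_simp [← hNt]; linarith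
  have hlogsum : ∑ k, Real.log (1 + m k) = (N:ℝ) * Real.log (1 + c/(N:ℝ)) := by
    rw [← Finset.sum_filter_of_ne (s := Finset.univ)
      (p := fun k => m k ≠ 0) (f := fun k => Real.log (1 + m k))
      (fun k _ hk h0 => by simp [h0] at hk)]
    rw [Finset.sum_congr rfl (fun k hk => by rw [heq k hk, htc]), Finset.sum_const,
      nsmul_eq_mul]
  have hsqsum : ∑ k, (m k)^2 = (N:ℝ) * (c/N)^2 := by
    rw [← Finset.sum_filter_of_ne (s := Finset.univ)
      (p := fun k => m k ≠ 0) (f := fun k => (m k)^2)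
      (fun k _ hk h0 => by simp [h0] at hk)]
    rw [Finset.sum_congr rfl (fun k hk => by rw [heq k hk, htc]), Finset.sum_const,
      nsmul_eq_mul]
  have hsqrtN : Real.sqrt (N:ℝ) > 0 := Real.sqrt_pos.2 hNpos
  have hsqrtval : Real.sqrt ((N:ℝ) * (c/N)^2) = c / Real.sqrt (N:ℝ) := by
    rw [Real.sqrt_mul (le_of_lt hNpos), Real.sqrt_sq (by positivity)]
    rw [eq_div_iff hsqrtN.ne']
    have hss := Real.sq_sqrt (le_of_lt hNpos)
    field_simp
    linear_combination hss
  have hFm : F m = (N:ℝ) * Real.log (1 + c/(N:ℝ)) + a*c/Real.sqrt (N:ℝ) := by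
    simp only [hF]
    rw [hlogsum, hsqsum, hsqrtval]
    ring
  exact ⟨N, hN1, by rw [← hFm]; exact hmin z hzK⟩

private lemma fin_succ_sum (n : ℕ) (f : ℕ → ℝ) :
    ∑ k : Fin (n+1), f (k : ℕ) = (∑ i ∈ Finset.range n, f i) + f n := by
  rw [Fin.sum_univ_eq_sum_range, Finset.sum_range_succ]

private lemma tail_bound {a c : ℝ} (ha : 0 < a) (hc : 0 < c)
    (x : ℕ → ℝ) (hx0 : ∀ i, 0 ≤ x i) (hs : Summable x) (hsum : ∑' i, x i = c) (n : ℕ) :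
    ∃ N : ℕ, 1 ≤ N ∧
      (N:ℝ) * Real.log (1 + c/(N:ℝ)) + a*c/Real.sqrt (N:ℝ)
        ≤ (∑' i, Real.log (1 + x i)) + a * Real.sqrt (∑' i, (x i)^2)
          + (1+a) * (∑' i, x (i + n)) := by
  classical
  set T : ℝ := ∑' i, x (i + n) with hT
  have hT0 : 0 ≤ T := tsum_nonneg (fun i => hx0 _)
  set w : ℕ → ℝ := fun i => if i < n then x i else T with hwdef
  have hwn : w n = T := by simp [hwdef]
  have hwr : ∀ i ∈ Finset.range n, w i = x i := by
    intro i hi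
    simp [hwdef, Finset.mem_range.mp hi]
  set z : Fin (n+1) → ℝ := fun k => w (k : ℕ) with hzdef
  have hz : ∀ k, 0 ≤ z k := by
    intro k
    simp only [hzdef, hwdef]
    split_ifs
    exacts [hx0 _, hT0]
  have hzsum : ∑ k, z k = c := by
    have e1 : ∑ k : Fin (n+1), z k = (∑ i ∈ Finset.range n, w i) + w n :=
      fin_succ_sum n w
    rw [e1, hwn, Finset.sum_congr rfl hwr, ← hsum, ← Summable.sum_add_tsum_nat_add n hs]
  obtain ⟨N, hN1, hle⟩ := finite_min ha hc z hz hzsum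
  refine ⟨N, hN1, hle.trans ?_⟩
  have hsl := summable_log hx0 hs
  have hsq := summable_sq hx0 hs
  have hlog : ∑ k, Real.log (1 + z k)
      ≤ (∑' i, Real.log (1 + x i)) + T := by
    have e1 : ∑ k : Fin (n+1), Real.log (1 + z k)
        = (∑ i ∈ Finset.range n, Real.log (1 + w i)) + Real.log (1 + w n) :=
      fin_succ_sum n (fun i => Real.log (1 + w i))
    rw [e1, hwn, Finset.sum_congr rfl (fun i hi => by rw [hwr i hi])]
    have h1 : ∑ i ∈ Finset.range n, Real.log (1 + x i) ≤ ∑' i, Real.log (1 + x i) :=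
      Summable.sum_le_tsum _ (fun i _ => Real.log_nonneg (by linarith [hx0 i])) hsl
    have h2 : Real.log (1 + T) ≤ T := by
      have := Real.log_le_sub_one_of_pos (show (0:ℝ) < 1 + T by linarith)
      linarith
    linarith
  have hsqb : Real.sqrt (∑ k, (z k)^2) ≤ Real.sqrt (∑' i, (x i)^2) + T := by
    have hx2 : (0:ℝ) ≤ ∑' i, (x i)^2 := tsum_nonneg (fun i => sq_nonneg _)
    have hsum2 : ∑ k, (z k)^2 = (∑ i ∈ Finset.range n, (x i)^2) + T^2 := by
      have e1 : ∑ k : Fin (n+1), (z k)^2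
          = (∑ i ∈ Finset.range n, (w i)^2) + (w n)^2 :=
        fin_succ_sum n (fun i => (w i)^2)
      rw [e1, hwn, Finset.sum_congr rfl (fun i hi => by rw [hwr i hi])]
    have h1 : ∑ i ∈ Finset.range n, (x i)^2 ≤ ∑' i, (x i)^2 :=
      Summable.sum_le_tsum _ (fun i _ => sq_nonneg _) hsq
    have h2 : ∑ k, (z k)^2 ≤ (Real.sqrt (∑' i, (x i)^2) + T)^2 := by
      have hss : Real.sqrt (∑' i, (x i)^2) ^ 2 = ∑' i, (x i)^2 := Real.sq_sqrt hx2
      have hsn : 0 ≤ Real.sqrt (∑' i, (x i)^2) := Real.sqrt_nonneg _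
      rw [hsum2]
      nlinarith
    calc Real.sqrt (∑ k, (z k)^2) ≤ Real.sqrt ((Real.sqrt (∑' i, (x i)^2) + T)^2) :=
          Real.sqrt_le_sqrt h2
      _ = Real.sqrt (∑' i, (x i)^2) + T := Real.sqrt_sq (by positivity)
  have := mul_le_mul_of_nonneg_left hsqb ha.le
  linarith

private lemma gN_nonneg {a c : ℝ} (ha : 0 < a) (hc : 0 < c) {N : ℕ} (hN : 1 ≤ N) :
    0 ≤ (N:ℝ) * Real.log (1 + c/(N:ℝ)) + a*c/Real.sqrt (N:ℝ) := by
  have hNpos : (0:ℝ) < N := by exact_mod_cast hN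
  have h1 : 0 ≤ Real.log (1 + c/(N:ℝ)) := Real.log_nonneg (by
    have : 0 ≤ c / (N:ℝ) := by positivity
    linarith)
  have h2 : 0 ≤ a*c/Real.sqrt (N:ℝ) := by positivity
  have h3 : 0 ≤ (N:ℝ) * Real.log (1 + c/(N:ℝ)) := by positivity
  linarith

private lemma lower_bound {a c : ℝ} (ha : 0 < a) (hc : 0 < c)
    (x : ℕ → ℝ) (hx0 : ∀ i, 0 ≤ x i) (hs : Summable x) (hsum : ∑' i, x i = c) :
    (⨅ N : {N : ℕ // 1 ≤ N},
        (N.1 : ℝ) * Real.log (1 + c / (N.1 : ℝ)) + a * c / Real.sqrt (N.1 : ℝ))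
      ≤ (∑' i, Real.log (1 + x i)) + a * Real.sqrt (∑' i, (x i)^2) := by
  set g : {N : ℕ // 1 ≤ N} → ℝ :=
    fun N => (N.1 : ℝ) * Real.log (1 + c / (N.1 : ℝ)) + a * c / Real.sqrt (N.1 : ℝ)
    with hg
  have hbdd : BddBelow (Set.range g) := by
    refine ⟨0, ?_⟩
    rintro y ⟨⟨N, hN⟩, rfl⟩
    exact gN_nonneg ha hc hN
  have hstep : ∀ n : ℕ, (⨅ N, g N)
      ≤ (∑' i, Real.log (1 + x i)) + a * Real.sqrt (∑' i, (x i)^2)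
        + (1+a) * (∑' i, x (i + n)) := by
    intro n
    obtain ⟨N, hN1, hle⟩ := tail_bound ha hc x hx0 hs hsum n
    exact le_trans (ciInf_le hbdd ⟨N, hN1⟩) hle
  have htail : Filter.Tendsto (fun n => ∑' i, x (i + n)) Filter.atTop (nhds 0) := by
    have := tendsto_sum_nat_add x
    simpa [add_comm] using this
  have hlim : Filter.Tendsto
      (fun n => (∑' i, Real.log (1 + x i)) + a * Real.sqrt (∑' i, (x i)^2)
        + (1+a) * (∑' i, x (i + n))) Filter.atTop
      (nhds ((∑' i, Real.log (1 + x i)) + a * Real.sqrt (∑' i, (x i)^2))) := by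
    have h2 : Filter.Tendsto (fun n => (1+a) * (∑' i, x (i + n))) Filter.atTop
        (nhds ((1+a) * 0)) := htail.const_mul _
    rw [mul_zero] at h2
    simpa using (tendsto_const_nhds.add h2)
  exact ge_of_tendsto' hlim hstep |>.trans_eq rfl

private lemma sqrtN_val {c : ℝ} (hc : 0 < c) {N : ℕ} (hN : 1 ≤ N) :
    Real.sqrt ((N:ℝ) * (c/(N:ℝ))^2) = c / Real.sqrt (N:ℝ) := by
  have hNpos : (0:ℝ) < N := by exact_mod_cast hN
  have hsqrtN : (0:ℝ) < Real.sqrt (N:ℝ) := Real.sqrt_pos.2 hNpos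
  rw [Real.sqrt_mul (le_of_lt hNpos), Real.sqrt_sq (by positivity)]
  rw [eq_div_iff hsqrtN.ne']
  have hss := Real.sq_sqrt (le_of_lt hNpos)
  field_simp
  linear_combination hss

theorem inf_log_sum_plus_l2
    (a c : ℝ) (ha : 0 < a) (hc : 0 < c) :
    (⨅ x : {x : ℕ → ℝ // (∀ i, 0 ≤ x i) ∧ Summable x ∧ ∑' i, x i = c},
        (∑' i, Real.log (1 + x.1 i)) + a * Real.sqrt (∑' i, (x.1 i) ^ 2)) =
      (⨅ N : {N : ℕ // 1 ≤ N},
        (N.1 : ℝ) * Real.log (1 + c / (N.1 : ℝ)) + a * c / Real.sqrt (N.1 : ℝ)) ∧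
    ∀ x : ℕ → ℝ, (∀ i, 0 ≤ x i) → Summable x → (∑' i, x i = c) →
      (∀ y : ℕ → ℝ, (∀ i, 0 ≤ y i) → Summable y → (∑' i, y i = c) →
        (∑' i, Real.log (1 + x i)) + a * Real.sqrt (∑' i, (x i) ^ 2) ≤
          (∑' i, Real.log (1 + y i)) + a * Real.sqrt (∑' i, (y i) ^ 2)) →
      ∀ i j, x i ≠ 0 → x j ≠ 0 → x i = x j := by
  classical
  constructor
  · -- the infimum identity
    -- witnesses: for each N, the vector with N entries equal to c/N
    have hwit : ∀ N : ℕ, 1 ≤ N → ∃ x : ℕ → ℝ,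
        (∀ i, 0 ≤ x i) ∧ Summable x ∧ (∑' i, x i = c) ∧
        (∑' i, Real.log (1 + x i)) + a * Real.sqrt (∑' i, (x i) ^ 2)
          = (N:ℝ) * Real.log (1 + c/(N:ℝ)) + a * c / Real.sqrt (N:ℝ) := by
      intro N hN
      have hNpos : (0:ℝ) < N := by exact_mod_cast hN
      set x : ℕ → ℝ := fun i => if i < N then c / N else 0 with hxdef
      have hx0 : ∀ i, 0 ≤ x i := by
        intro i
        simp only [hxdef]
        split_ifs
        · positivity
        · exact le_refl 0
      have hxoff : ∀ i ∉ Finset.range N, x i = 0 := by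
        intro i hi
        have hlt : ¬ i < N := fun h => hi (Finset.mem_range.mpr h)
        simp [hxdef, hlt]
      have hxs : Summable x := summable_of_ne_finset_zero hxoff
      have hxon : ∀ i ∈ Finset.range N, x i = c / N := by
        intro i hi
        simp only [hxdef, if_pos (Finset.mem_range.mp hi)]
      have hxsum : ∑' i, x i = c := by
        rw [tsum_eq_sum hxoff, Finset.sum_congr rfl hxon, Finset.sum_const,
          Finset.card_range, nsmul_eq_mul]
        field_simp
      have hlog : ∑' i, Real.log (1 + x i) = (N:ℝ) * Real.log (1 + c/(N:ℝ)) := by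
        rw [tsum_eq_sum (s := Finset.range N) (fun i hi => by rw [hxoff i hi]; simp),
          Finset.sum_congr rfl (fun i hi => by rw [hxon i hi]), Finset.sum_const,
          Finset.card_range, nsmul_eq_mul]
      have hsq : ∑' i, (x i)^2 = (N:ℝ) * (c/(N:ℝ))^2 := by
        rw [tsum_eq_sum (s := Finset.range N) (fun i hi => by rw [hxoff i hi]; ring),
          Finset.sum_congr rfl (fun i hi => by rw [hxon i hi]), Finset.sum_const,
          Finset.card_range, nsmul_eq_mul]
      refine ⟨x, hx0, hxs, hxsum, ?_⟩
      rw [hlog, hsq, sqrtN_val hc hN]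
      ring
    obtain ⟨x₁, hx₁0, hx₁s, hx₁sum, _⟩ := hwit 1 le_rfl
    haveI : Nonempty {x : ℕ → ℝ // (∀ i, 0 ≤ x i) ∧ Summable x ∧ ∑' i, x i = c} :=
      ⟨⟨x₁, hx₁0, hx₁s, hx₁sum⟩⟩
    apply le_antisymm
    · -- inf over x ≤ inf over N
      apply le_ciInf
      rintro ⟨N, hN⟩
      obtain ⟨x, hx0, hxs, hxsum, hval⟩ := hwit N hN
      have hbddx : BddBelow (Set.range fun x :
          {x : ℕ → ℝ // (∀ i, 0 ≤ x i) ∧ Summable x ∧ ∑' i, x i = c} =>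
          (∑' i, Real.log (1 + x.1 i)) + a * Real.sqrt (∑' i, (x.1 i) ^ 2)) := by
        refine ⟨0, ?_⟩
        rintro y ⟨⟨x', hx'⟩, rfl⟩
        have h1 : 0 ≤ ∑' i, Real.log (1 + x' i) :=
          tsum_nonneg (fun i => Real.log_nonneg (by linarith [hx'.1 i]))
        have h2 : 0 ≤ a * Real.sqrt (∑' i, (x' i)^2) := by positivity
        exact add_nonneg h1 h2
      calc (⨅ x : {x : ℕ → ℝ // (∀ i, 0 ≤ x i) ∧ Summable x ∧ ∑' i, x i = c},
          (∑' i, Real.log (1 + x.1 i)) + a * Real.sqrt (∑' i, (x.1 i) ^ 2))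
          ≤ (∑' i, Real.log (1 + x i)) + a * Real.sqrt (∑' i, (x i) ^ 2) :=
            ciInf_le hbddx ⟨x, hx0, hxs, hxsum⟩
        _ = (N:ℝ) * Real.log (1 + c/(N:ℝ)) + a * c / Real.sqrt (N:ℝ) := hval
    · -- inf over N ≤ inf over x
      apply le_ciInf
      rintro ⟨x, hx0, hxs, hxsum⟩
      exact lower_bound ha hc x hx0 hxs hxsum
  · -- minimizers have all nonzero entries equal
    intro x hx0 hxs hxsum hopt i j hi hj
    by_contra hne
    have hij : i ≠ j := by rintro rfl; exact hne rfl
    have hu : 0 < x i := lt_of_le_of_ne (hx0 i) (Ne.symm hi)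
    have hv : 0 < x j := lt_of_le_of_ne (hx0 j) (Ne.symm hj)
    have hsl := summable_log hx0 hxs
    have hsq := summable_sq hx0 hxs
    have hQsub : (x i)^2 + (x j)^2 ≤ ∑' p, (x p)^2 := by
      have h1 : ∑ p ∈ ({i, j} : Finset ℕ), (x p)^2 ≤ ∑' p, (x p)^2 :=
        Summable.sum_le_tsum _ (fun p _ => sq_nonneg _) hsq
      rwa [Finset.sum_pair hij] at h1
    set Q : ℝ := (∑' p, (x p)^2) - (x i)^2 - (x j)^2 with hQdef
    have hQ : 0 ≤ Q := by simp only [hQdef]; linarith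
    obtain ⟨A, B, hA, hB, hABsum, hlt⟩ := key' ha hu hv hne hQ
    set y := Function.update (Function.update x i A) j B with hy
    have hy0 : ∀ p, 0 ≤ y p := by
      intro p
      simp only [hy, Function.update_apply]
      split_ifs
      exacts [hB, hA, hx0 p]
    have hys : Summable y := (hxs.update i A).update j B
    have hysum : ∑' p, y p = c := by
      rw [hy, tsum_update2 hxs hij]
      rw [hxsum]
      linarith
    have h1 : ∑' p, Real.log (1 + y p)
        = (∑' p, Real.log (1 + x p)) - Real.log (1 + x i) - Real.log (1 + x j)
          + Real.log (1+A) + Real.log (1+B) := by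
      have e := comp_update2 (fun t => Real.log (1+t)) x i j A B
      calc ∑' p, Real.log (1 + y p)
          = ∑' p, Function.update (Function.update
              (fun p => Real.log (1 + x p)) i (Real.log (1+A))) j (Real.log (1+B)) p := by
            rw [hy, ← e]
        _ = _ := tsum_update2 hsl hij _ _
    have h2 : ∑' p, (y p)^2 = Q + (A^2 + B^2) := by
      have e := comp_update2 (fun t => t^2) x i j A B
      calc ∑' p, (y p)^2
          = ∑' p, Function.update (Function.update
              (fun p => (x p)^2) i (A^2)) j (B^2) p := by rw [hy, ← e]
        _ = (∑' p, (x p)^2) - (x i)^2 - (x j)^2 + A^2 + B^2 := tsum_update2 hsq hij _ _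
        _ = Q + (A^2 + B^2) := by rw [hQdef]; ring
    have hQx : ∑' p, (x p)^2 = Q + ((x i)^2 + (x j)^2) := by rw [hQdef]; ring
    have hFy : (∑' p, Real.log (1 + y p)) + a * Real.sqrt (∑' p, (y p)^2)
        < (∑' p, Real.log (1 + x p)) + a * Real.sqrt (∑' p, (x p)^2) := by
      rw [h1, h2, hQx]
      linarith
    exact absurd (hopt y hy0 hys hysum) (not_le.2 hFy)
end

section
/- Fix an integer m ≥ 1 and positive reals a₁, …, a_m, and let f = e_{a₁} ⋆ ⋯ ⋆ e_{a_m} be the iterated convolution of the exponential densities. Then for all q₁ > 0 and q₂ > 0, the function f ⋆ e_{q₁} ⋆ e_{q₂} is differentiable on ℝ and for every x ∈ ℝ: (f ⋆ e_{q₁})(x) − (f ⋆ e_{q₂})(x) = (q₂ − q₁) · (f ⋆ e_{q₁} ⋆ e_{q₂})′(x). In probabilistic terms: if A = Σ_{i=1}^m a_i S_i and S', S'' are further independent mean-1 exponentials, then the density of A + q₁S' minus the density of A + q₂S'' equals (q₂ − q₁) times the derivative of the density of A + q₁S' + q₂S''. -/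
open MeasureTheory

/-- The exponential density of mean `q`: `e_q(x) = q⁻¹ e^{-x/q}` for `x ≥ 0`, `0` otherwise. -/
noncomputable def expDensity (q : ℝ) (x : ℝ) : ℝ :=
  if 0 ≤ x then q⁻¹ * Real.exp (-x / q) else 0

/-- Convolution of two real functions (w.r.t. Lebesgue measure). -/
noncomputable def convFn (f g : ℝ → ℝ) (x : ℝ) : ℝ :=
  ∫ y, f (x - y) * g y

/-- Iterated convolution of exponential densities with means given by the list:
the density of `Σ aᵢ Sᵢ` with `Sᵢ` i.i.d. mean-1 exponentials. -/
noncomputable def expConvList : List ℝ → ℝ → ℝ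
  | [] => fun _ => 0
  | [a] => expDensity a
  | a :: b :: l => convFn (expDensity a) (expConvList (b :: l))

open Set

lemma expDensity_nonneg {q : ℝ} (hq : 0 < q) (x : ℝ) : 0 ≤ expDensity q x := by
  unfold expDensity; split <;> positivity

lemma expDensity_le {q : ℝ} (hq : 0 < q) (x : ℝ) : expDensity q x ≤ q⁻¹ := by
  unfold expDensity; split
  · rename_i h
    calc q⁻¹ * Real.exp (-x / q) ≤ q⁻¹ * 1 := by
          have : Real.exp (-x / q) ≤ 1 := Real.exp_le_one_iff.2 (by
            apply div_nonpos_of_nonpos_of_nonneg <;> linarith)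
          have hq' : (0:ℝ) ≤ q⁻¹ := by positivity
          nlinarith [Real.exp_pos (-x / q)]
        _ = q⁻¹ := mul_one _
  · positivity

lemma measurable_expDensity (q : ℝ) : Measurable (expDensity q) := by
  unfold expDensity
  exact Measurable.ite measurableSet_Ici ((measurable_id.neg.div_const q).exp.const_mul _)
    measurable_const

lemma integrable_expDensity {q : ℝ} (hq : 0 < q) : Integrable (expDensity q) := by
  have h : expDensity q = Set.indicator (Set.Ici (0:ℝ)) (fun x => q⁻¹ * Real.exp (-x / q)) := by
    funext x; simp [expDensity, Set.indicator, Set.mem_Ici]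
  rw [h, integrable_indicator_iff measurableSet_Ici]
  have h2 : IntegrableOn (fun x : ℝ => Real.exp (-q⁻¹ * x)) (Set.Ioi (0:ℝ)) :=
    exp_neg_integrableOn_Ioi 0 (by positivity)
  have h3 : IntegrableOn (fun x : ℝ => q⁻¹ * Real.exp (-x / q)) (Set.Ioi (0:ℝ)) := by
    refine (h2.const_mul q⁻¹).congr ?_
    filter_upwards with x
    rw [neg_div, div_eq_mul_inv, mul_comm x q⁻¹, neg_mul]
  rw [integrableOn_Ici_iff_integrableOn_Ioi]
  exact h3

lemma convFn_comm (f g : ℝ → ℝ) : convFn f g = convFn g f := by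
  funext x
  unfold convFn
  rw [← integral_sub_left_eq_self (fun y => f (x - y) * g y) volume x]
  congr 1; funext y
  rw [sub_sub_cancel, mul_comm]

/-- Rewrite convFn with the substituted kernel. -/
lemma convFn_eq_swap (f g : ℝ → ℝ) (x : ℝ) : convFn f g x = ∫ y, f y * g (x - y) := by
  unfold convFn
  rw [← integral_sub_left_eq_self (fun y => f (x - y) * g y) volume x]
  congr 1; funext y
  rw [sub_sub_cancel]

/-- Explicit formula for convolution with expDensity. -/
lemma convFn_expDensity_eq (g : ℝ → ℝ) {q : ℝ} (hq : 0 < q) (x : ℝ) :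
    convFn g (expDensity q) x
      = q⁻¹ * Real.exp (-x / q) * ∫ u in Iic x, g u * Real.exp (u / q) := by
  rw [convFn_eq_swap]
  have h1 : ∀ y : ℝ, g y * expDensity q (x - y)
      = Set.indicator (Iic x) (fun u => (q⁻¹ * Real.exp (-x / q)) * (g u * Real.exp (u / q))) y := by
    intro y
    simp only [expDensity, Set.indicator, Set.mem_Iic]
    by_cases h : y ≤ x
    · rw [if_pos h, if_pos (by linarith)]
      rw [show -(x - y) / q = -x / q + y / q by ring, Real.exp_add]
      ring
    · rw [if_neg h, if_neg (by intro hc; exact h (by linarith))]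
      ring
  simp_rw [h1]
  rw [integral_indicator measurableSet_Iic, integral_const_mul]

lemma integrableOn_mul_exp {g : ℝ → ℝ} (hg : Integrable g) {q : ℝ} (hq : 0 < q) (x : ℝ) :
    IntegrableOn (fun u => g u * Real.exp (u / q)) (Iic x) := by
  refine Integrable.mono' (hg.integrableOn.norm.mul_const (Real.exp (x / q))) ?_ ?_
  · exact (hg.aestronglyMeasurable.restrict.mul
      ((Real.continuous_exp.comp (continuous_id.div_const q)).aestronglyMeasurable))
  · rw [ae_restrict_iff' measurableSet_Iic]
    filter_upwards with u hu
    rw [norm_mul, Real.norm_of_nonneg (Real.exp_nonneg _)]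
    have hle : Real.exp (u / q) ≤ Real.exp (x / q) := Real.exp_le_exp.2 (by have := Set.mem_Iic.1 hu; gcongr)
    exact mul_le_mul_of_nonneg_left hle (norm_nonneg _)

section primitive
variable {H : ℝ → ℝ}

lemma intervalIntegrable_of_Iic (hH : ∀ c : ℝ, IntegrableOn H (Iic c))
    (a b : ℝ) : IntervalIntegrable H volume a b := by
  rw [intervalIntegrable_iff]
  exact (hH (max a b)).mono_set (fun u hu => hu.2 : Set.uIoc a b ⊆ Iic (max a b))

lemma primitive_eq (hH : ∀ c : ℝ, IntegrableOn H (Iic c)) (t : ℝ) :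
    (∫ u in Iic t, H u) = (∫ u in Iic 0, H u) + ∫ u in (0:ℝ)..t, H u := by
  rw [← intervalIntegral.integral_Iic_sub_Iic (hH 0) (hH t)]
  ring

lemma continuous_primitive_Iic (hH : ∀ c : ℝ, IntegrableOn H (Iic c)) :
    Continuous (fun t => ∫ u in Iic t, H u) := by
  have : (fun t => ∫ u in Iic t, H u)
      = fun t => (∫ u in Iic 0, H u) + ∫ u in (0:ℝ)..t, H u := by
    funext t; exact primitive_eq hH t
  rw [this]
  exact continuous_const.add (intervalIntegral.continuous_primitive
    (fun a b => intervalIntegrable_of_Iic hH a b) 0)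

lemma hasDerivAt_primitive_Iic (hH : ∀ c : ℝ, IntegrableOn H (Iic c))
    (hm : AEStronglyMeasurable H volume) {x : ℝ} (hc : ContinuousAt H x) :
    HasDerivAt (fun t => ∫ u in Iic t, H u) (H x) x := by
  have h1 : HasDerivAt (fun t => ∫ u in (0:ℝ)..t, H u) (H x) x := by
    refine intervalIntegral.integral_hasDerivAt_right (intervalIntegrable_of_Iic hH 0 x) ?_ hc
    exact ⟨univ, Filter.univ_mem, hm.restrict⟩
  have := h1.const_add (∫ u in Iic 0, H u)
  refine HasDerivAt.congr_of_eventuallyEq this ?_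
  filter_upwards with t
  exact primitive_eq hH t

lemma continuous_convFn_expDensity {g : ℝ → ℝ} (hg : Integrable g) {q : ℝ} (hq : 0 < q) :
    Continuous (convFn g (expDensity q)) := by
  have hfun : convFn g (expDensity q)
      = fun x => q⁻¹ * Real.exp (-x / q) * ∫ u in Iic x, g u * Real.exp (u / q) :=
    funext (fun x => convFn_expDensity_eq g hq x)
  rw [hfun]
  exact (continuous_const.mul ((Real.continuous_exp.comp (continuous_id.neg.div_const q))))
    |>.mul (continuous_primitive_Iic (fun c => integrableOn_mul_exp hg hq c))

lemma hasDerivAt_convFn_expDensity {g : ℝ → ℝ} (hg : Integrable g) (hgc : Continuous g)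
    {q : ℝ} (hq : 0 < q) (x : ℝ) :
    HasDerivAt (convFn g (expDensity q))
      ((g x - convFn g (expDensity q) x) / q) x := by
  set F : ℝ → ℝ := fun t => ∫ u in Iic t, g u * Real.exp (u / q) with hF_def
  have hfun : convFn g (expDensity q) = fun t => q⁻¹ * Real.exp (-t / q) * F t :=
    funext (fun t => convFn_expDensity_eq g hq t)
  have hF : HasDerivAt F (g x * Real.exp (x / q)) x := by
    refine hasDerivAt_primitive_Iic (fun c => integrableOn_mul_exp hg hq c) ?_ ?_
    · exact hg.aestronglyMeasurable.mul
        (Real.continuous_exp.comp (continuous_id.div_const q)).aestronglyMeasurable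
    · exact (hgc.mul (Real.continuous_exp.comp (continuous_id.div_const q))).continuousAt
  have hE : HasDerivAt (fun t : ℝ => q⁻¹ * Real.exp (-t / q))
      (q⁻¹ * (Real.exp (-x / q) * (-1 / q))) x := by
    have h1 : HasDerivAt (fun t : ℝ => -t / q) (-1 / q) x := by
      simpa using ((hasDerivAt_id x).neg.div_const q)
    exact (h1.exp).const_mul q⁻¹
  have hEF := hE.mul hF
  rw [hfun]
  refine hEF.congr_deriv (Eq.symm ?_)
  have hexp : Real.exp (-x / q) * Real.exp (x / q) = 1 := by
    rw [← Real.exp_add, neg_div, neg_add_cancel, Real.exp_zero]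
  simp only
  field_simp
  linear_combination (-(g x) * q) * (by rw [← neg_div]; exact hexp : Real.exp (-(x / q)) * Real.exp (x / q) = 1)

open scoped Convolution

lemma convFn_eq_convolution (f g : ℝ → ℝ) :
    convFn f g = (g ⋆[ContinuousLinearMap.mul ℝ ℝ, volume] f) := by
  funext x
  rw [MeasureTheory.convolution_def]
  unfold convFn
  simp_rw [ContinuousLinearMap.mul_apply', mul_comm]

lemma integrable_convFn {f g : ℝ → ℝ} (hf : Integrable f) (hg : Integrable g) :
    Integrable (convFn f g) := by
  rw [convFn_eq_convolution]
  exact hg.integrable_convolution (ContinuousLinearMap.mul ℝ ℝ) hf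

lemma integrable_expConvList : ∀ l : List ℝ, (∀ b ∈ l, 0 < b) → Integrable (expConvList l)
  | [], _ => by
      simpa [expConvList] using (integrable_zero ℝ ℝ (volume : Measure ℝ))
  | [a], h => integrable_expDensity (h a (by simp))
  | a :: b :: l, h => by
      rw [show expConvList (a :: b :: l) = convFn (expDensity a) (expConvList (b :: l)) from rfl]
      exact integrable_convFn (integrable_expDensity (h a (by simp)))
        (integrable_expConvList (b :: l) (fun c hc => h c (by simp at hc ⊢; tauto)))

lemma norm_conv_le {B f : ℝ → ℝ} (hB : Integrable B) (hf : Integrable f)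
    {C : ℝ} (hC : 0 ≤ C) (hBb : ∀ t, ‖B t‖ ≤ C) (u : ℝ) :
    ((fun t => ‖B t‖) ⋆[ContinuousLinearMap.mul ℝ ℝ, volume] fun t => ‖f t‖) u
      ≤ C * ∫ t, ‖f t‖ := by
  rw [MeasureTheory.convolution_def]
  simp_rw [ContinuousLinearMap.mul_apply']
  by_cases hI : Integrable (fun t => ‖B t‖ * ‖f (u - t)‖)
  · have h2 : Integrable (fun t => C * ‖f (u - t)‖) :=
      ((hf.norm.comp_sub_left u)).const_mul C
    calc (∫ t, ‖B t‖ * ‖f (u - t)‖)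
        ≤ ∫ t, C * ‖f (u - t)‖ := by
          refine integral_mono hI h2 (fun t => ?_)
          exact mul_le_mul_of_nonneg_right (hBb t) (norm_nonneg _)
      _ = C * ∫ t, ‖f (u - t)‖ := integral_const_mul _ _
      _ = C * ∫ t, ‖f t‖ := by rw [integral_sub_left_eq_self (fun t => ‖f t‖) volume u]
  · rw [integral_undef hI]
    positivity

lemma conv_norm_nonneg {B f : ℝ → ℝ} (u : ℝ) :
    0 ≤ ((fun t => ‖B t‖) ⋆[ContinuousLinearMap.mul ℝ ℝ, volume] fun t => ‖f t‖) u := by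
  rw [MeasureTheory.convolution_def]
  refine integral_nonneg (fun t => ?_)
  simp only [ContinuousLinearMap.mul_apply']
  positivity

lemma expDensity_convolution_assoc {f : ℝ → ℝ} (hf : Integrable f)
    {p r : ℝ} (hp : 0 < p) (hr : 0 < r) :
    ((expDensity p ⋆[ContinuousLinearMap.mul ℝ ℝ, volume] expDensity r)
        ⋆[ContinuousLinearMap.mul ℝ ℝ, volume] f)
      = (expDensity p ⋆[ContinuousLinearMap.mul ℝ ℝ, volume]
          (expDensity r ⋆[ContinuousLinearMap.mul ℝ ℝ, volume] f)) := by
  funext x₀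
  set L := ContinuousLinearMap.mul ℝ ℝ with hL
  have hA := integrable_expDensity hp
  have hB := integrable_expDensity hr
  refine convolution_assoc L L L L (fun x y z => mul_assoc x y z)
    (measurable_expDensity p).aestronglyMeasurable
    (measurable_expDensity r).aestronglyMeasurable
    hf.aestronglyMeasurable
    (hA.ae_convolution_exists L hB)
    (hB.norm.ae_convolution_exists L hf.norm)
    ?_
  -- ConvolutionExistsAt ‖A‖ (‖B‖ ⋆ ‖f‖) x₀
  unfold MeasureTheory.ConvolutionExistsAt
  set w := ((fun t => ‖expDensity r t‖) ⋆[L, volume] fun t => ‖f t‖) with hw_def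
  have hwInt : Integrable w := hB.norm.integrable_convolution L hf.norm
  set C : ℝ := r⁻¹ * ∫ t, ‖f t‖ with hC
  have hC0 : 0 ≤ C := by
    rw [hC]; positivity
  have hwle : ∀ u, w u ≤ C := by
    intro u
    refine norm_conv_le hB hf (by positivity) (fun t => ?_) u
    rw [Real.norm_of_nonneg (expDensity_nonneg hr t)]
    exact expDensity_le hr t
  have hwnn : ∀ u, 0 ≤ w u := fun u => conv_norm_nonneg u
  refine Integrable.mono' (hA.norm.mul_const C) ?_ ?_
  · refine AEStronglyMeasurable.mul ?_ ?_
    · exact (measurable_expDensity p).norm.aestronglyMeasurable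
    · exact hwInt.aestronglyMeasurable.comp_quasiMeasurePreserving
        (quasiMeasurePreserving_sub_left_of_right_invariant volume x₀)
  · filter_upwards with t
    simp only [ContinuousLinearMap.mul_apply']
    rw [Real.norm_of_nonneg (mul_nonneg (norm_nonneg _) (hwnn _))]
    exact mul_le_mul_of_nonneg_left (hwle _) (norm_nonneg _)

lemma convFn_expDensity_swap {f : ℝ → ℝ} (hf : Integrable f)
    {p r : ℝ} (hp : 0 < p) (hr : 0 < r) :
    convFn (convFn f (expDensity p)) (expDensity r)
      = convFn (convFn f (expDensity r)) (expDensity p) := by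
  have key : ∀ {s t : ℝ}, 0 < s → 0 < t →
      convFn (convFn f (expDensity s)) (expDensity t)
        = convFn f (convFn (expDensity s) (expDensity t)) := by
    intro s t hs ht
    rw [convFn_eq_convolution (convFn f (expDensity s)) (expDensity t),
      convFn_eq_convolution f (expDensity s),
      convFn_eq_convolution (expDensity s) (expDensity t),
      convFn_eq_convolution f
        ((expDensity t) ⋆[ContinuousLinearMap.mul ℝ ℝ, volume] (expDensity s)),
      expDensity_convolution_assoc hf ht hs]
  rw [key hp hr, key hr hp, convFn_comm (expDensity p) (expDensity r)]


theorem convolution_difference_identity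
    (m : ℕ) (hm : 1 ≤ m) (a : Fin m → ℝ) (ha : ∀ i, 0 < a i)
    (q₁ q₂ : ℝ) (hq₁ : 0 < q₁) (hq₂ : 0 < q₂) :
    Differentiable ℝ
        (convFn (convFn (expConvList (List.ofFn a)) (expDensity q₁)) (expDensity q₂)) ∧
      ∀ x : ℝ,
        convFn (expConvList (List.ofFn a)) (expDensity q₁) x -
            convFn (expConvList (List.ofFn a)) (expDensity q₂) x =
          (q₂ - q₁) *
            deriv (convFn (convFn (expConvList (List.ofFn a)) (expDensity q₁))
              (expDensity q₂)) x := by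
  have hfI : Integrable (expConvList (List.ofFn a)) := by
    refine integrable_expConvList (List.ofFn a) (fun b hb => ?_)
    obtain ⟨i, rfl⟩ := Set.mem_range.1 (List.mem_ofFn.1 hb)
    exact ha i
  set f := expConvList (List.ofFn a) with hf_def
  set g₁ := convFn f (expDensity q₁) with hg₁_def
  set g₂ := convFn f (expDensity q₂) with hg₂_def
  have hg₁I : Integrable g₁ := integrable_convFn hfI (integrable_expDensity hq₁)
  have hg₂I : Integrable g₂ := integrable_convFn hfI (integrable_expDensity hq₂)
  have hg₁c : Continuous g₁ := continuous_convFn_expDensity hfI hq₁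
  have hg₂c : Continuous g₂ := continuous_convFn_expDensity hfI hq₂
  set h := convFn g₁ (expDensity q₂) with hh_def
  have hswap : h = convFn g₂ (expDensity q₁) := convFn_expDensity_swap hfI hq₁ hq₂
  have hd₂ : ∀ x : ℝ, HasDerivAt h ((g₁ x - h x) / q₂) x := fun x =>
    hasDerivAt_convFn_expDensity hg₁I hg₁c hq₂ x
  have hd₁ : ∀ x : ℝ, HasDerivAt h ((g₂ x - h x) / q₁) x := by
    intro x
    have := hasDerivAt_convFn_expDensity hg₂I hg₂c hq₁ x
    rw [← hswap] at this
    exact this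
  constructor
  · exact fun x => (hd₂ x).differentiableAt
  · intro x
    have e2 := (hd₂ x).deriv
    have e1 := (hd₁ x).deriv
    have h2 : q₂ * deriv h x = g₁ x - h x := by
      rw [e2]; field_simp
    have h1 : q₁ * deriv h x = g₂ x - h x := by
      rw [e1]; field_simp
    linear_combination h1 - h2
end primitive
end

section
/- For η > 6, define q_η : (0,∞) → ℝ by q_η(x) = Q( (x − η)/√(2x) ). Then q_η is strictly decreasing, q_η(x) → 1 as x → 0⁺, q_η(x) → 0 as x → ∞, q_η(η) = 1/2, and there exists x₀ ∈ (0, η) such that q_η is concave on (0, x₀] and convex on [x₀, ∞). -/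
open MeasureTheory ProbabilityTheory

/-- The Gaussian Q-function `Q(y) = P[Z > y]` for `Z` standard normal. -/
noncomputable def gaussianQ (y : ℝ) : ℝ :=
  (gaussianReal 0 1 (Set.Ioi y)).toReal

/-- The function `q_η(x) = Q((x - η)/√(2x))` for `x > 0`. -/
noncomputable def qEta (η x : ℝ) : ℝ :=
  gaussianQ ((x - η) / Real.sqrt (2 * x))

open Set Filter

noncomputable def stdPdf (y : ℝ) : ℝ := (Real.sqrt (2 * Real.pi))⁻¹ * Real.exp (-y^2 / 2)

lemma stdPdf_eq (y : ℝ) : gaussianPDFReal 0 1 y = stdPdf y := by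
  simp [gaussianPDFReal, stdPdf]

lemma stdPdf_pos (y : ℝ) : 0 < stdPdf y := by
  have := Real.pi_pos
  unfold stdPdf; positivity

lemma continuous_stdPdf : Continuous stdPdf := by
  unfold stdPdf; fun_prop

lemma integrable_stdPdf : Integrable stdPdf := by
  have := integrable_gaussianPDFReal 0 1
  simpa [funext stdPdf_eq] using this

lemma stdPdf_neg (y : ℝ) : stdPdf (-y) = stdPdf y := by simp [stdPdf]

lemma integral_stdPdf : ∫ y, stdPdf y = 1 := by
  have := integral_gaussianPDFReal_eq_one 0 (v := 1) one_ne_zero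
  simpa [funext stdPdf_eq] using this

lemma gaussianQ_eq (y : ℝ) : gaussianQ y = ∫ t in Set.Ioi y, stdPdf t := by
  rw [gaussianQ, gaussianReal_apply_eq_integral 0 one_ne_zero]
  rw [ENNReal.toReal_ofReal]
  · simp [funext stdPdf_eq]
  · exact setIntegral_nonneg measurableSet_Ioi fun t _ => (gaussianPDFReal_nonneg 0 1 t)

lemma Ioi_split {a b : ℝ} (hab : a ≤ b) :
    ∫ t in Set.Ioi a, stdPdf t = (∫ t in a..b, stdPdf t) + ∫ t in Set.Ioi b, stdPdf t := by
  rw [intervalIntegral.integral_of_le hab, ← setIntegral_union]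
  · rw [Set.Ioc_union_Ioi_eq_Ioi hab]
  · exact Set.Ioc_disjoint_Ioi le_rfl
  · exact measurableSet_Ioi
  · exact integrable_stdPdf.integrableOn
  · exact integrable_stdPdf.integrableOn

lemma gaussianQ_sub (y : ℝ) : gaussianQ y = gaussianQ 0 - ∫ t in (0:ℝ)..y, stdPdf t := by
  rcases le_or_gt 0 y with h | h
  · rw [gaussianQ_eq, gaussianQ_eq, Ioi_split h]; ring
  · rw [gaussianQ_eq, gaussianQ_eq, Ioi_split h.le,
      intervalIntegral.integral_symm y 0]
    ring

lemma hasDerivAt_gaussianQ (y : ℝ) : HasDerivAt gaussianQ (-(stdPdf y)) y := by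
  have h : ∀ z : ℝ, HasDerivAt (fun u => ∫ t in (0:ℝ)..u, stdPdf t) (stdPdf z) z := by
    intro z
    exact intervalIntegral.integral_hasDerivAt_right
      (integrable_stdPdf.intervalIntegrable)
      (continuous_stdPdf.stronglyMeasurableAtFilter _ _)
      continuous_stdPdf.continuousAt
  have h2 : HasDerivAt (fun u => gaussianQ 0 - ∫ t in (0:ℝ)..u, stdPdf t) (-(stdPdf y)) y :=
    ((h y).const_sub _)
  exact h2.congr_of_eventuallyEq (Filter.Eventually.of_forall fun u => (gaussianQ_sub u))

lemma gaussianQ_strictAnti : StrictAnti gaussianQ := by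
  apply strictAnti_of_deriv_neg
  intro y
  rw [(hasDerivAt_gaussianQ y).deriv]
  simpa using stdPdf_pos y

lemma gaussianQ_zero : gaussianQ 0 = 1 / 2 := by
  have hsplit : (∫ t in Set.Iic (0:ℝ), stdPdf t) + ∫ t in Set.Ioi (0:ℝ), stdPdf t = 1 := by
    rw [← integral_stdPdf]
    rw [← setIntegral_union (Set.Iic_disjoint_Ioi le_rfl) measurableSet_Ioi
      integrable_stdPdf.integrableOn integrable_stdPdf.integrableOn, Set.Iic_union_Ioi,
      setIntegral_univ]
  have hsym : (∫ t in Set.Iic (0:ℝ), stdPdf t) = ∫ t in Set.Ioi (0:ℝ), stdPdf t := by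
    rw [← neg_zero, ← integral_comp_neg_Iic]
    simp [stdPdf_neg]
  rw [gaussianQ_eq]
  rw [hsym] at hsplit
  linarith

lemma tendsto_gaussianQ_atTop : Tendsto gaussianQ atTop (nhds 0) := by
  have h := MeasureTheory.intervalIntegral_tendsto_integral_Ioi 0 integrable_stdPdf.integrableOn
    (tendsto_id (α := ℝ))
  have h2 : Tendsto (fun y => gaussianQ 0 - ∫ t in (0:ℝ)..y, stdPdf t) atTop
      (nhds (gaussianQ 0 - ∫ t in Set.Ioi (0:ℝ), stdPdf t)) := tendsto_const_nhds.sub h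
  rw [← gaussianQ_eq, sub_self] at h2
  exact h2.congr fun y => (gaussianQ_sub y).symm

lemma tendsto_gaussianQ_atBot : Tendsto gaussianQ atBot (nhds 1) := by
  have h := MeasureTheory.intervalIntegral_tendsto_integral_Iic 0 integrable_stdPdf.integrableOn
    (tendsto_id (α := ℝ))
  have hIic : (∫ t in Set.Iic (0:ℝ), stdPdf t) = 1 / 2 := by
    have hsplit : (∫ t in Set.Iic (0:ℝ), stdPdf t) + ∫ t in Set.Ioi (0:ℝ), stdPdf t = 1 := by
      rw [← integral_stdPdf]
      rw [← setIntegral_union (Set.Iic_disjoint_Ioi le_rfl) measurableSet_Ioi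
        integrable_stdPdf.integrableOn integrable_stdPdf.integrableOn, Set.Iic_union_Ioi,
        setIntegral_univ]
    have := gaussianQ_zero
    rw [gaussianQ_eq] at this
    linarith
  have h2 : Tendsto (fun y => gaussianQ 0 + ∫ t in y..(0:ℝ), stdPdf t) atBot
      (nhds (gaussianQ 0 + ∫ t in Set.Iic (0:ℝ), stdPdf t)) := tendsto_const_nhds.add h
  rw [hIic, gaussianQ_zero] at h2
  norm_num at h2
  refine h2.congr fun y => ?_
  rw [gaussianQ_sub y, intervalIntegral.integral_symm, gaussianQ_zero]
  ring

lemma hasDerivAt_stdPdf (y : ℝ) : HasDerivAt stdPdf (-y * stdPdf y) y := by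
  unfold stdPdf
  have h1 : HasDerivAt (fun y : ℝ => -y^2/2) (-y) y := by
    have := ((hasDerivAt_pow 2 y).neg).div_const 2
    simpa using this.congr_deriv (by ring)
  have h2 := (h1.exp).const_mul (Real.sqrt (2 * Real.pi))⁻¹
  exact h2.congr_deriv (by ring)

noncomputable def gFun (η x : ℝ) : ℝ := (x - η) / Real.sqrt (2 * x)
noncomputable def gD1 (η x : ℝ) : ℝ := (x + η) / (2 * x * Real.sqrt (2 * x))
noncomputable def gD2 (η x : ℝ) : ℝ := -((x + 3*η) / (4 * x^2 * Real.sqrt (2 * x)))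
noncomputable def pPoly (η x : ℝ) : ℝ := (x - η) * (x + η)^2 + 2*x^2 + 6*η*x
noncomputable def qD1f (η x : ℝ) : ℝ := -(stdPdf (gFun η x)) * gD1 η x
noncomputable def qD2f (η x : ℝ) : ℝ :=
  stdPdf (gFun η x) * (pPoly η x / (8 * x^3 * Real.sqrt (2 * x)))

lemma hasDerivAt_sqrt2x {x : ℝ} (hx : 0 < x) :
    HasDerivAt (fun u : ℝ => Real.sqrt (2 * u)) (Real.sqrt (2 * x))⁻¹ x := by
  have h := (Real.hasDerivAt_sqrt (by positivity : (2:ℝ) * x ≠ 0)).comp x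
    ((hasDerivAt_id x).const_mul 2)
  have hs : Real.sqrt (2 * x) ≠ 0 := by positivity
  refine h.congr_deriv (Eq.symm ?_)
  field_simp

lemma hasDerivAt_gFun {η x : ℝ} (hx : 0 < x) : HasDerivAt (gFun η) (gD1 η x) x := by
  have hs0 : Real.sqrt (2 * x) ≠ 0 := by positivity
  have hs2 : Real.sqrt (2 * x) * Real.sqrt (2 * x) = 2 * x :=
    Real.mul_self_sqrt (by positivity)
  have h := ((hasDerivAt_id x).sub_const η).div (hasDerivAt_sqrt2x hx) hs0
  refine h.congr_deriv (Eq.symm ?_)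
  unfold gD1
  set s := Real.sqrt (2 * x) with hs
  simp only [id_eq]
  field_simp
  ring_nf
  linear_combination (η - x) * hs2

lemma hasDerivAt_gD1 {η x : ℝ} (hx : 0 < x) : HasDerivAt (gD1 η) (gD2 η x) x := by
  have hs0 : Real.sqrt (2 * x) ≠ 0 := by positivity
  have hs2 : Real.sqrt (2 * x) * Real.sqrt (2 * x) = 2 * x :=
    Real.mul_self_sqrt (by positivity)
  have hx0 : x ≠ 0 := hx.ne'
  have hden : HasDerivAt (fun u : ℝ => 2 * u * Real.sqrt (2 * u))
      (2 * Real.sqrt (2 * x) + 2 * x * (Real.sqrt (2 * x))⁻¹) x := by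
    have := ((hasDerivAt_id x).const_mul 2).mul (hasDerivAt_sqrt2x hx)
    refine this.congr_deriv (Eq.symm ?_)
    simp only [id_eq]
    ring
  have hdne : 2 * x * Real.sqrt (2 * x) ≠ 0 := by positivity
  have h := ((hasDerivAt_id x).add_const η).div hden hdne
  refine h.congr_deriv (Eq.symm ?_)
  unfold gD2
  set s := Real.sqrt (2 * x) with hs
  simp only [id_eq]
  field_simp
  ring_nf
  linear_combination (-2*(x+η)) * hs2

lemma hasDerivAt_qEta {η x : ℝ} (hx : 0 < x) : HasDerivAt (qEta η) (qD1f η x) x := by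
  have h := (hasDerivAt_gaussianQ (gFun η x)).comp x (hasDerivAt_gFun hx)
  have h2 : HasDerivAt (fun u => gaussianQ (gFun η u)) (qD1f η x) x := by
    refine h.congr_deriv ?_
    unfold qD1f; ring
  exact h2

lemma key_identity {η x : ℝ} (hx : 0 < x) :
    gFun η x * (gD1 η x)^2 - gD2 η x = pPoly η x / (8 * x^3 * Real.sqrt (2 * x)) := by
  have hs0 : Real.sqrt (2 * x) ≠ 0 := by positivity
  have hs2 : Real.sqrt (2 * x) * Real.sqrt (2 * x) = 2 * x :=
    Real.mul_self_sqrt (by positivity)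
  have hx0 : x ≠ 0 := hx.ne'
  unfold gFun gD1 gD2 pPoly
  set s := Real.sqrt (2 * x) with hs
  field_simp
  ring_nf
  linear_combination (32*x*(x+3*η) - 64*((x-η)*(x+η)^2+2*x^2+6*η*x) + (288*x*η - 48*x*η^2 + 48*x^2*η + 96*x^2 + 48*x^3 - 48*η^3)) * hs2

lemma hasDerivAt_qD1 {η x : ℝ} (hx : 0 < x) : HasDerivAt (qD1f η) (qD2f η x) x := by
  have h1 : HasDerivAt (fun u => stdPdf (gFun η u))
      (-(gFun η x) * stdPdf (gFun η x) * gD1 η x) x :=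
    (hasDerivAt_stdPdf (gFun η x)).comp x (hasDerivAt_gFun hx)
  have h2 := (h1.neg).mul (hasDerivAt_gD1 (η := η) hx)
  have h3 : HasDerivAt (fun u => -(stdPdf (gFun η u)) * gD1 η u) (qD2f η x) x := by
    refine h2.congr_deriv ?_
    unfold qD2f
    rw [← key_identity (η := η) hx]
    simp only [Pi.neg_apply]
    ring
  exact h3

lemma gD1_pos {η x : ℝ} (hη : 0 < η) (hx : 0 < x) : 0 < gD1 η x := by
  unfold gD1
  apply div_pos (by linarith)
  positivity

lemma pPoly_convex {η : ℝ} (hη : 0 < η) : ConvexOn ℝ (Ici 0) (pPoly η) := by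
  have h3 : ConvexOn ℝ (Ici (0:ℝ)) (fun x : ℝ => x^3) := convexOn_pow 3
  have h2 : ConvexOn ℝ (Ici (0:ℝ)) (fun x : ℝ => (η+2) * x^2) :=
    (convexOn_pow 2).smul (by linarith)
  have hlin : ConvexOn ℝ (Ici (0:ℝ)) (fun x : ℝ => (6*η - η^2) * x - η^3) := by
    refine ⟨convex_Ici 0, ?_⟩
    intro x _ y _ a b _ _ hab
    simp only [smul_eq_mul]
    exact le_of_eq (by linear_combination (η^3) * hab)
  have hsum := (h3.add h2).add hlin
  have hfe : pPoly η = fun x : ℝ => x^3 + (η+2) * x^2 + ((6*η - η^2) * x - η^3) := by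
    funext x; unfold pPoly; ring
  rw [hfe]
  exact hsum

theorem qEta_properties (η : ℝ) (hη : 6 < η) :
    StrictAntiOn (qEta η) (Set.Ioi 0) ∧
    Filter.Tendsto (qEta η) (nhdsWithin 0 (Set.Ioi 0)) (nhds 1) ∧
    Filter.Tendsto (qEta η) Filter.atTop (nhds 0) ∧
    qEta η η = 1 / 2 ∧
    ∃ x₀ ∈ Set.Ioo (0 : ℝ) η,
      ConcaveOn ℝ (Set.Ioc 0 x₀) (qEta η) ∧ ConvexOn ℝ (Set.Ici x₀) (qEta η) := by
  have hη0 : (0:ℝ) < η := by linarith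
  refine ⟨?_, ?_, ?_, ?_, ?_⟩
  · -- StrictAntiOn
    have hgmono : StrictMonoOn (gFun η) (Ioi 0) := by
      apply strictMonoOn_of_deriv_pos (convex_Ioi 0)
      · intro x hx
        exact (hasDerivAt_gFun (mem_Ioi.mp hx)).continuousAt.continuousWithinAt
      · intro x hx
        rw [interior_Ioi] at hx
        rw [(hasDerivAt_gFun (mem_Ioi.mp hx)).deriv]
        exact gD1_pos hη0 (mem_Ioi.mp hx)
    intro a ha b hb hab
    exact gaussianQ_strictAnti (hgmono ha hb hab)
  · -- Tendsto at 0+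
    have hsq : Tendsto (fun x : ℝ => Real.sqrt (2 * x)) (nhdsWithin 0 (Ioi 0))
        (nhdsWithin 0 (Ioi 0)) := by
      apply tendsto_nhdsWithin_of_tendsto_nhds_of_eventually_within
      · have : Tendsto (fun x : ℝ => Real.sqrt (2 * x)) (nhds 0) (nhds (Real.sqrt (2 * 0))) :=
          (Real.continuous_sqrt.comp (continuous_const.mul continuous_id)).tendsto 0
        simpa using this.mono_left nhdsWithin_le_nhds
      · filter_upwards [self_mem_nhdsWithin] with x hx
        have hx' : (0:ℝ) < x := hx
        exact mem_Ioi.mpr (Real.sqrt_pos.mpr (by linarith))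
    have hden : Tendsto (fun x : ℝ => (Real.sqrt (2 * x))⁻¹) (nhdsWithin 0 (Ioi 0)) atTop :=
      tendsto_inv_nhdsGT_zero.comp hsq
    have hnum : Tendsto (fun x : ℝ => x - η) (nhdsWithin 0 (Ioi 0)) (nhds (-η)) := by
      have : Tendsto (fun x : ℝ => x - η) (nhds 0) (nhds (0 - η)) :=
        (continuous_id.sub continuous_const).tendsto 0
      simpa using this.mono_left nhdsWithin_le_nhds
    have hg0 : Tendsto (gFun η) (nhdsWithin 0 (Ioi 0)) atBot := by
      have := hnum.neg_mul_atTop (by linarith : -η < 0) hden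
      exact this.congr fun x => by rw [gFun, div_eq_mul_inv]
    exact tendsto_gaussianQ_atBot.comp hg0
  · -- Tendsto at top
    have hsqt : Tendsto (fun x : ℝ => Real.sqrt (2 * x)) atTop atTop := by
      rw [tendsto_atTop]
      intro b
      filter_upwards [eventually_ge_atTop (b^2 / 2)] with x hx
      calc b ≤ |b| := le_abs_self b
      _ = Real.sqrt (b^2) := (Real.sqrt_sq_eq_abs b).symm
      _ ≤ Real.sqrt (2*x) := Real.sqrt_le_sqrt (by linarith)
    have h1 : Tendsto (fun x : ℝ => Real.sqrt (2 * x) / 2) atTop atTop :=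
      hsqt.atTop_div_const two_pos
    have h2 : Tendsto (fun x : ℝ => -η * (Real.sqrt (2 * x))⁻¹) atTop (nhds 0) := by
      have := hsqt.inv_tendsto_atTop
      simpa using this.const_mul (-η)
    have hgtop : Tendsto (gFun η) atTop atTop := by
      have hev : ∀ᶠ x in atTop, (-1:ℝ) ≤ -η * (Real.sqrt (2 * x))⁻¹ :=
        h2.eventually (eventually_ge_nhds (by norm_num : (-1:ℝ) < 0))
      have hsum := tendsto_atTop_add_right_of_le' atTop (-1:ℝ) h1 hev
      apply hsum.congr'
      filter_upwards [eventually_gt_atTop (0:ℝ)] with x hx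
      have hs0 : Real.sqrt (2 * x) ≠ 0 := by positivity
      have hs2 : Real.sqrt (2 * x) * Real.sqrt (2 * x) = 2 * x :=
        Real.mul_self_sqrt (by positivity)
      rw [gFun]
      set s := Real.sqrt (2 * x) with hsdef
      field_simp
      ring_nf
      linear_combination hs2
    exact tendsto_gaussianQ_atTop.comp hgtop
  · -- value at η
    unfold qEta
    rw [sub_self, zero_div, gaussianQ_zero]
  · -- concavity/convexity
    have hp0 : pPoly η 0 < 0 := by unfold pPoly; nlinarith
    have hpη : 0 < pPoly η η := by unfold pPoly; nlinarith
    have hpcont : ContinuousOn (pPoly η) (Icc 0 η) := by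
      apply Continuous.continuousOn; unfold pPoly; fun_prop
    obtain ⟨x₀, hx₀Icc, hx₀eq⟩ := intermediate_value_Icc hη0.le hpcont ⟨hp0.le, hpη.le⟩
    have hx₀pos : 0 < x₀ :=
      lt_of_le_of_ne hx₀Icc.1 (fun h => by rw [← h] at hx₀eq; exact hp0.ne hx₀eq)
    have hx₀lt : x₀ < η :=
      lt_of_le_of_ne hx₀Icc.2 (fun h => by rw [h] at hx₀eq; exact hpη.ne' hx₀eq)
    have hconv := pPoly_convex hη0
    -- sign of pPoly
    have hpneg : ∀ x ∈ Ioo 0 x₀, pPoly η x < 0 := by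
      intro x hx
      have hx1 : 0 < x := hx.1
      have hx2 : x < x₀ := hx.2
      have ha : (0:ℝ) ≤ (x₀ - x) / x₀ := div_nonneg (by linarith) hx₀pos.le
      have hb : (0:ℝ) ≤ x / x₀ := div_nonneg hx1.le hx₀pos.le
      have hab : (x₀ - x) / x₀ + x / x₀ = 1 := by field_simp; ring
      have := hconv.2 (mem_Ici.mpr le_rfl) (mem_Ici.mpr hx₀pos.le) ha hb hab
      simp only [smul_eq_mul, mul_zero, zero_add, hx₀eq] at this
      have hxe : x / x₀ * x₀ = x := by field_simp
      rw [hxe] at this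
      have hapos : 0 < (x₀ - x) / x₀ := div_pos (by linarith) hx₀pos
      nlinarith
    have hppos : ∀ x, x₀ < x → 0 < pPoly η x := by
      intro x hx
      have hxpos : 0 < x := hx₀pos.trans hx
      have ha : (0:ℝ) ≤ (x - x₀) / x := div_nonneg (by linarith) hxpos.le
      have hb : (0:ℝ) ≤ x₀ / x := div_nonneg hx₀pos.le hxpos.le
      have hab : (x - x₀) / x + x₀ / x = 1 := by field_simp; ring
      have := hconv.2 (mem_Ici.mpr le_rfl) (mem_Ici.mpr hxpos.le) ha hb hab
      simp only [smul_eq_mul, mul_zero, zero_add] at this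
      have hxe : x₀ / x * x = x₀ := by field_simp
      rw [hxe, hx₀eq] at this
      have hapos : 0 < (x - x₀) / x := div_pos (by linarith) hxpos
      have hbpos : 0 < x₀ / x := div_pos hx₀pos hxpos
      nlinarith
    refine ⟨x₀, ⟨hx₀pos, hx₀lt⟩, ?_, ?_⟩
    · -- concave on Ioc 0 x₀
      have hanti : StrictAntiOn (qD1f η) (Ioo 0 x₀) := by
        apply strictAntiOn_of_deriv_neg (convex_Ioo 0 x₀)
        · intro x hx
          exact (hasDerivAt_qD1 hx.1).continuousAt.continuousWithinAt
        · intro x hx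
          rw [interior_Ioo] at hx
          rw [(hasDerivAt_qD1 hx.1).deriv]
          unfold qD2f
          have hs : 0 < Real.sqrt (2 * x) := by have := hx.1; positivity
          apply mul_neg_of_pos_of_neg (stdPdf_pos _)
          apply div_neg_of_neg_of_pos (hpneg x hx)
          have := hx.1; positivity
      apply AntitoneOn.concaveOn_of_deriv (convex_Ioc 0 x₀)
      · intro x hx
        exact (hasDerivAt_qEta hx.1).continuousAt.continuousWithinAt
      · intro x hx
        rw [interior_Ioc] at hx
        exact (hasDerivAt_qEta hx.1).differentiableAt.differentiableWithinAt
      · rw [interior_Ioc]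
        intro a ha b hb hab
        rw [(hasDerivAt_qEta ha.1).deriv, (hasDerivAt_qEta hb.1).deriv]
        rcases eq_or_lt_of_le hab with rfl | h
        · exact le_rfl
        · exact (hanti ha hb h).le
    · -- convex on Ici x₀
      have hmono : StrictMonoOn (qD1f η) (Ioi x₀) := by
        apply strictMonoOn_of_deriv_pos (convex_Ioi x₀)
        · intro x hx
          exact (hasDerivAt_qD1 (hx₀pos.trans (mem_Ioi.mp hx))).continuousAt.continuousWithinAt
        · intro x hx
          rw [interior_Ioi] at hx
          have hxpos : 0 < x := hx₀pos.trans (mem_Ioi.mp hx)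
          rw [(hasDerivAt_qD1 hxpos).deriv]
          unfold qD2f
          apply mul_pos (stdPdf_pos _)
          apply div_pos (hppos x (mem_Ioi.mp hx))
          positivity
      apply MonotoneOn.convexOn_of_deriv (convex_Ici x₀)
      · intro x hx
        exact (hasDerivAt_qEta (hx₀pos.trans_le hx)).continuousAt.continuousWithinAt
      · intro x hx
        rw [interior_Ici] at hx
        exact (hasDerivAt_qEta (hx₀pos.trans hx)).differentiableAt.differentiableWithinAt
      · rw [interior_Ici]
        intro a ha b hb hab
        rw [(hasDerivAt_qEta (hx₀pos.trans (mem_Ioi.mp ha))).deriv,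
          (hasDerivAt_qEta (hx₀pos.trans (mem_Ioi.mp hb))).deriv]
        rcases eq_or_lt_of_le hab with rfl | h
        · exact le_rfl
        · exact (hmono ha hb h).le
end
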